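/- arXiv:2110.15842 — 11 statements merged into one kernel-verified Lean document; each statement's English description precedes it below -/
import Mathlib

section
/- Let f(x) = |x|^2 applied entrywise. Let v_1, ..., v_n be unit vectors in C^r with Gram matrix M (so M_{ij} = <v_i, v_j>). Then 1^T f(M)^† 1 ≤ r, where f(M)^† is the Moore-Penrose pseudoinverse of the entrywise squared-modulus matrix f(M) and 1 is the all-ones vector. -/
open Matrix

private lemma psymm' {n : ℕ} (A P : Matrix (Fin n) (Fin n) ℝ) (hA : Aᵀ = A)
    (hP1 : A * P * A = A) (hP2 : P * A * P = P)
    (hP3 : (A * P)ᵀ = A * P) (hP4 : (P * A)ᵀ = P * A) : Pᵀ = P := by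
  set Q := Pᵀ with hQdef
  have hQ1 : A * Q * A = A := by
    have := congrArg transpose hP1
    simpa [transpose_mul, hA, Matrix.mul_assoc] using this
  have hQ2 : Q * A * Q = Q := by
    have := congrArg transpose hP2
    simpa [transpose_mul, hA, Matrix.mul_assoc] using this
  have hAQ : A * Q = P * A := by
    calc A * Q = (P * Aᵀ)ᵀ := by simp [transpose_mul, hQdef]
    _ = P * A := by rw [hA, hP4]
  have hQA : Q * A = A * P := by
    calc Q * A = (Aᵀ * P)ᵀ := by simp [transpose_mul, hQdef]
    _ = A * P := by rw [hA, hP3]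
  have h1 : A * P = P * A := by
    calc A * P = (A * Q * A) * P := by rw [hQ1]
    _ = (A * Q) * (A * P) := by simp only [Matrix.mul_assoc]
    _ = (P * A) * (Q * A) := by rw [hQA, hAQ]
    _ = P * (A * Q * A) := by simp only [Matrix.mul_assoc]
    _ = P * A := by rw [hQ1]
  calc Q = Q * A * Q := hQ2.symm
  _ = (A * P) * Q := by rw [hQA]
  _ = (P * A) * Q := by rw [h1]
  _ = P * (A * Q) := by rw [Matrix.mul_assoc]
  _ = P * (P * A) := by rw [hAQ]
  _ = P * (A * P) := by rw [← h1]
  _ = P * A * P := by rw [Matrix.mul_assoc]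
  _ = P := hP2

private lemma sum4_comm {α β γ δ : Type*} [Fintype α] [Fintype β] [Fintype γ] [Fintype δ]
    (t : α → β → γ → δ → ℂ) :
    ∑ a, ∑ b, ∑ k, ∑ l, t a b k l = ∑ k, ∑ l, ∑ a, ∑ b, t a b k l := by
  calc ∑ a, ∑ b, ∑ k, ∑ l, t a b k l
      = ∑ a, ∑ k, ∑ b, ∑ l, t a b k l :=
        Finset.sum_congr rfl (fun a _ => Finset.sum_comm)
    _ = ∑ k, ∑ a, ∑ b, ∑ l, t a b k l := Finset.sum_comm
    _ = ∑ k, ∑ a, ∑ l, ∑ b, t a b k l :=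
        Finset.sum_congr rfl (fun k _ => Finset.sum_congr rfl (fun a _ => Finset.sum_comm))
    _ = ∑ k, ∑ l, ∑ a, ∑ b, t a b k l :=
        Finset.sum_congr rfl (fun k _ => Finset.sum_comm)

/-- Projection bound: `1ᵀ f(M)† 1 ≤ r` where `f(M)` is the entrywise squared-modulus
of the Gram matrix of unit vectors in `ℂ^r`, and `P` is its Moore–Penrose pseudoinverse. -/
theorem stmt0 (r n : ℕ)
    (v : Fin n → EuclideanSpace ℂ (Fin r)) (hv : ∀ i, ‖v i‖ = 1)
    (M : Matrix (Fin n) (Fin n) ℂ) (hM : ∀ i j, M i j = inner ℂ (v i) (v j))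
    (fM : Matrix (Fin n) (Fin n) ℝ) (hfM : ∀ i j, fM i j = ‖M i j‖ ^ 2)
    (P : Matrix (Fin n) (Fin n) ℝ)
    (hP1 : fM * P * fM = fM) (hP2 : P * fM * P = P)
    (hP3 : (fM * P)ᵀ = fM * P) (hP4 : (P * fM)ᵀ = P * fM) :
    (fun _ => (1 : ℝ)) ⬝ᵥ P.mulVec (fun _ => (1 : ℝ)) ≤ (r : ℝ) := by
  classical
  have hMinner : ∀ k l, M k l = ∑ b, (starRingEnd ℂ) (v k b) * v l b := by
    intro k l
    rw [hM]
    simp [PiLp.inner_apply, RCLike.inner_apply, mul_comm]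
  -- fM is symmetric
  have hfMsymm : fMᵀ = fM := by
    ext i j
    have : M j i = (starRingEnd ℂ) (M i j) := by
      rw [hM, hM, ← inner_conj_symm]
    simp only [transpose_apply, hfM, this, RCLike.norm_conj]
  have hPs : Pᵀ = P := psymm' fM P hfMsymm hP1 hP2 hP3 hP4
  set c : Fin n → ℝ := P.mulVec (fun _ => (1 : ℝ)) with hc
  set s : ℝ := (fun _ => (1 : ℝ)) ⬝ᵥ c with hs
  have hssum : s = ∑ k, c k := by simp [hs, dotProduct]
  -- the matrix A = ∑ c_k v_k v_k^*
  set A : Fin r → Fin r → ℂ :=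
    fun a b => ∑ k, (c k : ℂ) * (v k a * (starRingEnd ℂ) (v k b)) with hA
  -- unit vectors: sum of squared moduli is 1
  have hunit : ∀ k, ∑ a, v k a * (starRingEnd ℂ) (v k a) = 1 := by
    intro k
    have h1 : (inner ℂ (v k) (v k) : ℂ) = ((‖v k‖ : ℂ)) ^ 2 := inner_self_eq_norm_sq_to_K (v k)
    rw [hv k] at h1
    rw [show (∑ a, v k a * (starRingEnd ℂ) (v k a)) = inner ℂ (v k) (v k) from ?_, h1]
    · norm_num
    · simp only [PiLp.inner_apply, RCLike.inner_apply]
  -- trace of A is s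
  have htrace : ∑ a, A a a = (s : ℂ) := by
    rw [hA, Finset.sum_comm, hssum]
    push_cast
    refine Finset.sum_congr rfl fun k _ => ?_
    rw [← Finset.mul_sum, hunit k, mul_one]
  -- Frobenius norm squared of A equals s
  have hfrob : ∑ a, ∑ b, ((A a b).re ^ 2 + (A a b).im ^ 2) = s := by
    have hexp : ∀ a b, A a b * (starRingEnd ℂ) (A a b) =
        ∑ k, ∑ l, ((c k : ℂ) * (c l : ℂ) * (v k a * (starRingEnd ℂ) (v l a))) *
          ((starRingEnd ℂ) (v k b) * v l b) := by
      intro a b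
      rw [hA, map_sum, Finset.sum_mul_sum]
      refine Finset.sum_congr rfl fun k _ => Finset.sum_congr rfl fun l _ => ?_
      simp only [_root_.map_mul, Complex.conj_ofReal, Complex.conj_conj]
      ring
    have hsum : ∑ a, ∑ b, A a b * (starRingEnd ℂ) (A a b) =
        ∑ k, ∑ l, ((c k * c l * fM k l : ℝ) : ℂ) := by
      calc ∑ a, ∑ b, A a b * (starRingEnd ℂ) (A a b)
          = ∑ a, ∑ b, ∑ k, ∑ l,
              ((c k : ℂ) * (c l : ℂ) * (v k a * (starRingEnd ℂ) (v l a))) *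
              ((starRingEnd ℂ) (v k b) * v l b) := by
            refine Finset.sum_congr rfl fun a _ => Finset.sum_congr rfl fun b _ => hexp a b
        _ = ∑ k, ∑ l, ∑ a, ∑ b,
              ((c k : ℂ) * (c l : ℂ) * (v k a * (starRingEnd ℂ) (v l a))) *
              ((starRingEnd ℂ) (v k b) * v l b) := sum4_comm _
        _ = ∑ k, ∑ l, ((c k * c l * fM k l : ℝ) : ℂ) := by
            refine Finset.sum_congr rfl fun k _ => Finset.sum_congr rfl fun l _ => ?_
            rw [← Finset.sum_mul_sum]
            have hX : ∑ a, (c k : ℂ) * (c l : ℂ) * (v k a * (starRingEnd ℂ) (v l a)) =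
                (c k : ℂ) * (c l : ℂ) * (starRingEnd ℂ) (M k l) := by
              rw [← Finset.mul_sum]
              congr 1
              rw [hMinner, map_sum]
              refine Finset.sum_congr rfl fun a _ => ?_
              simp only [_root_.map_mul, Complex.conj_conj]
            rw [hX, ← hMinner]
            have : (starRingEnd ℂ) (M k l) * M k l = ((‖M k l‖ ^ 2 : ℝ) : ℂ) := by
              rw [mul_comm, Complex.mul_conj']
              norm_cast
            rw [mul_assoc, this, hfM]
            push_cast
            ring
    have hmc : ∀ a b, A a b * (starRingEnd ℂ) (A a b) =
        (((A a b).re ^ 2 + (A a b).im ^ 2 : ℝ) : ℂ) := by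
      intro a b
      rw [Complex.mul_conj]
      simp [Complex.normSq_apply]
      ring
    have h2 : ∑ a, ∑ b, ((A a b).re ^ 2 + (A a b).im ^ 2) =
        ∑ k, ∑ l, c k * c l * fM k l := by
      have h := hsum
      simp only [hmc] at h
      exact_mod_cast h
    rw [h2]
    -- matrix algebra: cᵀ fM c = 1ᵀ P fM P 1 = 1ᵀ P 1 = s
    have : ∑ k, ∑ l, c k * c l * fM k l = c ⬝ᵥ fM.mulVec c := by
      simp only [dotProduct, mulVec, Finset.mul_sum]
      refine Finset.sum_congr rfl fun k _ => Finset.sum_congr rfl fun l _ => ?_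
      ring
    rw [this, hs, hc]
    have hcv : (fun _ => (1:ℝ)) ᵥ* P = P *ᵥ (fun _ => (1:ℝ)) := by
      nth_rw 1 [← hPs]; rw [vecMul_transpose]
    calc (P *ᵥ fun _ => (1:ℝ)) ⬝ᵥ fM *ᵥ (P *ᵥ fun _ => (1:ℝ))
        = ((fun _ => (1:ℝ)) ᵥ* P) ⬝ᵥ fM *ᵥ (P *ᵥ fun _ => (1:ℝ)) := by rw [hcv]
      _ = (fun _ => (1:ℝ)) ⬝ᵥ P *ᵥ (fM *ᵥ (P *ᵥ fun _ => (1:ℝ))) :=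
          (dotProduct_mulVec _ _ _).symm
      _ = (fun _ => (1:ℝ)) ⬝ᵥ (P * fM * P) *ᵥ (fun _ => (1:ℝ)) := by
          rw [mulVec_mulVec, mulVec_mulVec]
      _ = (fun _ => (1:ℝ)) ⬝ᵥ P *ᵥ (fun _ => (1:ℝ)) := by rw [hP2]
  -- s is nonnegative
  have hsnn : 0 ≤ s := by
    rw [← hfrob]
    apply Finset.sum_nonneg; intro a _
    apply Finset.sum_nonneg; intro b _
    positivity
  -- diagonal real parts sum to s
  have hdiag : ∑ a, (A a a).re = s := by
    have := congrArg Complex.re htrace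
    simpa [Complex.re_sum] using this
  -- Cauchy–Schwarz
  have hCS : s ^ 2 ≤ (r : ℝ) * s := by
    calc s ^ 2 = (∑ a, (A a a).re) ^ 2 := by rw [hdiag]
      _ ≤ (Finset.univ : Finset (Fin r)).card * ∑ a, (A a a).re ^ 2 :=
          sq_sum_le_card_mul_sum_sq
      _ = (r : ℝ) * ∑ a, (A a a).re ^ 2 := by simp
      _ ≤ (r : ℝ) * ∑ a, ∑ b, ((A a b).re ^ 2 + (A a b).im ^ 2) := by
          apply mul_le_mul_of_nonneg_left _ (Nat.cast_nonneg r)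
          apply Finset.sum_le_sum; intro a _
          calc (A a a).re ^ 2 ≤ (A a a).re ^ 2 + (A a a).im ^ 2 := le_add_of_nonneg_right (sq_nonneg _)
            _ ≤ ∑ b, ((A a b).re ^ 2 + (A a b).im ^ 2) := by
                apply Finset.single_le_sum (f := fun b => (A a b).re ^ 2 + (A a b).im ^ 2)
                  (fun b _ => by positivity) (Finset.mem_univ a)
      _ = (r : ℝ) * s := by rw [hfrob]
  -- conclude
  show s ≤ (r : ℝ)
  rcases eq_or_lt_of_le hsnn with h | h
  · rw [← h]; exact Nat.cast_nonneg r
  · nlinarith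
end

section
/- Let v_1, ..., v_n be unit vectors in C^r with Gram matrix M, and let f(M) be the entrywise squared-modulus matrix. Then 1^T f(M) 1 ≥ (n^2/r)(2 − (1^T f(M)^† 1)/r). In particular, since 1^T f(M)^† 1 ≤ r, this implies the Welch bound ∑_{i,j} |<v_i,v_j>|^2 ≥ n^2/r. -/
open Matrix

lemma comm4 {M : Type*} [AddCommMonoid M] {ι κ : Type*} [Fintype ι] [Fintype κ]
    (f : ι → ι → κ → κ → M) :
    ∑ a, ∑ b, ∑ i, ∑ j, f a b i j = ∑ i, ∑ j, ∑ a, ∑ b, f a b i j := by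
  calc ∑ a, ∑ b, ∑ i, ∑ j, f a b i j
      = ∑ a, ∑ i, ∑ b, ∑ j, f a b i j :=
        Finset.sum_congr rfl fun a _ => Finset.sum_comm
    _ = ∑ i, ∑ a, ∑ b, ∑ j, f a b i j := Finset.sum_comm
    _ = ∑ i, ∑ a, ∑ j, ∑ b, f a b i j :=
        Finset.sum_congr rfl fun i _ => Finset.sum_congr rfl fun a _ => Finset.sum_comm
    _ = ∑ i, ∑ j, ∑ a, ∑ b, f a b i j :=
        Finset.sum_congr rfl fun i _ => Finset.sum_comm

lemma key_bilin (r n : ℕ) (v : Fin n → EuclideanSpace ℂ (Fin r))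
    (fM : Matrix (Fin n) (Fin n) ℝ)
    (hfM : ∀ i j, fM i j = ‖(∑ a, (starRingEnd ℂ) (v i a) * v j a)‖ ^ 2)
    (x y : Fin n → ℝ) :
    ((x ⬝ᵥ fM.mulVec y : ℝ) : ℂ) =
      ∑ a, ∑ b, (∑ i, (x i : ℂ) * (starRingEnd ℂ) (v i a) * v i b) *
        (starRingEnd ℂ) (∑ j, (y j : ℂ) * (starRingEnd ℂ) (v j a) * v j b) := by
  have hsq : ∀ (z : ℂ), ((‖z‖^2 : ℝ) : ℂ) = z * (starRingEnd ℂ) z := by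
    intro z; rw [Complex.mul_conj]; norm_cast; rw [Complex.normSq_eq_norm_sq]
  have lhs : ((x ⬝ᵥ fM.mulVec y : ℝ) : ℂ) =
      ∑ i, ∑ j, ∑ a, ∑ b, (x i : ℂ) * (y j) *
        ((v i a) * (starRingEnd ℂ) (v j a)) * ((starRingEnd ℂ) (v i b) * (v j b)) := by
    simp only [dotProduct, mulVec, Finset.mul_sum, Complex.ofReal_sum, Complex.ofReal_mul]
    refine Finset.sum_congr rfl fun i _ => Finset.sum_congr rfl fun j _ => ?_
    rw [hfM, hsq, map_sum]
    simp only [_root_.map_mul, Complex.conj_conj, Finset.sum_mul_sum, Finset.mul_sum,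
      Finset.sum_mul]
    refine Finset.sum_congr rfl fun a _ => Finset.sum_congr rfl fun b _ => ?_
    ring
  rw [lhs, ← comm4, Finset.sum_comm]
  refine Finset.sum_congr rfl fun a _ => Finset.sum_congr rfl fun b _ => ?_
  rw [map_sum, Finset.sum_mul_sum]
  simp only [map_sum, _root_.map_mul, Complex.conj_conj, Complex.conj_ofReal,
    Finset.mul_sum, Finset.sum_mul]
  refine Finset.sum_congr rfl fun i _ => Finset.sum_congr rfl fun j _ => ?_
  ring

lemma key_normSq (r n : ℕ) (v : Fin n → EuclideanSpace ℂ (Fin r))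
    (fM : Matrix (Fin n) (Fin n) ℝ)
    (hfM : ∀ i j, fM i j = ‖(∑ a, (starRingEnd ℂ) (v i a) * v j a)‖ ^ 2)
    (x : Fin n → ℝ) :
    x ⬝ᵥ fM.mulVec x =
      ∑ a, ∑ b, Complex.normSq (∑ i, (x i : ℂ) * (starRingEnd ℂ) (v i a) * v i b) := by
  have h := key_bilin r n v fM hfM x x
  simp only [Complex.mul_conj] at h
  exact_mod_cast h

lemma vnorm_sum (r n : ℕ) (v : Fin n → EuclideanSpace ℂ (Fin r)) (hv : ∀ i, ‖v i‖ = 1)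
    (i : Fin n) : (∑ a, (starRingEnd ℂ) (v i a) * v i a) = 1 := by
  have h1 : ∑ a, ‖v i a‖ ^ 2 = 1 := by
    have h := EuclideanSpace.norm_eq (v i)
    rw [hv i] at h
    have hS : 0 ≤ ∑ a, ‖v i a‖ ^ 2 := Finset.sum_nonneg fun a _ => sq_nonneg _
    nlinarith [Real.sq_sqrt hS]
  have : (∑ a, (starRingEnd ℂ) (v i a) * v i a) = ((∑ a, ‖v i a‖ ^ 2 : ℝ) : ℂ) := by
    push_cast
    refine Finset.sum_congr rfl fun a _ => ?_
    rw [mul_comm, Complex.mul_conj, Complex.normSq_eq_norm_sq]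
    norm_cast
  rw [this, h1, Complex.ofReal_one]

lemma sum_eq_zero_of_quad (r n : ℕ) (v : Fin n → EuclideanSpace ℂ (Fin r))
    (hv : ∀ i, ‖v i‖ = 1)
    (fM : Matrix (Fin n) (Fin n) ℝ)
    (hfM : ∀ i j, fM i j = ‖(∑ a, (starRingEnd ℂ) (v i a) * v j a)‖ ^ 2)
    (x : Fin n → ℝ) (hx : x ⬝ᵥ fM.mulVec x = 0) : ∑ i, x i = 0 := by
  have h := key_normSq r n v fM hfM x
  rw [hx] at h
  have hzero : ∀ a b, (∑ i, (x i : ℂ) * (starRingEnd ℂ) (v i a) * v i b) = 0 := by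
    have h2 := (Finset.sum_eq_zero_iff_of_nonneg
      (fun a _ => Finset.sum_nonneg fun b _ => Complex.normSq_nonneg _)).mp h.symm
    intro a b
    have h3 := (Finset.sum_eq_zero_iff_of_nonneg
      (fun b _ => Complex.normSq_nonneg _)).mp (h2 a (Finset.mem_univ a)) b (Finset.mem_univ b)
    exact Complex.normSq_eq_zero.mp h3
  have hdiag : ((∑ i, x i : ℝ) : ℂ) = ∑ a, ∑ i, (x i : ℂ) * (starRingEnd ℂ) (v i a) * v i a := by
    rw [Finset.sum_comm]
    push_cast
    refine Finset.sum_congr rfl fun i _ => ?_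
    have : (∑ a, (x i : ℂ) * (starRingEnd ℂ) (v i a) * v i a)
        = (x i : ℂ) * ∑ a, (starRingEnd ℂ) (v i a) * v i a := by
      rw [Finset.mul_sum]
      exact Finset.sum_congr rfl fun a _ => (mul_assoc _ _ _)
    rw [this, vnorm_sum r n v hv i, mul_one]
  rw [Finset.sum_congr rfl (fun a _ => hzero a a), Finset.sum_const_zero] at hdiag
  exact_mod_cast hdiag

set_option maxHeartbeats 1000000 in
/-- Improved Welch bound: `1ᵀ f(M) 1 ≥ (n²/r)(2 − (1ᵀ f(M)† 1)/r)`, which in particular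
implies the Welch bound `∑_{i,j} |⟨v_i, v_j⟩|² ≥ n²/r`. -/
theorem stmt1 (r n : ℕ)
    (v : Fin n → EuclideanSpace ℂ (Fin r)) (hv : ∀ i, ‖v i‖ = 1)
    (M : Matrix (Fin n) (Fin n) ℂ) (hM : ∀ i j, M i j = inner ℂ (v i) (v j))
    (fM : Matrix (Fin n) (Fin n) ℝ) (hfM : ∀ i j, fM i j = ‖M i j‖ ^ 2)
    (P : Matrix (Fin n) (Fin n) ℝ)
    (hP1 : fM * P * fM = fM) (hP2 : P * fM * P = P)
    (hP3 : (fM * P)ᵀ = fM * P) (hP4 : (P * fM)ᵀ = P * fM) :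
    (fun _ => (1 : ℝ)) ⬝ᵥ fM.mulVec (fun _ => (1 : ℝ)) ≥
      ((n : ℝ) ^ 2 / r) * (2 - ((fun _ => (1 : ℝ)) ⬝ᵥ P.mulVec (fun _ => (1 : ℝ))) / r) ∧
    ∑ i, ∑ j, ‖(inner ℂ (v i) (v j) : ℂ)‖ ^ 2 ≥ (n : ℝ) ^ 2 / r := by
  rcases Nat.eq_zero_or_pos n with hn | hn
  · subst hn
    constructor
    · simp [dotProduct]
    · simp
  rcases Nat.eq_zero_or_pos r with hr | hr
  · exfalso
    subst hr
    have h := hv ⟨0, hn⟩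
    have : v ⟨0, hn⟩ = 0 := Subsingleton.elim _ _
    rw [this, norm_zero] at h
    exact one_ne_zero h.symm
  -- basic setup
  have hfM' : ∀ i j, fM i j = ‖(∑ a, (starRingEnd ℂ) (v i a) * v j a)‖ ^ 2 := by
    intro i j
    have hin : (inner ℂ (v i) (v j) : ℂ) = ∑ a, (starRingEnd ℂ) (v i a) * v j a := by
      simp [PiLp.inner_apply, RCLike.inner_apply, mul_comm]
    rw [hfM, hM, hin]
  set o : Fin n → ℝ := fun _ => (1 : ℝ) with ho
  set s : ℝ := o ⬝ᵥ fM.mulVec o with hs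
  set t : ℝ := o ⬝ᵥ P.mulVec o with hts
  have hoo : o ⬝ᵥ o = (n : ℝ) := by simp [ho, dotProduct]
  have hpsd : ∀ x : Fin n → ℝ, 0 ≤ x ⬝ᵥ fM.mulVec x := by
    intro x
    rw [key_normSq r n v fM hfM' x]
    exact Finset.sum_nonneg fun a _ => Finset.sum_nonneg fun b _ => Complex.normSq_nonneg _
  -- Part 2 : n² ≤ r * s
  have hn2rs : (n : ℝ) ^ 2 ≤ r * s := by
    have hkey := key_normSq r n v fM hfM' o
    set F : Fin r → Fin r → ℂ :=
      fun a b => ∑ i, ((o i : ℝ) : ℂ) * (starRingEnd ℂ) (v i a) * v i b with hF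
    have htr : ∑ a, F a a = (n : ℂ) := by
      rw [Finset.sum_comm]
      have : ∀ i : Fin n, (∑ a, ((o i : ℝ) : ℂ) * (starRingEnd ℂ) (v i a) * v i a) = 1 := by
        intro i
        have : (∑ a, ((o i : ℝ) : ℂ) * (starRingEnd ℂ) (v i a) * v i a)
            = ((o i : ℝ) : ℂ) * ∑ a, (starRingEnd ℂ) (v i a) * v i a := by
          rw [Finset.mul_sum]
          exact Finset.sum_congr rfl fun a _ => (mul_assoc _ _ _)
        rw [this, vnorm_sum r n v hv i, mul_one]
        simp [ho]
      rw [Finset.sum_congr rfl fun i _ => this i]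
      simp
    have hd : (n : ℝ) = ∑ a, (F a a).re := by
      have := congrArg Complex.re htr
      simp only [Complex.re_sum, Complex.natCast_re] at this
      exact this.symm
    have step1 : ((n : ℝ)) ^ 2 ≤ r * ∑ a, (F a a).re ^ 2 := by
      rw [hd]
      have := sq_sum_le_card_mul_sum_sq (s := (Finset.univ : Finset (Fin r)))
        (f := fun a => (F a a).re)
      simpa using this
    have step2 : ∑ a, (F a a).re ^ 2 ≤ ∑ a, Complex.normSq (F a a) := by
      refine Finset.sum_le_sum fun a _ => ?_
      rw [Complex.normSq_apply]
      nlinarith [sq_nonneg (F a a).im]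
    have step3 : ∑ a, Complex.normSq (F a a) ≤ s := by
      rw [hs, hkey]
      refine Finset.sum_le_sum fun a _ => ?_
      exact Finset.single_le_sum (fun b _ => Complex.normSq_nonneg _) (Finset.mem_univ a)
    nlinarith [step1, step2, step3, (by positivity : (0:ℝ) ≤ (r:ℝ))]
  have hspos : 0 < s := by
    have : (0:ℝ) < (n:ℝ)^2 := by positivity
    nlinarith [hn2rs, (by positivity : (0:ℝ) < (r:ℝ))]
  have part2 : ∑ i, ∑ j, ‖(inner ℂ (v i) (v j) : ℂ)‖ ^ 2 ≥ (n : ℝ) ^ 2 / r := by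
    have hs' : ∑ i, ∑ j, ‖(inner ℂ (v i) (v j) : ℂ)‖ ^ 2 = s := by
      rw [hs]
      simp only [dotProduct, mulVec, ho, one_mul, mul_one, Finset.mul_sum]
      refine Finset.sum_congr rfl fun i _ => Finset.sum_congr rfl fun j _ => ?_
      rw [hfM, hM]
    rw [hs', ge_iff_le, div_le_iff₀ (by positivity : (0:ℝ) < (r:ℝ))]
    nlinarith [hn2rs]
  refine ⟨?_, part2⟩
  -- matrix algebra: 1 is in the range of fM
  have hsymm : fMᵀ = fM := by
    ext i j
    show fM j i = fM i j
    rw [hfM' j i, hfM' i j]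
    have : (∑ a, (starRingEnd ℂ) (v j a) * v i a)
        = (starRingEnd ℂ) (∑ a, (starRingEnd ℂ) (v i a) * v j a) := by
      rw [map_sum]
      exact Finset.sum_congr rfl fun a _ => by
        rw [_root_.map_mul, Complex.conj_conj, mul_comm]
    rw [this, RCLike.norm_conj]
  have h5 : fM * Pᵀ * fM = fM := by
    have h := congrArg Matrix.transpose hP1
    rwa [Matrix.transpose_mul, Matrix.transpose_mul, hsymm, ← Matrix.mul_assoc] at h
  have h6 : fM * (fM * P) = fM := by
    conv_lhs => rw [← hP3]
    rw [Matrix.transpose_mul, hsymm, ← Matrix.mul_assoc, h5]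
  set z : Fin n → ℝ := o - (fM * P).mulVec o with hz
  have hAz : fM.mulVec z = 0 := by
    rw [hz, Matrix.mulVec_sub, Matrix.mulVec_mulVec, h6, sub_self]
  have hz1 : ∑ i, z i = 0 := by
    refine sum_eq_zero_of_quad r n v hv fM hfM' z ?_
    rw [hAz, dotProduct_zero]
  have hzz : z ⬝ᵥ z = 0 := by
    have h1 : z ⬝ᵥ o = 0 := by
      rw [show z ⬝ᵥ o = ∑ i, z i by simp [ho, dotProduct], hz1]
    have h2 : z ⬝ᵥ ((fM * P).mulVec o) = 0 := by
      rw [Matrix.dotProduct_mulVec, ← Matrix.mulVec_transpose, Matrix.transpose_mul, hsymm,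
        ← Matrix.mulVec_mulVec, hAz, Matrix.mulVec_zero, zero_dotProduct]
    calc z ⬝ᵥ z = z ⬝ᵥ (o - (fM * P).mulVec o) := by rw [← hz]
      _ = z ⬝ᵥ o - z ⬝ᵥ ((fM * P).mulVec o) := by rw [dotProduct_sub]
      _ = 0 := by rw [h1, h2, sub_zero]
  have hz0 : (fM * P).mulVec o = o := by
    have : ∀ i, z i = 0 := by
      intro i
      have hsum : ∑ i, z i * z i = 0 := hzz
      have := (Finset.sum_eq_zero_iff_of_nonneg
        (fun i _ => mul_self_nonneg (z i))).mp hsum i (Finset.mem_univ i)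
      exact mul_self_eq_zero.mp this
    have hzf : z = 0 := funext this
    rw [hz] at hzf
    exact (sub_eq_zero.mp hzf).symm
  set y : Fin n → ℝ := P.mulVec o with hy
  have h1fy : fM.mulVec y = o := by
    rw [hy, Matrix.mulVec_mulVec, hz0]
  have hyA1 : y ⬝ᵥ fM.mulVec o = (n : ℝ) := by
    rw [Matrix.dotProduct_mulVec, ← Matrix.mulVec_transpose, hsymm, h1fy, hoo]
  have hoAy : o ⬝ᵥ fM.mulVec y = (n : ℝ) := by rw [h1fy, hoo]
  have hyy : y ⬝ᵥ fM.mulVec y = t := by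
    rw [h1fy, hts, hy]
    simp [ho, dotProduct, mulVec]
  -- Cauchy–Schwarz via the quadratic form
  have hexp : ∀ l : ℝ, (y - l • o) ⬝ᵥ fM.mulVec (y - l • o)
      = t - 2 * l * n + l ^ 2 * s := by
    intro l
    rw [Matrix.mulVec_sub, Matrix.mulVec_smul, sub_dotProduct,
      dotProduct_sub, dotProduct_sub, smul_dotProduct,
      smul_dotProduct, dotProduct_smul, dotProduct_smul,
      hyy, hyA1, hoAy, ← hs]
    simp only [smul_eq_mul]
    ring
  have hst : (n : ℝ) ^ 2 ≤ t * s := by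
    have h := hpsd (y - ((n : ℝ) / s) • o)
    rw [hexp ((n : ℝ) / s)] at h
    have hs0 : s ≠ 0 := ne_of_gt hspos
    have e : t - 2 * ((n:ℝ)/s) * (n:ℝ) + ((n:ℝ)/s)^2 * s = t - (n:ℝ)^2 / s := by
      field_simp
      ring
    rw [e] at h
    have h2 : (n:ℝ)^2 / s ≤ t := by linarith
    calc (n:ℝ)^2 = ((n:ℝ)^2 / s) * s := by field_simp
      _ ≤ t * s := mul_le_mul_of_nonneg_right h2 (le_of_lt hspos)
  have htpos : 0 < t := by
    have hn2 : (0:ℝ) < (n:ℝ)^2 := by positivity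
    nlinarith [hst, hspos]
  have hr2 : (0:ℝ) < ((r:ℝ))^2 := by positivity
  have hrne : ((r:ℝ)) ≠ 0 := by positivity
  have key : (n:ℝ)^2 * (2*(r:ℝ) - t) ≤ s * (r:ℝ)^2 := by
    nlinarith [hst, htpos, hspos, sq_nonneg ((n:ℝ)*((r:ℝ) - t)),
      mul_le_mul_of_nonneg_right hst (sq_nonneg (r:ℝ))]
  have e1 : ((n:ℝ)^2/(r:ℝ)) * (2 - t/(r:ℝ)) = (n:ℝ)^2 * (2*(r:ℝ) - t) / (r:ℝ)^2 := by
    field_simp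
  rw [ge_iff_le, e1, div_le_iff₀ hr2]
  exact key
end

section
/- Let 0 < α < 1 and let v_1, ..., v_n be unit vectors in R^r with |<v_i, v_j>| = α for all i ≠ j. Let M be their Gram matrix and f(x) = x^2 applied entrywise. Then for all x, y ∈ R^n: ((1−α^2)/2)(<x, Mx><y, My> + <x, My>^2) + (α^2/(α^2 n + 1 − α^2)) <Mx, My>^2 ≥ <f(Mx), f(My)>, where f(z) denotes the vector with entries z_i^2. -/
open Matrix Finset

lemma swap3 {m r : ℕ} (F : Fin r → Fin r → Fin m → ℝ) :
    ∑ a, ∑ b, ∑ i, F a b i = ∑ i, ∑ a, ∑ b, F a b i := by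
  calc ∑ a, ∑ b, ∑ i, F a b i = ∑ a, ∑ i, ∑ b, F a b i :=
        Finset.sum_congr rfl fun a _ => Finset.sum_comm
    _ = ∑ i, ∑ a, ∑ b, F a b i := Finset.sum_comm

lemma swap4 {m r : ℕ} (F : Fin r → Fin r → Fin m → Fin m → ℝ) :
    ∑ a, ∑ b, ∑ i, ∑ j, F a b i j = ∑ i, ∑ j, ∑ a, ∑ b, F a b i j := by
  calc ∑ a, ∑ b, ∑ i, ∑ j, F a b i j = ∑ i, ∑ a, ∑ b, ∑ j, F a b i j := swap3 _
    _ = ∑ i, ∑ a, ∑ j, ∑ b, F a b i j :=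
        Finset.sum_congr rfl fun i _ => Finset.sum_congr rfl fun a _ => Finset.sum_comm
    _ = ∑ i, ∑ j, ∑ a, ∑ b, F a b i j :=
        Finset.sum_congr rfl fun i _ => Finset.sum_comm

lemma prod2 {r s : ℕ} (f : Fin r → ℝ) (g : Fin s → ℝ) :
    ∑ a, ∑ b, f a * g b = (∑ a, f a) * (∑ b, g b) :=
  (Finset.sum_mul_sum _ _ _ _).symm

/-- Geometric inequality for spherical `{α, −α}`-codes in `ℝ^r`. -/
theorem stmt2 (r n : ℕ) (α : ℝ) (hα0 : 0 < α) (hα1 : α < 1)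
    (v : Fin n → EuclideanSpace ℝ (Fin r)) (hv : ∀ i, ‖v i‖ = 1)
    (hangle : ∀ i j, i ≠ j → |(inner ℝ (v i) (v j) : ℝ)| = α)
    (M : Matrix (Fin n) (Fin n) ℝ) (hM : ∀ i j, M i j = inner ℝ (v i) (v j))
    (x y : Fin n → ℝ) :
    (1 - α ^ 2) / 2 * ((x ⬝ᵥ M.mulVec x) * (y ⬝ᵥ M.mulVec y) + (x ⬝ᵥ M.mulVec y) ^ 2)
      + α ^ 2 / (α ^ 2 * n + 1 - α ^ 2) * (M.mulVec x ⬝ᵥ M.mulVec y) ^ 2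
      ≥ ∑ i, (M.mulVec x i) ^ 2 * (M.mulVec y i) ^ 2 := by
  classical
  have hβ : (0:ℝ) < 1 - α ^ 2 := by nlinarith
  have hd : (0:ℝ) < α ^ 2 * n + 1 - α ^ 2 := by
    have h1 : (0:ℝ) ≤ α ^ 2 * n := by positivity
    linarith
  have hM' : ∀ i j, M i j = ∑ a, v i a * v j a := by
    intro i j
    rw [hM i j]
    simp [PiLp.inner_apply, RCLike.inner_apply]
    exact Finset.sum_congr rfl fun a _ => mul_comm _ _
  have hMsq : ∀ i j, (M i j) ^ 2 = if i = j then 1 else α ^ 2 := by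
    intro i j
    by_cases h : i = j
    · subst h
      have : M i i = 1 := by
        rw [hM i i, real_inner_self_eq_norm_sq, hv i]; norm_num
      simp [this]
    · have h2 : (M i j) ^ 2 = α ^ 2 := by
        rw [hM i j, ← sq_abs, hangle i j h]
      simp [h, h2]
  set X : Fin r → ℝ := fun a => ∑ j, x j * v j a with hX
  set Y : Fin r → ℝ := fun a => ∑ j, y j * v j a with hY
  have hu : ∀ i, M.mulVec x i = ∑ a, v i a * X a := by
    intro i
    simp only [Matrix.mulVec, dotProduct, hM', hX]
    calc ∑ j, (∑ a, v i a * v j a) * x j = ∑ j, ∑ a, v i a * v j a * x j := by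
            exact Finset.sum_congr rfl fun j _ => Finset.sum_mul _ _ _
      _ = ∑ a, ∑ j, v i a * v j a * x j := Finset.sum_comm
      _ = ∑ a, v i a * ∑ j, x j * v j a := by
            refine Finset.sum_congr rfl fun a _ => ?_
            rw [Finset.mul_sum]
            exact Finset.sum_congr rfl fun j _ => by ring
  have hw : ∀ i, M.mulVec y i = ∑ a, v i a * Y a := by
    intro i
    simp only [Matrix.mulVec, dotProduct, hM', hY]
    calc ∑ j, (∑ a, v i a * v j a) * y j = ∑ j, ∑ a, v i a * v j a * y j := by
            exact Finset.sum_congr rfl fun j _ => Finset.sum_mul _ _ _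
      _ = ∑ a, ∑ j, v i a * v j a * y j := Finset.sum_comm
      _ = ∑ a, v i a * ∑ j, y j * v j a := by
            refine Finset.sum_congr rfl fun a _ => ?_
            rw [Finset.mul_sum]
            exact Finset.sum_congr rfl fun j _ => by ring
  have hdot : ∀ (p : Fin n → ℝ) (W : Fin r → ℝ),
      (∀ i, M.mulVec p i = ∑ a, v i a * W a) →
      ∀ q : Fin n → ℝ, q ⬝ᵥ M.mulVec p = ∑ a, (∑ j, q j * v j a) * W a := by
    intro p W hW q
    calc q ⬝ᵥ M.mulVec p = ∑ i, q i * ∑ a, v i a * W a := by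
          exact Finset.sum_congr rfl fun i _ => by rw [hW i]
      _ = ∑ i, ∑ a, q i * (v i a * W a) := by
          exact Finset.sum_congr rfl fun i _ => Finset.mul_sum _ _ _
      _ = ∑ a, ∑ i, q i * (v i a * W a) := Finset.sum_comm
      _ = ∑ a, (∑ j, q j * v j a) * W a := by
          refine Finset.sum_congr rfl fun a _ => ?_
          rw [Finset.sum_mul]
          exact Finset.sum_congr rfl fun j _ => by ring
  have hxMx : x ⬝ᵥ M.mulVec x = ∑ a, X a * X a := hdot x X hu x
  have hxMy : x ⬝ᵥ M.mulVec y = ∑ a, X a * Y a := hdot y Y hw x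
  have hyMy : y ⬝ᵥ M.mulVec y = ∑ a, Y a * Y a := hdot y Y hw y
  -- abbreviations
  set u : Fin n → ℝ := M.mulVec x with hudef
  set w : Fin n → ℝ := M.mulVec y with hwdef
  set S : ℝ := u ⬝ᵥ w with hS
  set d : ℝ := α ^ 2 * n + 1 - α ^ 2 with hddef
  set k : ℝ := α ^ 2 * S / d with hk
  set c : Fin n → ℝ := fun i => (u i * w i - k) / (1 - α ^ 2) with hc
  set Z : ℝ := ∑ i, (u i * w i) * (u i * w i) with hZ
  -- the key positivity
  have key : (0:ℝ) ≤ ∑ a, ∑ b,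
      ((X a * Y b + X b * Y a) / 2 - ∑ i, c i * (v i a * v i b)) ^ 2 := by
    positivity
  -- T·T
  have hTT : ∑ a, ∑ b, ((X a * Y b + X b * Y a) / 2) ^ 2
      = ((∑ a, X a * X a) * (∑ a, Y a * Y a) + (∑ a, X a * Y a) ^ 2) / 2 := by
    calc ∑ a, ∑ b, ((X a * Y b + X b * Y a) / 2) ^ 2
        = ∑ a, ∑ b, ((X a * X a / 4) * (Y b * Y b) + (Y a * Y a / 4) * (X b * X b)
            + (X a * Y a / 2) * (X b * Y b)) := by
          exact Finset.sum_congr rfl fun a _ => Finset.sum_congr rfl fun b _ => by ring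
      _ = (∑ a, ∑ b, (X a * X a / 4) * (Y b * Y b))
            + (∑ a, ∑ b, (Y a * Y a / 4) * (X b * X b))
            + (∑ a, ∑ b, (X a * Y a / 2) * (X b * Y b)) := by
          simp [Finset.sum_add_distrib]
      _ = (∑ a, X a * X a / 4) * (∑ b, Y b * Y b)
            + (∑ a, Y a * Y a / 4) * (∑ b, X b * X b)
            + (∑ a, X a * Y a / 2) * (∑ b, X b * Y b) := by
          rw [prod2, prod2, prod2]
      _ = ((∑ a, X a * X a) * (∑ a, Y a * Y a) + (∑ a, X a * Y a) ^ 2) / 2 := by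
          rw [← Finset.sum_div, ← Finset.sum_div, ← Finset.sum_div]; ring
  -- T·C
  have hTC : ∑ a, ∑ b, ((X a * Y b + X b * Y a) / 2 * ∑ i, c i * (v i a * v i b))
      = ∑ i, c i * (u i * w i) := by
    calc ∑ a, ∑ b, ((X a * Y b + X b * Y a) / 2 * ∑ i, c i * (v i a * v i b))
        = ∑ a, ∑ b, ∑ i, (X a * Y b + X b * Y a) / 2 * (c i * (v i a * v i b)) := by
          exact Finset.sum_congr rfl fun a _ => Finset.sum_congr rfl fun b _ =>
            Finset.mul_sum _ _ _
      _ = ∑ i, ∑ a, ∑ b, (X a * Y b + X b * Y a) / 2 * (c i * (v i a * v i b)) := swap3 _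
      _ = ∑ i, c i * (u i * w i) := by
          refine Finset.sum_congr rfl fun i _ => ?_
          calc ∑ a, ∑ b, (X a * Y b + X b * Y a) / 2 * (c i * (v i a * v i b))
              = ∑ a, ∑ b, ((c i / 2 * (v i a * X a)) * (v i b * Y b)
                  + (c i / 2 * (v i a * Y a)) * (v i b * X b)) := by
                exact Finset.sum_congr rfl fun a _ => Finset.sum_congr rfl fun b _ => by ring
            _ = (∑ a, c i / 2 * (v i a * X a)) * (∑ b, v i b * Y b)
                  + (∑ a, c i / 2 * (v i a * Y a)) * (∑ b, v i b * X b) := by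
                simp only [Finset.sum_add_distrib]
                rw [prod2, prod2]
            _ = (c i / 2 * u i) * w i + (c i / 2 * w i) * u i := by
                rw [← Finset.mul_sum, ← Finset.mul_sum, ← hu i, ← hw i]
            _ = c i * (u i * w i) := by ring
  -- C·C
  have hCC : ∑ a, ∑ b, (∑ i, c i * (v i a * v i b)) ^ 2
      = α ^ 2 * (∑ i, c i) ^ 2 + (1 - α ^ 2) * ∑ i, c i * c i := by
    calc ∑ a, ∑ b, (∑ i, c i * (v i a * v i b)) ^ 2
        = ∑ a, ∑ b, ∑ i, ∑ j, (c i * (v i a * v i b)) * (c j * (v j a * v j b)) := by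
          refine Finset.sum_congr rfl fun a _ => Finset.sum_congr rfl fun b _ => ?_
          rw [sq, Finset.sum_mul_sum]
      _ = ∑ i, ∑ j, ∑ a, ∑ b, (c i * (v i a * v i b)) * (c j * (v j a * v j b)) := swap4 _
      _ = ∑ i, ∑ j, (c i * c j) * (M i j) ^ 2 := by
          refine Finset.sum_congr rfl fun i _ => Finset.sum_congr rfl fun j _ => ?_
          calc ∑ a, ∑ b, (c i * (v i a * v i b)) * (c j * (v j a * v j b))
              = ∑ a, ∑ b, ((c i * c j) * (v i a * v j a)) * (v i b * v j b) := by
                exact Finset.sum_congr rfl fun a _ => Finset.sum_congr rfl fun b _ => by ring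
            _ = (∑ a, (c i * c j) * (v i a * v j a)) * (∑ b, v i b * v j b) := prod2 _ _
            _ = ((c i * c j) * (M i j)) * (M i j) := by rw [← Finset.mul_sum, ← hM' i j]
            _ = (c i * c j) * (M i j) ^ 2 := by ring
      _ = ∑ i, (α ^ 2 * (c i * ∑ j, c j) + (1 - α ^ 2) * (c i * c i)) := by
          refine Finset.sum_congr rfl fun i _ => ?_
          calc ∑ j, (c i * c j) * (M i j) ^ 2
              = ∑ j, (α ^ 2 * (c i * c j) + if i = j then (1 - α ^ 2) * (c i * c j) else 0) := by
                refine Finset.sum_congr rfl fun j _ => ?_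
                rw [hMsq i j]
                by_cases h : i = j <;> simp [h] <;> ring
            _ = α ^ 2 * (c i * ∑ j, c j) + (1 - α ^ 2) * (c i * c i) := by
                rw [Finset.sum_add_distrib, Finset.sum_ite_eq]
                simp [Finset.mul_sum]
      _ = α ^ 2 * (∑ i, c i) ^ 2 + (1 - α ^ 2) * ∑ i, c i * c i := by
          rw [Finset.sum_add_distrib, ← Finset.mul_sum, ← Finset.mul_sum, ← Finset.sum_mul]
          ring
  have hS' : S = ∑ i, u i * w i := rfl
  have hcsum : ∑ i, c i = (S - n * k) / (1 - α ^ 2) := by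
    simp only [hc]
    rw [← Finset.sum_div, Finset.sum_sub_distrib, Finset.sum_const, card_univ,
      Fintype.card_fin, nsmul_eq_mul, ← hS']
  have hcz : ∑ i, c i * (u i * w i) = (Z - k * S) / (1 - α ^ 2) := by
    calc ∑ i, c i * (u i * w i)
        = ∑ i, (u i * w i * (u i * w i) - k * (u i * w i)) / (1 - α ^ 2) := by
          refine Finset.sum_congr rfl fun i _ => ?_
          simp only [hc]; ring
      _ = (Z - k * S) / (1 - α ^ 2) := by
          rw [← Finset.sum_div, Finset.sum_sub_distrib, ← Finset.mul_sum, ← hZ, ← hS']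
  have hcc2 : ∑ i, c i * c i
      = (Z - 2 * k * S + n * (k * k)) / ((1 - α ^ 2) * (1 - α ^ 2)) := by
    calc ∑ i, c i * c i
        = ∑ i, (u i * w i * (u i * w i) - 2 * k * (u i * w i) + k * k)
            / ((1 - α ^ 2) * (1 - α ^ 2)) := by
          refine Finset.sum_congr rfl fun i _ => ?_
          simp only [hc]
          rw [div_mul_div_comm]
          congr 1
          ring
      _ = (Z - 2 * k * S + n * (k * k)) / ((1 - α ^ 2) * (1 - α ^ 2)) := by
          rw [← Finset.sum_div, Finset.sum_add_distrib, Finset.sum_sub_distrib,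
            ← Finset.mul_sum, Finset.sum_const, card_univ, Fintype.card_fin,
            nsmul_eq_mul, ← hZ, ← hS']
  have hsplit : ∑ a, ∑ b,
      ((X a * Y b + X b * Y a) / 2 - ∑ i, c i * (v i a * v i b)) ^ 2
      = (∑ a, ∑ b, ((X a * Y b + X b * Y a) / 2) ^ 2)
        - 2 * (∑ a, ∑ b, ((X a * Y b + X b * Y a) / 2 * ∑ i, c i * (v i a * v i b)))
        + (∑ a, ∑ b, (∑ i, c i * (v i a * v i b)) ^ 2) := by
    calc ∑ a, ∑ b, ((X a * Y b + X b * Y a) / 2 - ∑ i, c i * (v i a * v i b)) ^ 2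
        = ∑ a, ∑ b, (((X a * Y b + X b * Y a) / 2) ^ 2
            - 2 * ((X a * Y b + X b * Y a) / 2 * ∑ i, c i * (v i a * v i b))
            + (∑ i, c i * (v i a * v i b)) ^ 2) := by
          exact Finset.sum_congr rfl fun a _ => Finset.sum_congr rfl fun b _ => by ring
      _ = _ := by
          simp only [Finset.sum_add_distrib, Finset.sum_sub_distrib, ← Finset.mul_sum]
  have key2 : (0:ℝ) ≤ ((x ⬝ᵥ u) * (y ⬝ᵥ w) + (x ⬝ᵥ w) ^ 2) / 2
      - 2 * ((Z - k * S) / (1 - α ^ 2))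
      + (α ^ 2 * ((S - n * k) / (1 - α ^ 2)) ^ 2
        + (1 - α ^ 2) * ((Z - 2 * k * S + n * (k * k)) / ((1 - α ^ 2) * (1 - α ^ 2)))) := by
    rw [hsplit, hTT, hTC, hCC, hcsum, hcz, hcc2, ← hxMx, ← hyMy, ← hxMy] at key
    exact key
  rw [ge_iff_le, ← sub_nonneg]
  have hZgoal : ∑ i, u i ^ 2 * w i ^ 2 = Z := by
    rw [hZ]; exact Finset.sum_congr rfl fun i _ => by ring
  rw [hZgoal]
  have hd0 : (α ^ 2 * (n:ℝ) + 1 - α ^ 2) ≠ 0 := by rw [← hddef]; exact hd.ne'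
  have heq : (1 - α ^ 2) / 2 * ((x ⬝ᵥ u) * (y ⬝ᵥ w) + (x ⬝ᵥ w) ^ 2) + α ^ 2 / d * S ^ 2 - Z
      = (1 - α ^ 2) * (((x ⬝ᵥ u) * (y ⬝ᵥ w) + (x ⬝ᵥ w) ^ 2) / 2
        - 2 * ((Z - k * S) / (1 - α ^ 2))
        + (α ^ 2 * ((S - n * k) / (1 - α ^ 2)) ^ 2
          + (1 - α ^ 2) * ((Z - 2 * k * S + n * (k * k)) / ((1 - α ^ 2) * (1 - α ^ 2))))) := by
    simp only [hk, hddef]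
    field_simp
    ring
  rw [heq]
  exact mul_nonneg hβ.le key2
end

section
/- Let 0 < α < 1 and let v_1, ..., v_n be unit vectors in C^r with |<v_i, v_j>| = α for all i ≠ j. Let M be their Gram matrix. Then for all x, y ∈ C^n: (1−α^2) <x, Mx> <y, My> + (α^2/(α^2 n + 1 − α^2)) |<Mx, My>|^2 ≥ ∑_{i=1}^n |(Mx)_i|^2 |(My)_i|^2. -/
open Matrix

/-- Geometric inequality for spherical `S¹(α)`-codes in `ℂ^r`. -/
theorem stmt3 (r n : ℕ) (α : ℝ) (hα0 : 0 < α) (hα1 : α < 1)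
    (v : Fin n → EuclideanSpace ℂ (Fin r)) (hv : ∀ i, ‖v i‖ = 1)
    (hangle : ∀ i j, i ≠ j → ‖(inner ℂ (v i) (v j) : ℂ)‖ = α)
    (M : Matrix (Fin n) (Fin n) ℂ) (hM : ∀ i j, M i j = inner ℂ (v i) (v j))
    (x y : Fin n → ℂ) :
    (1 - α ^ 2) * (star x ⬝ᵥ M.mulVec x).re * (star y ⬝ᵥ M.mulVec y).re
      + α ^ 2 / (α ^ 2 * n + 1 - α ^ 2) * ‖star (M.mulVec x) ⬝ᵥ M.mulVec y‖ ^ 2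
      ≥ ∑ i, ‖M.mulVec x i‖ ^ 2 * ‖M.mulVec y i‖ ^ 2 := by
  classical
  have hconj : ∀ z : ℂ, (starRingEnd ℂ) z * z = (Complex.normSq z : ℂ) := fun z =>
    (Complex.normSq_eq_conj_mul_self).symm
  set a := M.mulVec x with ha
  set b := M.mulVec y with hb
  set δ : ℝ := 1 - α ^ 2 with hδdef
  have hδ : 0 < δ := by nlinarith
  have hden : (0:ℝ) < α ^ 2 * n + δ := by positivity
  set β : ℝ := α ^ 2 / (α ^ 2 * n + δ) with hβdef
  have hβ0 : 0 ≤ β := by positivity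
  -- entries of M as sums
  have hMe : ∀ i j, M i j = ∑ k, (starRingEnd ℂ) (v i k) * v j k := by
    intro i j; rw [hM]; simp [PiLp.inner_apply, RCLike.inner_apply, mul_comm]
  have hMdiag : ∀ i, Complex.normSq (M i i) = 1 := by
    intro i
    have h1 : (M i i) = ((1:ℝ):ℂ) := by
      rw [hM]
      rw [inner_self_eq_norm_sq_to_K (𝕜 := ℂ) (v i), hv i]
      norm_num
    rw [h1]; simp
  have hMoff : ∀ i j, i ≠ j → Complex.normSq (M i j) = α ^ 2 := by
    intro i j h
    have h1 : ‖M i j‖ = α := by rw [hM]; exact hangle i j h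
    rw [← Complex.sq_norm, h1]
  set u : Fin r → ℂ := fun k => ∑ j, x j * v j k with hu
  set w : Fin r → ℂ := fun k => ∑ j, y j * v j k with hw
  have ha_eq : ∀ i, a i = ∑ k, (starRingEnd ℂ) (v i k) * u k := by
    intro i
    have : a i = ∑ j, M i j * x j := rfl
    rw [this]
    calc ∑ j, M i j * x j
        = ∑ j, ∑ k, (starRingEnd ℂ) (v i k) * (x j * v j k) := by
          refine Finset.sum_congr rfl fun j _ => ?_
          rw [hMe, Finset.sum_mul]
          exact Finset.sum_congr rfl fun k _ => by ring
      _ = ∑ k, ∑ j, (starRingEnd ℂ) (v i k) * (x j * v j k) := Finset.sum_comm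
      _ = ∑ k, (starRingEnd ℂ) (v i k) * u k := by
          refine Finset.sum_congr rfl fun k _ => ?_
          rw [hu]; rw [Finset.mul_sum]
  have hb_eq : ∀ i, b i = ∑ k, (starRingEnd ℂ) (v i k) * w k := by
    intro i
    have : b i = ∑ j, M i j * y j := rfl
    rw [this]
    calc ∑ j, M i j * y j
        = ∑ j, ∑ k, (starRingEnd ℂ) (v i k) * (y j * v j k) := by
          refine Finset.sum_congr rfl fun j _ => ?_
          rw [hMe, Finset.sum_mul]
          exact Finset.sum_congr rfl fun k _ => by ring
      _ = ∑ k, ∑ j, (starRingEnd ℂ) (v i k) * (y j * v j k) := Finset.sum_comm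
      _ = ∑ k, (starRingEnd ℂ) (v i k) * w k := by
          refine Finset.sum_congr rfl fun k _ => ?_
          rw [hw]; rw [Finset.mul_sum]
  -- quadratic forms
  have hPc : star x ⬝ᵥ a = ((∑ k, Complex.normSq (u k) : ℝ) : ℂ) := by
    calc star x ⬝ᵥ a = ∑ i, (starRingEnd ℂ) (x i) * a i := by
          simp [dotProduct, Complex.star_def]
      _ = ∑ i, ∑ k, (starRingEnd ℂ) (x i) * ((starRingEnd ℂ) (v i k) * u k) := by
          refine Finset.sum_congr rfl fun i _ => ?_
          rw [ha_eq, Finset.mul_sum]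
      _ = ∑ k, ∑ i, (starRingEnd ℂ) (x i * v i k) * u k := by
          rw [Finset.sum_comm]
          exact Finset.sum_congr rfl fun k _ => Finset.sum_congr rfl fun i _ => by
            rw [_root_.map_mul]; ring
      _ = ∑ k, (starRingEnd ℂ) (u k) * u k := by
          refine Finset.sum_congr rfl fun k _ => ?_
          rw [← Finset.sum_mul, ← map_sum]
      _ = ((∑ k, Complex.normSq (u k) : ℝ) : ℂ) := by
          push_cast
          exact Finset.sum_congr rfl fun k _ => hconj _
  have hQc : star y ⬝ᵥ b = ((∑ k, Complex.normSq (w k) : ℝ) : ℂ) := by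
    calc star y ⬝ᵥ b = ∑ i, (starRingEnd ℂ) (y i) * b i := by
          simp [dotProduct, Complex.star_def]
      _ = ∑ i, ∑ k, (starRingEnd ℂ) (y i) * ((starRingEnd ℂ) (v i k) * w k) := by
          refine Finset.sum_congr rfl fun i _ => ?_
          rw [hb_eq, Finset.mul_sum]
      _ = ∑ k, ∑ i, (starRingEnd ℂ) (y i * v i k) * w k := by
          rw [Finset.sum_comm]
          exact Finset.sum_congr rfl fun k _ => Finset.sum_congr rfl fun i _ => by
            rw [_root_.map_mul]; ring
      _ = ∑ k, (starRingEnd ℂ) (w k) * w k := by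
          refine Finset.sum_congr rfl fun k _ => ?_
          rw [← Finset.sum_mul, ← map_sum]
      _ = ((∑ k, Complex.normSq (w k) : ℝ) : ℂ) := by
          push_cast
          exact Finset.sum_congr rfl fun k _ => hconj _
  set P : ℝ := ∑ k, Complex.normSq (u k) with hP
  set Q : ℝ := ∑ k, Complex.normSq (w k) with hQ
  set c : Fin n → ℂ := fun i => a i * (starRingEnd ℂ) (b i) with hc
  set s : ℂ := ∑ i, c i with hs
  set C : ℝ := ∑ i, Complex.normSq (c i) with hC
  set Sq : ℝ := Complex.normSq s with hSq
  -- rewrite goal pieces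
  have hre1 : (star x ⬝ᵥ a).re = P := by rw [hPc]; simp
  have hre2 : (star y ⬝ᵥ b).re = Q := by rw [hQc]; simp
  have hsb : star a ⬝ᵥ b = (starRingEnd ℂ) s := by
    rw [hs]
    simp only [dotProduct, map_sum, hc]
    refine Finset.sum_congr rfl fun i _ => ?_
    simp only [Pi.star_apply, Complex.star_def, _root_.map_mul, Complex.conj_conj]
  have hnormsb : ‖star a ⬝ᵥ b‖ ^ 2 = Sq := by
    rw [hsb, hSq, ← Complex.sq_norm]
    simp
  have hrhs : ∑ i, ‖a i‖ ^ 2 * ‖b i‖ ^ 2 = C := by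
    rw [hC]
    refine Finset.sum_congr rfl fun i _ => ?_
    have : Complex.normSq (c i) = Complex.normSq (a i) * Complex.normSq (b i) := by
      rw [hc]; simp [Complex.normSq_mul]
    rw [this, ← Complex.sq_norm, ← Complex.sq_norm]
  -- the projection argument
  set t : Fin n → ℂ := fun i => (c i - (β:ℂ) * s) / (δ:ℂ) with htdef
  set V : Fin n → Fin r → Fin r → ℂ := fun i p q => v i p * (starRingEnd ℂ) (v i q) with hVdef
  set T : Fin r → Fin r → ℂ := fun p q => u p * (starRingEnd ℂ) (w q) with hTdef
  set D : Fin r → Fin r → ℂ := fun p q => T p q - ∑ i, t i * V i p q with hDdef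
  have h0 : (0:ℝ) ≤ ∑ p, ∑ q, Complex.normSq (D p q) :=
    Finset.sum_nonneg fun p _ => Finset.sum_nonneg fun q _ => Complex.normSq_nonneg _
  have hδℂ : (δ:ℂ) ≠ 0 := by exact_mod_cast ne_of_gt hδ
  -- inner products of the tensor vectors
  have hTT : ∑ p, ∑ q, (starRingEnd ℂ) (T p q) * T p q = ((P * Q : ℝ) : ℂ) := by
    have h1 : ∀ p q, (starRingEnd ℂ) (T p q) * T p q
        = ((Complex.normSq (u p) * Complex.normSq (w q) : ℝ) : ℂ) := by
      intro p q
      rw [hconj, hTdef]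
      push_cast
      rw [Complex.normSq_mul, Complex.normSq_conj]
      push_cast
      ring
    calc ∑ p, ∑ q, (starRingEnd ℂ) (T p q) * T p q
        = ∑ p, ∑ q, ((Complex.normSq (u p) * Complex.normSq (w q) : ℝ) : ℂ) :=
          Finset.sum_congr rfl fun p _ => Finset.sum_congr rfl fun q _ => h1 p q
      _ = ((∑ p, ∑ q, Complex.normSq (u p) * Complex.normSq (w q) : ℝ) : ℂ) := by push_cast; rfl
      _ = ((P * Q : ℝ) : ℂ) := by
          rw [hP, hQ, Finset.sum_mul_sum]
  have hVT : ∀ i, ∑ p, ∑ q, (starRingEnd ℂ) (T p q) * V i p q = (starRingEnd ℂ) (c i) := by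
    intro i
    have h1 : (starRingEnd ℂ) (c i)
        = (∑ p, (starRingEnd ℂ) (u p) * v i p) * (∑ q, w q * (starRingEnd ℂ) (v i q)) := by
      rw [hc]
      simp only [_root_.map_mul, Complex.conj_conj]
      congr 1
      · rw [ha_eq i, map_sum]
        exact Finset.sum_congr rfl fun p _ => by
          rw [_root_.map_mul, Complex.conj_conj]; ring
      · rw [hb_eq i]
        exact Finset.sum_congr rfl fun q _ => by ring
    rw [h1, Finset.sum_mul_sum]
    exact Finset.sum_congr rfl fun p _ => Finset.sum_congr rfl fun q _ => by
      rw [hTdef, hVdef]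
      simp only [_root_.map_mul, Complex.conj_conj]
      ring
  have hVV : ∀ i j, ∑ p, ∑ q, (starRingEnd ℂ) (V i p q) * V j p q
      = ((Complex.normSq (M i j) : ℝ) : ℂ) := by
    intro i j
    have h1 : ((Complex.normSq (M i j) : ℝ) : ℂ)
        = (∑ p, (starRingEnd ℂ) (v i p) * v j p) * (∑ q, v i q * (starRingEnd ℂ) (v j q)) := by
      rw [← Complex.mul_conj (M i j)]
      congr 1
      · exact hMe i j
      · rw [hMe i j, map_sum]
        exact Finset.sum_congr rfl fun q _ => by
          rw [_root_.map_mul, Complex.conj_conj]; try ring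
    rw [h1, Finset.sum_mul_sum]
    exact Finset.sum_congr rfl fun p _ => Finset.sum_congr rfl fun q _ => by
      rw [hVdef]
      simp only [_root_.map_mul, Complex.conj_conj]
      ring
  -- expansion of the square
  have hTS : ∑ p, ∑ q, (starRingEnd ℂ) (T p q) * (∑ i, t i * V i p q)
      = ∑ i, t i * (starRingEnd ℂ) (c i) := by
    calc ∑ p, ∑ q, (starRingEnd ℂ) (T p q) * (∑ i, t i * V i p q)
        = ∑ p, ∑ q, ∑ i, t i * ((starRingEnd ℂ) (T p q) * V i p q) := by
          refine Finset.sum_congr rfl fun p _ => Finset.sum_congr rfl fun q _ => ?_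
          rw [Finset.mul_sum]
          exact Finset.sum_congr rfl fun i _ => by ring
      _ = ∑ p, ∑ i, ∑ q, t i * ((starRingEnd ℂ) (T p q) * V i p q) :=
          Finset.sum_congr rfl fun p _ => Finset.sum_comm
      _ = ∑ i, ∑ p, ∑ q, t i * ((starRingEnd ℂ) (T p q) * V i p q) :=
          Finset.sum_comm
      _ = ∑ i, t i * (starRingEnd ℂ) (c i) := by
          refine Finset.sum_congr rfl fun i _ => ?_
          rw [← hVT i, Finset.mul_sum]
          exact Finset.sum_congr rfl fun p _ => by rw [Finset.mul_sum]
  have hST : ∑ p, ∑ q, (starRingEnd ℂ) (∑ i, t i * V i p q) * T p q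
      = ∑ i, (starRingEnd ℂ) (t i) * c i := by
    have h1 : ∀ p q, (starRingEnd ℂ) (∑ i, t i * V i p q) * T p q
        = (starRingEnd ℂ) ((starRingEnd ℂ) (T p q) * (∑ i, t i * V i p q)) := by
      intro p q
      rw [_root_.map_mul, Complex.conj_conj]
      ring
    calc ∑ p, ∑ q, (starRingEnd ℂ) (∑ i, t i * V i p q) * T p q
        = (starRingEnd ℂ) (∑ p, ∑ q, (starRingEnd ℂ) (T p q) * (∑ i, t i * V i p q)) := by
          rw [map_sum]
          refine Finset.sum_congr rfl fun p _ => ?_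
          rw [map_sum]
          exact Finset.sum_congr rfl fun q _ => h1 p q
      _ = ∑ i, (starRingEnd ℂ) (t i) * c i := by
          rw [hTS, map_sum]
          exact Finset.sum_congr rfl fun i _ => by
            rw [_root_.map_mul, Complex.conj_conj]
  have hSS : ∑ p, ∑ q, (starRingEnd ℂ) (∑ i, t i * V i p q) * (∑ j, t j * V j p q)
      = ∑ i, ∑ j, (starRingEnd ℂ) (t i) * t j * ((Complex.normSq (M i j) : ℝ) : ℂ) := by
    calc ∑ p, ∑ q, (starRingEnd ℂ) (∑ i, t i * V i p q) * (∑ j, t j * V j p q)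
        = ∑ p, ∑ q, ∑ i, ∑ j, (starRingEnd ℂ) (t i) * t j
            * ((starRingEnd ℂ) (V i p q) * V j p q) := by
          refine Finset.sum_congr rfl fun p _ => Finset.sum_congr rfl fun q _ => ?_
          rw [map_sum, Finset.sum_mul_sum]
          refine Finset.sum_congr rfl fun i _ => Finset.sum_congr rfl fun j _ => ?_
          rw [_root_.map_mul]
          ring
      _ = ∑ p, ∑ i, ∑ q, ∑ j, (starRingEnd ℂ) (t i) * t j
            * ((starRingEnd ℂ) (V i p q) * V j p q) :=
          Finset.sum_congr rfl fun p _ => Finset.sum_comm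
      _ = ∑ i, ∑ p, ∑ q, ∑ j, (starRingEnd ℂ) (t i) * t j
            * ((starRingEnd ℂ) (V i p q) * V j p q) := Finset.sum_comm
      _ = ∑ i, ∑ p, ∑ j, ∑ q, (starRingEnd ℂ) (t i) * t j
            * ((starRingEnd ℂ) (V i p q) * V j p q) :=
          Finset.sum_congr rfl fun i _ => Finset.sum_congr rfl fun p _ => Finset.sum_comm
      _ = ∑ i, ∑ j, ∑ p, ∑ q, (starRingEnd ℂ) (t i) * t j
            * ((starRingEnd ℂ) (V i p q) * V j p q) :=
          Finset.sum_congr rfl fun i _ => Finset.sum_comm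
      _ = ∑ i, ∑ j, (starRingEnd ℂ) (t i) * t j * ((Complex.normSq (M i j) : ℝ) : ℂ) := by
          refine Finset.sum_congr rfl fun i _ => Finset.sum_congr rfl fun j _ => ?_
          rw [← hVV i j, Finset.mul_sum]
          exact Finset.sum_congr rfl fun p _ => by rw [Finset.mul_sum]
  have hexp : ∑ p, ∑ q, (starRingEnd ℂ) (D p q) * D p q
      = ((P * Q : ℝ) : ℂ) - (∑ i, t i * (starRingEnd ℂ) (c i))
        - (∑ i, (starRingEnd ℂ) (t i) * c i)
        + ∑ i, ∑ j, (starRingEnd ℂ) (t i) * t j * ((Complex.normSq (M i j) : ℝ) : ℂ) := by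
    rw [← hTT, ← hTS, ← hST, ← hSS]
    rw [← Finset.sum_sub_distrib, ← Finset.sum_sub_distrib, ← Finset.sum_add_distrib]
    refine Finset.sum_congr rfl fun p _ => ?_
    rw [← Finset.sum_sub_distrib, ← Finset.sum_sub_distrib, ← Finset.sum_add_distrib]
    refine Finset.sum_congr rfl fun q _ => ?_
    rw [hDdef]
    simp only [map_sub]
    ring
  -- scalar evaluations
  have hsconj : (starRingEnd ℂ) s * s = ((Sq : ℝ) : ℂ) := by rw [hconj s, hSq]
  have hsconj' : s * (starRingEnd ℂ) s = ((Sq : ℝ) : ℂ) := by rw [mul_comm]; exact hsconj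
  have hcsum : ∑ i, (starRingEnd ℂ) (c i) = (starRingEnd ℂ) s := by rw [hs, map_sum]
  have hccsum : ∑ i, c i * (starRingEnd ℂ) (c i) = ((C : ℝ) : ℂ) := by
    rw [hC]; push_cast
    exact Finset.sum_congr rfl fun i _ => by rw [mul_comm, hconj]
  have hccsum' : ∑ i, (starRingEnd ℂ) (c i) * c i = ((C : ℝ) : ℂ) := by
    rw [hC]; push_cast
    exact Finset.sum_congr rfl fun i _ => by rw [hconj]
  have hconjt : ∀ i, (starRingEnd ℂ) (t i)
      = ((starRingEnd ℂ) (c i) - (β:ℂ) * (starRingEnd ℂ) s) / (δ:ℂ) := by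
    intro i
    rw [htdef]
    simp only [map_div₀, map_sub, _root_.map_mul, Complex.conj_ofReal]
  have he1 : ∑ i, t i * (starRingEnd ℂ) (c i) = ((C - β * Sq : ℝ) : ℂ) / (δ:ℂ) := by
    have h1 : ∀ i, t i * (starRingEnd ℂ) (c i)
        = (c i * (starRingEnd ℂ) (c i) - (β:ℂ) * (s * (starRingEnd ℂ) (c i))) / (δ:ℂ) := by
      intro i; rw [htdef]; ring
    rw [Finset.sum_congr rfl fun i _ => h1 i, ← Finset.sum_div, Finset.sum_sub_distrib,
      hccsum, ← Finset.mul_sum, ← Finset.mul_sum, hcsum, hsconj']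
    push_cast; ring
  have he2 : ∑ i, (starRingEnd ℂ) (t i) * c i = ((C - β * Sq : ℝ) : ℂ) / (δ:ℂ) := by
    have h1 : ∀ i, (starRingEnd ℂ) (t i) * c i
        = ((starRingEnd ℂ) (c i) * c i - (β:ℂ) * ((starRingEnd ℂ) s * c i)) / (δ:ℂ) := by
      intro i; rw [hconjt i]; ring
    rw [Finset.sum_congr rfl fun i _ => h1 i, ← Finset.sum_div, Finset.sum_sub_distrib,
      hccsum', ← Finset.mul_sum, ← Finset.mul_sum, ← hs, hsconj]
    push_cast; ring
  have he4 : ∑ i, t i = s * (1 - (β:ℂ) * n) / (δ:ℂ) := by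
    simp only [htdef]
    rw [← Finset.sum_div, Finset.sum_sub_distrib, ← hs, Finset.sum_const,
      Finset.card_univ, Fintype.card_fin, nsmul_eq_mul]
    ring
  have he5 : (starRingEnd ℂ) (∑ i, t i) * (∑ i, t i)
      = ((Sq * (1 - β * n)^2 : ℝ) : ℂ) / (δ:ℂ)^2 := by
    rw [he4]
    have hh : (starRingEnd ℂ) (s * (1 - (β:ℂ) * ↑n) / (δ:ℂ))
        = (starRingEnd ℂ) s * (1 - (β:ℂ) * ↑n) / (δ:ℂ) := by
      simp only [map_div₀, _root_.map_mul, map_sub, _root_.map_one, Complex.conj_ofReal,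
        map_natCast]
    rw [hh, div_mul_div_comm, show (starRingEnd ℂ) s * (1 - (β:ℂ) * ↑n) * (s * (1 - (β:ℂ) * ↑n))
        = ((starRingEnd ℂ) s * s) * (1 - (β:ℂ) * ↑n)^2 from by ring, hsconj]
    push_cast; ring
  have he6 : ∑ i, (starRingEnd ℂ) (t i) * t i
      = ((C - 2*β*Sq + β^2*n*Sq : ℝ) : ℂ) / (δ:ℂ)^2 := by
    have h1 : ∀ i, (starRingEnd ℂ) (t i) * t i
        = ((starRingEnd ℂ) (c i) * c i - (β:ℂ) * ((starRingEnd ℂ) s * c i)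
           - (β:ℂ) * (s * (starRingEnd ℂ) (c i)) + (β:ℂ)^2 * ((starRingEnd ℂ) s * s)) / (δ:ℂ)^2 := by
      intro i; rw [hconjt i, htdef]; ring
    rw [Finset.sum_congr rfl fun i _ => h1 i, ← Finset.sum_div,
      Finset.sum_add_distrib, Finset.sum_sub_distrib, Finset.sum_sub_distrib,
      hccsum', ← Finset.mul_sum, ← Finset.mul_sum, ← Finset.mul_sum, ← Finset.mul_sum,
      ← hs, hcsum, hsconj, hsconj', Finset.sum_const, Finset.card_univ, Fintype.card_fin,
      nsmul_eq_mul]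
    push_cast; ring
  have hg : ∀ i j, ((Complex.normSq (M i j) : ℝ) : ℂ)
      = ((α^2 : ℝ) : ℂ) + ((δ : ℝ) : ℂ) * (if i = j then 1 else 0) := by
    intro i j
    by_cases h : i = j
    · subst h
      rw [hMdiag i, if_pos rfl, mul_one, hδdef]
      push_cast; ring
    · rw [hMoff i j h, if_neg h, mul_zero, add_zero]
  have he3 : ∑ i, ∑ j, (starRingEnd ℂ) (t i) * t j * ((Complex.normSq (M i j) : ℝ) : ℂ)
      = ((α^2 : ℝ) : ℂ) * ((starRingEnd ℂ) (∑ i, t i) * (∑ i, t i))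
        + ((δ : ℝ) : ℂ) * ∑ i, (starRingEnd ℂ) (t i) * t i := by
    have h1 : ∀ i, ∑ j, (starRingEnd ℂ) (t i) * t j * ((Complex.normSq (M i j) : ℝ) : ℂ)
        = ((α^2 : ℝ) : ℂ) * ((starRingEnd ℂ) (t i) * ∑ j, t j)
          + ((δ : ℝ) : ℂ) * ((starRingEnd ℂ) (t i) * t i) := by
      intro i
      have h2 : ∀ j, (starRingEnd ℂ) (t i) * t j * ((Complex.normSq (M i j) : ℝ) : ℂ)
          = ((α^2 : ℝ) : ℂ) * ((starRingEnd ℂ) (t i) * t j)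
            + ((δ : ℝ) : ℂ) * (if i = j then (starRingEnd ℂ) (t i) * t j else 0) := by
        intro j
        rw [hg i j]
        by_cases h : i = j
        · rw [if_pos h, if_pos h]; ring
        · rw [if_neg h, if_neg h]; ring
      rw [Finset.sum_congr rfl fun j _ => h2 j, Finset.sum_add_distrib,
        ← Finset.mul_sum, ← Finset.mul_sum, ← Finset.mul_sum, Finset.sum_ite_eq]
      simp
    rw [Finset.sum_congr rfl fun i _ => h1 i, Finset.sum_add_distrib,
      ← Finset.mul_sum, ← Finset.mul_sum, ← Finset.sum_mul, map_sum]
  have hrealid : P*Q - (C - β*Sq)/δ - (C - β*Sq)/δ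
      + (α^2 * (Sq * (1 - β*(n:ℝ))^2 / δ^2) + δ * ((C - 2*β*Sq + β^2*(n:ℝ)*Sq) / δ^2))
      = P*Q - (C - β*Sq)/δ := by
    rw [hβdef]
    have hδ' : δ ≠ 0 := ne_of_gt hδ
    have hden' : α ^ 2 * (n:ℝ) + δ ≠ 0 := ne_of_gt hden
    field_simp
    ring
  have hcomplex : ∑ p, ∑ q, (starRingEnd ℂ) (D p q) * D p q
      = ((P*Q - (C - β*Sq)/δ : ℝ) : ℂ) := by
    rw [hexp, he1, he2, he3, he5, he6, ← hrealid]
    push_cast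
    ring
  have hreal2 : ∑ p, ∑ q, Complex.normSq (D p q) = P*Q - (C - β*Sq)/δ := by
    have h1 : ((∑ p, ∑ q, Complex.normSq (D p q) : ℝ) : ℂ)
        = ∑ p, ∑ q, (starRingEnd ℂ) (D p q) * D p q := by
      push_cast
      exact Finset.sum_congr rfl fun p _ => Finset.sum_congr rfl fun q _ => (hconj _).symm
    exact_mod_cast h1.trans hcomplex
  have h4 : (C - β*Sq)/δ ≤ P*Q := by
    rw [hreal2] at h0; linarith
  have h3 : C - β*Sq ≤ δ * (P*Q) := by
    rw [div_le_iff₀ hδ] at h4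
    linarith [h4]
  -- finish
  have hco : α^2/(α^2*(n:ℝ) + 1 - α^2) = β := by
    rw [hβdef, hδdef]
    congr 1
    ring
  rw [ge_iff_le, hrhs, hre1, hre2, hco, hnormsb]
  linarith
end

section
/- Let 0 < α < 1, let C be a spherical {α, −α}-code of size n in R^r with Gram matrix M. If x, y ∈ R^n are orthogonal unit eigenvectors of M with nonzero eigenvalues λ and μ respectively, then ∑_{i=1}^n x_i^2 y_i^2 ≤ (1 − α^2)/(2λμ). -/
open Matrix

lemma core_ineq {κ : Type*} [Fintype κ] (A : κ → κ → ℝ) (B C : κ → ℝ) (la mu S α : ℝ)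
    (hB : ∑ k, B k * B k = la) (hC : ∑ k, C k * C k = mu) (hBC : ∑ k, B k * C k = 0)
    (hpC : ∑ k, (∑ l, A k l * B l) * C k = la * mu * S)
    (hqB : ∑ k, (∑ l, A k l * C l) * B k = la * mu * S)
    (hF : ∑ k, ∑ l, A k l ^ 2 = (1 - α ^ 2) * S)
    (hla : 0 < la) (hmu : 0 < mu) (hS : 0 ≤ S) (hα2 : α ^ 2 < 1) :
    S ≤ (1 - α ^ 2) / (2 * la * mu) := by
  set p : κ → ℝ := fun k => ∑ l, A k l * B l with hp
  set q : κ → ℝ := fun k => ∑ l, A k l * C l with hq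
  have cs1 : (la * mu * S) ^ 2 ≤ (∑ k, p k ^ 2) * mu := by
    have h := Finset.sum_mul_sq_le_sq_mul_sq Finset.univ p C
    rw [hpC] at h
    calc (la*mu*S)^2 ≤ (∑ k, p k ^2) * ∑ k, C k ^2 := h
      _ = (∑ k, p k ^2) * mu := by rw [← hC]; congr 1; exact Finset.sum_congr rfl fun k _ => (sq (C k)).symm ▸ by ring
  have cs2 : (la * mu * S) ^ 2 ≤ (∑ k, q k ^ 2) * la := by
    have h := Finset.sum_mul_sq_le_sq_mul_sq Finset.univ q B
    rw [hqB] at h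
    calc (la*mu*S)^2 ≤ (∑ k, q k ^2) * ∑ k, B k ^2 := h
      _ = (∑ k, q k ^2) * la := by rw [← hB]; congr 1; exact Finset.sum_congr rfl fun k _ => by ring
  have hnn : (0:ℝ) ≤ ∑ k, ∑ l, (A k l - (p k / la) * B l - (q k / mu) * C l) ^ 2 :=
    Finset.sum_nonneg fun k _ => Finset.sum_nonneg fun l _ => sq_nonneg _
  have expand : ∑ k, ∑ l, (A k l - (p k / la) * B l - (q k / mu) * C l) ^ 2
      = (∑ k, ∑ l, A k l ^ 2) - (∑ k, p k ^ 2) / la - (∑ k, q k ^ 2) / mu := by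
    have hk : ∀ k, ∑ l, (A k l - (p k / la) * B l - (q k / mu) * C l) ^ 2
        = (∑ l, A k l ^ 2) - p k ^ 2 / la - q k ^ 2 / mu := by
      intro k
      have e1 : ∀ l, (A k l - (p k / la) * B l - (q k / mu) * C l) ^ 2
          = A k l ^ 2 + (p k / la) ^ 2 * (B l * B l) + (q k / mu) ^ 2 * (C l * C l)
            - 2 * (p k / la) * (A k l * B l) - 2 * (q k / mu) * (A k l * C l)
            + 2 * ((p k / la) * (q k / mu)) * (B l * C l) := fun l => by ring
      rw [Finset.sum_congr rfl fun l _ => e1 l]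
      rw [Finset.sum_add_distrib, Finset.sum_sub_distrib, Finset.sum_sub_distrib,
        Finset.sum_add_distrib, Finset.sum_add_distrib]
      simp only [← Finset.mul_sum]
      rw [hB, hC, hBC]
      have hp' : ∑ l, A k l * B l = p k := rfl
      have hq' : ∑ l, A k l * C l = q k := rfl
      rw [hp', hq']
      field_simp
      ring
    rw [Finset.sum_congr rfl fun k _ => hk k, Finset.sum_sub_distrib, Finset.sum_sub_distrib,
      ← Finset.sum_div, ← Finset.sum_div]
  have h0 : (∑ k, p k ^ 2) / la + (∑ k, q k ^ 2) / mu ≤ (1 - α ^ 2) * S := by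
    rw [expand, hF] at hnn; linarith
  have hP : la * mu * S ^ 2 ≤ (∑ k, p k ^ 2) / la := by
    rw [le_div_iff₀ hla]; nlinarith [cs1, hmu]
  have hQ : la * mu * S ^ 2 ≤ (∑ k, q k ^ 2) / mu := by
    rw [le_div_iff₀ hmu]; nlinarith [cs2, hla]
  have key : 2 * la * mu * S ^ 2 ≤ (1 - α ^ 2) * S := by linarith
  rcases eq_or_lt_of_le hS with h | h
  · rw [← h]
    exact div_nonneg (by nlinarith) (by positivity)
  · rw [le_div_iff₀ (by positivity)]
    nlinarith [key, h]


lemma sum_swap_helper {ι κ : Type*} [Fintype ι] [Fintype κ] (v : ι → κ → ℝ) (w : ι → ℝ)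
    (D : κ → ℝ) : ∑ k, (∑ i, w i * v i k) * D k = ∑ i, w i * (∑ k, v i k * D k) := by
  simp only [Finset.sum_mul, Finset.mul_sum]
  rw [Finset.sum_comm]
  exact Finset.sum_congr rfl fun i _ => Finset.sum_congr rfl fun k _ => by ring


lemma pair_helper {ι κ : Type*} [Fintype ι] [Fintype κ] (v : ι → κ → ℝ) (w u : ι → ℝ) :
    ∑ k, (∑ i, w i * v i k) * (∑ j, u j * v j k)
      = ∑ i, ∑ j, w i * u j * (∑ k, v i k * v j k) := by
  rw [sum_swap_helper v w (fun k => ∑ j, u j * v j k)]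
  refine Finset.sum_congr rfl fun i _ => ?_
  have h : ∑ k, v i k * (∑ j, u j * v j k) = ∑ j, u j * ∑ k, v i k * v j k := by
    simp only [Finset.mul_sum]
    rw [Finset.sum_comm]
    exact Finset.sum_congr rfl fun j _ => Finset.sum_congr rfl fun k _ => by ring
  rw [h, Finset.mul_sum]
  exact Finset.sum_congr rfl fun j _ => by ring

/-- Eigenvector inequality for spherical `{α, −α}`-codes: for orthogonal unit eigenvectors
`x, y` of the Gram matrix with nonzero eigenvalues `lam, mu`,
`∑ x_i² y_i² ≤ (1 − α²)/(2 lam mu)`. -/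
theorem stmt4 (r n : ℕ) (α : ℝ) (hα0 : 0 < α) (hα1 : α < 1)
    (v : Fin n → EuclideanSpace ℝ (Fin r)) (hv : ∀ i, ‖v i‖ = 1)
    (hangle : ∀ i j, i ≠ j → |(inner ℝ (v i) (v j) : ℝ)| = α)
    (M : Matrix (Fin n) (Fin n) ℝ) (hM : ∀ i j, M i j = inner ℝ (v i) (v j))
    (x y : Fin n → ℝ) (lam mu : ℝ) (hlam : lam ≠ 0) (hmu : mu ≠ 0)
    (hx : M.mulVec x = lam • x) (hy : M.mulVec y = mu • y)
    (hxu : x ⬝ᵥ x = 1) (hyu : y ⬝ᵥ y = 1) (hxy : x ⬝ᵥ y = 0) :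
    ∑ i, x i ^ 2 * y i ^ 2 ≤ (1 - α ^ 2) / (2 * lam * mu) := by
  classical
  have hinner : ∀ i j, (inner ℝ (v i) (v j) : ℝ) = ∑ k, v i k * v j k := by
    intro i j
    simp [PiLp.inner_apply, RCLike.inner_apply, conj_trivial, mul_comm]
  have hMentry : ∀ i j, M i j = ∑ k, v i k * v j k := fun i j => by rw [hM i j, hinner]
  have hMdiag : ∀ i, M i i = 1 := by
    intro i
    rw [hM i i, real_inner_self_eq_norm_sq, hv i, one_pow]
  have hMsq : ∀ i j, i ≠ j → (M i j) ^ 2 = α ^ 2 := by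
    intro i j hij
    have h := hangle i j hij
    rw [hM i j]
    calc (inner ℝ (v i) (v j) : ℝ) ^ 2 = |(inner ℝ (v i) (v j) : ℝ)| ^ 2 := (sq_abs _).symm
      _ = α ^ 2 := by rw [h]
  -- eigen equations in coordinates
  have hxM : ∀ i, ∑ j, M i j * x j = lam * x i := by
    intro i
    have h := congrFun hx i
    simpa [Matrix.mulVec, dotProduct] using h
  have hyM : ∀ i, ∑ j, M i j * y j = mu * y i := by
    intro i
    have h := congrFun hy i
    simpa [Matrix.mulVec, dotProduct] using h
  have f1 : ∀ i, ∑ k, v i k * (∑ j, x j * v j k) = lam * x i := by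
    intro i
    have h : ∑ k, v i k * (∑ j, x j * v j k) = ∑ j, M i j * x j := by
      simp only [Finset.mul_sum]
      rw [Finset.sum_comm]
      refine Finset.sum_congr rfl fun j _ => ?_
      rw [hMentry i j, Finset.sum_mul]
      exact Finset.sum_congr rfl fun k _ => by ring
    rw [h, hxM i]
  have f2 : ∀ i, ∑ k, v i k * (∑ j, y j * v j k) = mu * y i := by
    intro i
    have h : ∑ k, v i k * (∑ j, y j * v j k) = ∑ j, M i j * y j := by
      simp only [Finset.mul_sum]
      rw [Finset.sum_comm]
      refine Finset.sum_congr rfl fun j _ => ?_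
      rw [hMentry i j, Finset.sum_mul]
      exact Finset.sum_congr rfl fun k _ => by ring
    rw [h, hyM i]
  have hxx : ∑ i, x i * x i = 1 := by simpa [dotProduct] using hxu
  have hyy : ∑ i, y i * y i = 1 := by simpa [dotProduct] using hyu
  have hxy' : ∑ i, x i * y i = 0 := by simpa [dotProduct] using hxy
  -- the vectors and matrix
  set S : ℝ := ∑ i, x i ^ 2 * y i ^ 2 with hSdef
  have hS : 0 ≤ S := Finset.sum_nonneg fun i _ => by positivity
  -- f3 : ∑ B² = lam
  have f3 : ∑ k, (∑ i, x i * v i k) * (∑ i, x i * v i k) = lam := by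
    rw [sum_swap_helper (fun i k => v i k) x]
    calc ∑ i, x i * (∑ k, v i k * (∑ j, x j * v j k)) = ∑ i, x i * (lam * x i) :=
          Finset.sum_congr rfl fun i _ => by rw [f1 i]
      _ = lam * ∑ i, x i * x i := by rw [Finset.mul_sum]; exact Finset.sum_congr rfl fun i _ => by ring
      _ = lam := by rw [hxx, mul_one]
  have f4 : ∑ k, (∑ i, y i * v i k) * (∑ i, y i * v i k) = mu := by
    rw [sum_swap_helper (fun i k => v i k) y]
    calc ∑ i, y i * (∑ k, v i k * (∑ j, y j * v j k)) = ∑ i, y i * (mu * y i) :=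
          Finset.sum_congr rfl fun i _ => by rw [f2 i]
      _ = mu * ∑ i, y i * y i := by rw [Finset.mul_sum]; exact Finset.sum_congr rfl fun i _ => by ring
      _ = mu := by rw [hyy, mul_one]
  have f5 : ∑ k, (∑ i, x i * v i k) * (∑ i, y i * v i k) = 0 := by
    rw [sum_swap_helper (fun i k => v i k) x]
    calc ∑ i, x i * (∑ k, v i k * (∑ j, y j * v j k)) = ∑ i, x i * (mu * y i) :=
          Finset.sum_congr rfl fun i _ => by rw [f2 i]
      _ = mu * ∑ i, x i * y i := by rw [Finset.mul_sum]; exact Finset.sum_congr rfl fun i _ => by ring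
      _ = 0 := by rw [hxy', mul_zero]
  have hla : 0 < lam := by
    rcases lt_or_eq_of_le (Finset.sum_nonneg fun k (_ : k ∈ Finset.univ) =>
      mul_self_nonneg ((∑ i, x i * v i k))) with h | h
    · rwa [f3] at h
    · exact absurd (f3.symm.trans h.symm) hlam
  have hmu' : 0 < mu := by
    rcases lt_or_eq_of_le (Finset.sum_nonneg fun k (_ : k ∈ Finset.univ) =>
      mul_self_nonneg ((∑ i, y i * v i k))) with h | h
    · rwa [f4] at h
    · exact absurd (f4.symm.trans h.symm) hmu
  -- hpC
  have hpC : ∑ k, (∑ l, (∑ i, (x i * y i) * v i k * v i l) * (∑ i, x i * v i l))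
      * (∑ i, y i * v i k) = lam * mu * S := by
    have p_eq : ∀ k, ∑ l, (∑ i, (x i * y i) * v i k * v i l) * (∑ i, x i * v i l)
        = ∑ i, (lam * (x i * x i * y i)) * v i k := by
      intro k
      rw [sum_swap_helper (fun i l => v i l) (fun i => x i * y i * v i k)
        (fun l => ∑ i, x i * v i l)]
      refine Finset.sum_congr rfl fun i _ => ?_
      rw [f1 i]; ring
    rw [Finset.sum_congr rfl fun k _ => congrArg (· * (∑ i, y i * v i k)) (p_eq k)]
    rw [sum_swap_helper (fun i k => v i k) (fun i => lam * (x i * x i * y i))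
      (fun k => ∑ i, y i * v i k)]
    calc ∑ i, lam * (x i * x i * y i) * (∑ k, v i k * (∑ j, y j * v j k))
        = ∑ i, lam * (x i * x i * y i) * (mu * y i) :=
          Finset.sum_congr rfl fun i _ => by rw [f2 i]
      _ = lam * mu * S := by rw [hSdef, Finset.mul_sum]; exact Finset.sum_congr rfl fun i _ => by ring
  -- hqB
  have hqB : ∑ k, (∑ l, (∑ i, (x i * y i) * v i k * v i l) * (∑ i, y i * v i l))
      * (∑ i, x i * v i k) = lam * mu * S := by
    have q_eq : ∀ k, ∑ l, (∑ i, (x i * y i) * v i k * v i l) * (∑ i, y i * v i l)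
        = ∑ i, (mu * (x i * y i * y i)) * v i k := by
      intro k
      rw [sum_swap_helper (fun i l => v i l) (fun i => x i * y i * v i k)
        (fun l => ∑ i, y i * v i l)]
      refine Finset.sum_congr rfl fun i _ => ?_
      rw [f2 i]; ring
    rw [Finset.sum_congr rfl fun k _ => congrArg (· * (∑ i, x i * v i k)) (q_eq k)]
    rw [sum_swap_helper (fun i k => v i k) (fun i => mu * (x i * y i * y i))
      (fun k => ∑ i, x i * v i k)]
    calc ∑ i, mu * (x i * y i * y i) * (∑ k, v i k * (∑ j, x j * v j k))
        = ∑ i, mu * (x i * y i * y i) * (lam * x i) :=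
          Finset.sum_congr rfl fun i _ => by rw [f1 i]
      _ = lam * mu * S := by rw [hSdef, Finset.mul_sum]; exact Finset.sum_congr rfl fun i _ => by ring
  -- hF
  have hF : ∑ k, ∑ l, (∑ i, (x i * y i) * v i k * v i l) ^ 2 = (1 - α ^ 2) * S := by
    have hF1 : ∑ k, ∑ l, (∑ i, (x i * y i) * v i k * v i l) ^ 2
        = ∑ k, ∑ i, ∑ j, ((x i * y i) * v i k) * ((x j * y j) * v j k) * M i j := by
      refine Finset.sum_congr rfl fun k _ => ?_
      calc ∑ l, (∑ i, (x i * y i) * v i k * v i l) ^ 2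
          = ∑ l, (∑ i, ((x i * y i) * v i k) * v i l) * (∑ j, ((x j * y j) * v j k) * v j l) :=
            Finset.sum_congr rfl fun l _ => by rw [sq]
        _ = ∑ i, ∑ j, ((x i * y i) * v i k) * ((x j * y j) * v j k) * (∑ l, v i l * v j l) :=
            pair_helper (fun i l => v i l) _ _
        _ = ∑ i, ∑ j, ((x i * y i) * v i k) * ((x j * y j) * v j k) * M i j := by
            refine Finset.sum_congr rfl fun i _ => Finset.sum_congr rfl fun j _ => ?_
            rw [← hMentry i j]
    rw [hF1, Finset.sum_comm]
    have hF2 : ∀ i, ∑ k, ∑ j, ((x i * y i) * v i k) * ((x j * y j) * v j k) * M i j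
        = (1 - α ^ 2) * (x i ^ 2 * y i ^ 2) := by
      intro i
      rw [Finset.sum_comm]
      have hin : ∀ j, ∑ k, ((x i * y i) * v i k) * ((x j * y j) * v j k) * M i j
          = (x i * y i) * (x j * y j) * (M i j) ^ 2 := by
        intro j
        calc ∑ k, ((x i * y i) * v i k) * ((x j * y j) * v j k) * M i j
            = ((x i * y i) * (x j * y j) * M i j) * ∑ k, v i k * v j k := by
              rw [Finset.mul_sum]; exact Finset.sum_congr rfl fun k _ => by ring
          _ = (x i * y i) * (x j * y j) * (M i j) ^ 2 := by rw [← hMentry i j]; ring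
      simp only [hin]
      rw [← Finset.add_sum_erase Finset.univ (fun j => (x i * y i) * (x j * y j) * (M i j) ^ 2) (Finset.mem_univ i)]
      have h2 : ∑ j ∈ Finset.univ.erase i, (x i * y i) * (x j * y j) * (M i j) ^ 2
          = α ^ 2 * ((x i * y i) * ∑ j ∈ Finset.univ.erase i, (x j * y j)) := by
        rw [Finset.mul_sum, Finset.mul_sum]
        apply Finset.sum_congr rfl
        intro j hj
        rw [hMsq i j (Finset.ne_of_mem_erase hj).symm]; ring
      have h3 : ∑ j ∈ Finset.univ.erase i, (x j * y j) = -(x i * y i) := by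
        have h4 := Finset.add_sum_erase Finset.univ (fun j => x j * y j) (Finset.mem_univ i)
        rw [hxy'] at h4
        linarith
      rw [h2, h3, hMdiag i]
      ring
    rw [Finset.sum_congr rfl fun i _ => hF2 i, hSdef, Finset.mul_sum]
  exact core_ineq (fun k l => ∑ i, (x i * y i) * v i k * v i l)
    (fun k => ∑ i, x i * v i k) (fun k => ∑ i, y i * v i k) lam mu S α
    f3 f4 f5 hpC hqB hF hla hmu' hS (by nlinarith)
end

section
/- Let 0 < α < 1, let C be a spherical {α, −α}-code of size n in R^r with Gram matrix M. Then for all i ∈ [n] and x ∈ R^n: ((1−α^2)/(2α^2))(<x, Mx> − (Mx)_i^2) + (1/(α^2 n + 1 − α^2)) (M^2 x)_i^2 ≥ <x, M^2 x>. -/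
open Matrix

open Finset

set_option maxHeartbeats 1600000

open Matrix Finset

/-- Two-vector Cauchy-Schwarz addition lemma. -/
lemma cs_add (a b X Y p d : ℝ) (ha : 0 ≤ a) (hb : 0 ≤ b) (hX : 0 ≤ X) (hY : 0 ≤ Y)
    (hp : p^2 ≤ a*b) (hd : d^2 ≤ X*Y) : (p+d)^2 ≤ (a+X)*(b+Y) := by
  have hw : 0 ≤ a*Y + b*X := by positivity
  have hsq : (2*p*d)^2 ≤ (a*Y + b*X)^2 := by
    nlinarith [sq_nonneg (a*Y - b*X), mul_nonneg hX hY, mul_nonneg ha hb]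
  have h2pd : 2*p*d ≤ a*Y + b*X := by nlinarith [hsq, hw]
  nlinarith [hp, hd, h2pd]

/-- Scalar endgame for the spherical code inequality. -/
lemma key_ineq (α m τ L A s h w1 N Qcc Q11 Qc1 : ℝ)
    (hα : 0 < α) (hα1 : α < 1) (hm : 0 ≤ m) (hτ : τ = α^2*m+1) (hL : 0 < L)
    (E1 : Qcc + 2*α^2*w1 = α^2*(1-α^2)*s^2 + (1-α^2)*A)
    (E2 : Q11 + 2*α^2*N = α^2*(1-α^2)*m^2 + (1-α^2)*m)
    (E3 : Qc1 + 2*α^2*h = α^2*(1-α^2)*s*m + (1-α^2)*s)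
    (P1 : 0 ≤ Qcc) (P2 : 0 ≤ Q11)
    (C1 : A^2 ≤ w1*L) (C2 : Qc1^2 ≤ Qcc*Q11) (C3 : s^2 ≤ N*L)
    (G : (h*L - A*s)^2 ≤ (w1*L - A^2)*(N*L - s^2)) :
    2*α^2*τ*A ≤ (1-α^2)*L*τ + 2*α^4*s^2 := by
  have hβpos : (0:ℝ) < 1 - α^2 := by nlinarith
  have hτpos : 0 < τ := by nlinarith
  have hXnn : (0:ℝ) ≤ w1*L - A^2 := by linarith
  have hYnn : (0:ℝ) ≤ N*L - s^2 := by linarith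
  -- box collapse
  have key : (s*L*(α^2*(1-α^2)*m*L - (2*α^2*A - (1-α^2)*L)))^2
      ≤ (α^2*(1-α^2)*s^2*L^2 - A*(2*α^2*A - (1-α^2)*L)*L)
        * ((1-α^2)*m*τ*L^2 - 2*α^2*L*s^2) := by
    have hK1e : α^2*(1-α^2)*s^2*L^2 - A*(2*α^2*A - (1-α^2)*L)*L
        = Qcc*L^2 + 2*α^2*L*(w1*L - A^2) := by linear_combination (-L^2) * E1
    have hK2e : (1-α^2)*m*τ*L^2 - 2*α^2*L*s^2
        = Q11*L^2 + 2*α^2*L*(N*L - s^2) := by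
      rw [hτ]; linear_combination (-L^2) * E2
    have hq : Qc1*L^2 = s*L*(α^2*(1-α^2)*m*L - (2*α^2*A - (1-α^2)*L))
        - 2*α^2*L*(h*L - A*s) := by linear_combination L^2 * E3
    have h1 : (Qc1*L^2)^2 ≤ (Qcc*L^2)*(Q11*L^2) := by
      calc (Qc1*L^2)^2 = Qc1^2*L^4 := by ring
        _ ≤ (Qcc*Q11)*L^4 := mul_le_mul_of_nonneg_right C2 (by positivity)
        _ = (Qcc*L^2)*(Q11*L^2) := by ring
    have h2 : (2*α^2*L*(h*L - A*s))^2
        ≤ (2*α^2*L*(w1*L - A^2))*(2*α^2*L*(N*L - s^2)) := by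
      calc (2*α^2*L*(h*L - A*s))^2 = (2*α^2*L)^2 * (h*L-A*s)^2 := by ring
        _ ≤ (2*α^2*L)^2 * ((w1*L - A^2)*(N*L - s^2)) :=
            mul_le_mul_of_nonneg_left G (by positivity)
        _ = (2*α^2*L*(w1*L - A^2))*(2*α^2*L*(N*L - s^2)) := by ring
    have h3 := cs_add (Qcc*L^2) (Q11*L^2) (2*α^2*L*(w1*L - A^2)) (2*α^2*L*(N*L - s^2))
      (Qc1*L^2) (2*α^2*L*(h*L - A*s))
      (by positivity) (by positivity) (by positivity) (by positivity) h1 h2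
    calc (s*L*(α^2*(1-α^2)*m*L - (2*α^2*A - (1-α^2)*L)))^2
        = (Qc1*L^2 + 2*α^2*L*(h*L-A*s))^2 := by rw [hq]; ring
      _ ≤ (Qcc*L^2 + 2*α^2*L*(w1*L - A^2))*(Q11*L^2 + 2*α^2*L*(N*L - s^2)) := h3
      _ = _ := by rw [hK1e, hK2e]
  have hK1nn : 0 ≤ α^2*(1-α^2)*s^2*L^2 - A*(2*α^2*A - (1-α^2)*L)*L := by
    have : α^2*(1-α^2)*s^2*L^2 - A*(2*α^2*A - (1-α^2)*L)*L
        = Qcc*L^2 + 2*α^2*L*(w1*L - A^2) := by linear_combination (-L^2) * E1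
    rw [this]; positivity
  have goal' : (2*α^2*A - (1-α^2)*L)*τ ≤ 2*α^4*s^2 := by
    rcases le_or_gt (2*α^2*A - (1-α^2)*L) 0 with hDle | hDpos
    · calc (2*α^2*A - (1-α^2)*L)*τ ≤ 0 := mul_nonpos_of_nonpos_of_nonneg hDle (le_of_lt hτpos)
        _ ≤ 2*α^4*s^2 := by positivity
    rcases le_or_gt (α^2*(1-α^2)*m*L - (2*α^2*A - (1-α^2)*L)) 0 with hule | hupos
    · -- big D case : use K1 ≥ 0
      have hADle : A*(2*α^2*A - (1-α^2)*L) ≤ α^2*(1-α^2)*s^2*L := by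
        have h9 : (A*(2*α^2*A - (1-α^2)*L))*L ≤ (α^2*(1-α^2)*s^2*L)*L := by nlinarith [hK1nn]
        exact le_of_mul_le_mul_right h9 hL
      have h5 : ((1-α^2)*L)*((2*α^2*A - (1-α^2)*L)*τ) ≤ ((1-α^2)*L)*(2*α^4*s^2) := by
        have hDge : α^2*(1-α^2)*m*L ≤ 2*α^2*A - (1-α^2)*L := by linarith
        have h10 := mul_le_mul_of_nonneg_right hDge (le_of_lt hDpos)
        have h11 : 2*α^2*(A*(2*α^2*A - (1-α^2)*L)) ≤ 2*α^2*(α^2*(1-α^2)*s^2*L) :=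
          mul_le_mul_of_nonneg_left hADle (by positivity)
        rw [hτ]; nlinarith [h10, h11]
      exact le_of_mul_le_mul_left h5 (by positivity)
    · -- middle case
      have keyL2 : (α^2*s^2)*(α^2*(1-α^2)*m*L - (2*α^2*A - (1-α^2)*L))^2
          ≤ α^2*((α^2*(1-α^2)*s^2*L - A*(2*α^2*A - (1-α^2)*L))
            *((1-α^2)*m*(α^2*m+1)*L - 2*α^2*s^2)) := by
        have hdiv : (s^2*(α^2*(1-α^2)*m*L - (2*α^2*A - (1-α^2)*L))^2)*L^2
            ≤ (((α^2*(1-α^2)*s^2*L - A*(2*α^2*A - (1-α^2)*L))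
              *((1-α^2)*m*(α^2*m+1)*L - 2*α^2*s^2)))*L^2 := by
          calc (s^2*(α^2*(1-α^2)*m*L - (2*α^2*A - (1-α^2)*L))^2)*L^2
              = (s*L*(α^2*(1-α^2)*m*L - (2*α^2*A - (1-α^2)*L)))^2 := by ring
            _ ≤ (α^2*(1-α^2)*s^2*L^2 - A*(2*α^2*A - (1-α^2)*L)*L)
                * ((1-α^2)*m*τ*L^2 - 2*α^2*L*s^2) := key
            _ = (((α^2*(1-α^2)*s^2*L - A*(2*α^2*A - (1-α^2)*L))
                *((1-α^2)*m*(α^2*m+1)*L - 2*α^2*s^2)))*L^2 := by rw [hτ]; ring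
        have h7 := le_of_mul_le_mul_right hdiv (by positivity : (0:ℝ) < L^2)
        nlinarith [h7, sq_nonneg α]
      have ident : 2*α^2*((α^2*s^2)*(α^2*(1-α^2)*m*L - (2*α^2*A - (1-α^2)*L))^2
          - α^2*((α^2*(1-α^2)*s^2*L - A*(2*α^2*A - (1-α^2)*L))
            *((1-α^2)*m*(α^2*m+1)*L - 2*α^2*s^2)))
          = (1-α^2)*L*(2*α^4*s^2 - (2*α^2*A - (1-α^2)*L)*(α^2*m+1))
            *((2*α^4*s^2 - (2*α^2*A - (1-α^2)*L)*(α^2*m+1))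
              - (α^2*(1-α^2)*m*L - (2*α^2*A - (1-α^2)*L))) := by ring
      have hprod : (1-α^2)*L*(2*α^4*s^2 - (2*α^2*A - (1-α^2)*L)*(α^2*m+1))
          *((2*α^4*s^2 - (2*α^2*A - (1-α^2)*L)*(α^2*m+1))
            - (α^2*(1-α^2)*m*L - (2*α^2*A - (1-α^2)*L))) ≤ 0 := by
        rw [← ident]; nlinarith [keyL2]
      rw [hτ]
      by_contra hcon
      push_neg at hcon
      have htneg : 2*α^4*s^2 - (2*α^2*A - (1-α^2)*L)*(α^2*m+1) < 0 := by linarith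
      have h6 : (2*α^4*s^2 - (2*α^2*A - (1-α^2)*L)*(α^2*m+1))
          - (α^2*(1-α^2)*m*L - (2*α^2*A - (1-α^2)*L)) < 0 := by linarith
      nlinarith [hprod, mul_pos (mul_pos hβpos hL)
        (mul_pos (neg_pos.mpr htneg) (neg_pos.mpr h6))]
  nlinarith [goal']

lemma inner_sum_sum' {E : Type*} [NormedAddCommGroup E] [InnerProductSpace ℝ E] {n : ℕ}
    (e f : Fin n → ℝ) (w w' : Fin n → E) :
    (inner ℝ (∑ j, e j • w j) (∑ k, f k • w' k) : ℝ) = ∑ j, ∑ k, e j * f k * inner ℝ (w j) (w' k) := by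
  rw [sum_inner]
  refine Finset.sum_congr rfl fun j _ => ?_
  rw [real_inner_smul_left, inner_sum, Finset.mul_sum]
  refine Finset.sum_congr rfl fun k _ => ?_
  rw [real_inner_smul_right]; ring

noncomputable def tens {r n : ℕ} (u : Fin n → EuclideanSpace ℝ (Fin r)) (j : Fin n) :
    EuclideanSpace ℝ (Fin r × Fin r) :=
  WithLp.toLp 2 (fun pq : Fin r × Fin r => u j pq.1 * u j pq.2)

lemma inner_tens {r n : ℕ} (u : Fin n → EuclideanSpace ℝ (Fin r)) (j k : Fin n) :
    (inner ℝ (tens u j) (tens u k) : ℝ) = (inner ℝ (u j) (u k) : ℝ)^2 := by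
  simp only [PiLp.inner_apply, RCLike.inner_apply, conj_trivial, tens, PiLp.toLp_apply]
  rw [sq, Finset.sum_mul_sum, Fintype.sum_prod_type]
  refine Finset.sum_congr rfl fun p _ => Finset.sum_congr rfl fun q _ => by ring

lemma double_sum_eval {n : ℕ} (f f' g : Fin n → ℝ) (K C : ℝ) :
    ∑ j, ∑ k, (K * (f j * f' k) + (if j = k then C * g j else 0))
      = K * ((∑ j, f j) * (∑ k, f' k)) + C * ∑ j, g j := by
  have h1 : ∀ j, ∑ k, (K * (f j * f' k) + (if j = k then C * g j else 0))
      = (K * f j) * (∑ k, f' k) + C * g j := fun j => by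
    rw [Finset.sum_add_distrib]
    congr 1
    · rw [Finset.mul_sum]; exact Finset.sum_congr rfl fun k _ => by ring
    · simp
  rw [Finset.sum_congr rfl fun j _ => h1 j, Finset.sum_add_distrib, ← Finset.sum_mul,
    ← Finset.mul_sum, ← Finset.mul_sum]
  ring

/-- Standard-basis-vector inequality for spherical `{α, −α}`-codes. -/
theorem stmt5 (r n : ℕ) (α : ℝ) (hα0 : 0 < α) (hα1 : α < 1)
    (v : Fin n → EuclideanSpace ℝ (Fin r)) (hv : ∀ i, ‖v i‖ = 1)
    (hangle : ∀ i j, i ≠ j → |(inner ℝ (v i) (v j) : ℝ)| = α)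
    (M : Matrix (Fin n) (Fin n) ℝ) (hM : ∀ i j, M i j = inner ℝ (v i) (v j))
    (i : Fin n) (x : Fin n → ℝ) :
    (1 - α ^ 2) / (2 * α ^ 2) * (x ⬝ᵥ M.mulVec x - (M.mulVec x i) ^ 2)
      + 1 / (α ^ 2 * n + 1 - α ^ 2) * ((M * M).mulVec x i) ^ 2
      ≥ x ⬝ᵥ (M * M).mulVec x := by
  have hn : (1:ℝ) ≤ n := by exact_mod_cast i.pos
  have hα2 : (0:ℝ) < α^2 := by positivity
  have hβpos : (0:ℝ) < 1 - α^2 := by nlinarith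
  have hvv : ∀ j, (inner ℝ (v j) (v j) : ℝ) = 1 := fun j => by
    rw [real_inner_self_eq_norm_sq, hv]; norm_num
  have hMsym : ∀ j k, M j k = M k j := fun j k => by rw [hM, hM, real_inner_comm]
  have hMsq2 : ∀ j k, j ≠ k → (M j k)^2 = α^2 := fun j k hjk => by
    rw [hM, ← sq_abs, hangle j k hjk]
  have hMii : M i i = 1 := by rw [hM, hvv]
  -- the vector z and coordinates a
  obtain ⟨z, hz⟩ : ∃ z : EuclideanSpace ℝ (Fin r), z = ∑ k, x k • v k := ⟨_, rfl⟩
  obtain ⟨a, ha⟩ : ∃ a : Fin n → ℝ, a = fun j => (inner ℝ (v j) z : ℝ) := ⟨_, rfl⟩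
  have hMx : ∀ j, M.mulVec x j = a j := fun j => by
    rw [ha]
    simp only [Matrix.mulVec, dotProduct, hz, inner_sum, real_inner_smul_right]
    exact Finset.sum_congr rfl fun k _ => by rw [hM]; ring
  have hdot1 : x ⬝ᵥ M.mulVec x = (inner ℝ z z : ℝ) := by
    have h2 : (inner ℝ z z : ℝ) = ∑ j, x j * a j := by
      nth_rewrite 1 [hz]
      rw [sum_inner]
      refine Finset.sum_congr rfl fun j _ => ?_
      rw [real_inner_smul_left]
      simp only [ha]
    rw [h2]
    exact Finset.sum_congr rfl fun j _ => by rw [hMx]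
  have hM2 : ∀ j, (M*M).mulVec x j = ∑ k, M j k * a k := fun j => by
    rw [← Matrix.mulVec_mulVec, show M.mulVec x = a from funext hMx]
    simp [Matrix.mulVec, dotProduct]
  have hdot2 : x ⬝ᵥ (M*M).mulVec x = ∑ k, (a k)^2 := by
    calc x ⬝ᵥ (M*M).mulVec x = ∑ j, x j * ∑ k, M j k * a k := by
          exact Finset.sum_congr rfl fun j _ => by rw [hM2]
      _ = ∑ j, ∑ k, a k * (M k j * x j) := by
          refine Finset.sum_congr rfl fun j _ => ?_
          rw [Finset.mul_sum]
          exact Finset.sum_congr rfl fun k _ => by rw [hMsym j k]; ring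
      _ = ∑ k, ∑ j, a k * (M k j * x j) := Finset.sum_comm
      _ = ∑ k, (a k)^2 := by
          refine Finset.sum_congr rfl fun k _ => ?_
          rw [← Finset.mul_sum, show ∑ j, M k j * x j = a k from hMx k]; ring
  -- the cap vectors
  obtain ⟨ε, hε⟩ : ∃ ε : Fin n → ℝ, ε = fun j => if j = i then 0 else M i j / α := ⟨_, rfl⟩
  obtain ⟨u, hu⟩ : ∃ u : Fin n → EuclideanSpace ℝ (Fin r),
      u = fun j => ε j • (v j - M i j • v i) := ⟨_, rfl⟩
  obtain ⟨z', hz'⟩ : ∃ z'' : EuclideanSpace ℝ (Fin r), z'' = z - a i • v i := ⟨_, rfl⟩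
  obtain ⟨c, hc⟩ : ∃ c : Fin n → ℝ, c = fun j => (inner ℝ (u j) z' : ℝ) := ⟨_, rfl⟩
  have hεi : ε i = 0 := by rw [hε]; simp
  have hεsq : ∀ j, j ≠ i → (ε j)^2 = 1 := fun j hj => by
    rw [hε]; simp only [if_neg hj]
    rw [div_pow, hMsq2 i j (fun h => hj h.symm)]
    field_simp
  have hui : u i = 0 := by rw [hu]; simp [hεi]
  have hci : c i = 0 := by rw [hc]; simp [hui]
  have hviz' : (inner ℝ (v i) z' : ℝ) = 0 := by
    rw [hz', inner_sub_right, real_inner_smul_right, hvv, ha]; ring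
  have hinneru : ∀ j k, (inner ℝ (u j) (u k) : ℝ) = ε j * ε k * (M j k - M i j * M i k) := by
    intro j k
    rw [hu]
    simp only [real_inner_smul_left, real_inner_smul_right, inner_sub_left, inner_sub_right]
    simp only [← hM]
    rw [hMii, hMsym j i]
    ring
  have hMε : ∀ j, j ≠ i → M i j = α * ε j := fun j hj => by
    rw [hε]; simp only [if_neg hj]; field_simp
  have hMiε : ∀ j, M i j * ε j = α * (ε j)^2 := by
    intro j
    by_cases hj : j = i
    · subst hj; rw [hεi]; ring
    · rw [hMε j hj]; ring
  have hεc : ∀ j, (ε j)^2 * c j = c j := by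
    intro j
    by_cases hj : j = i
    · subst hj; rw [hci]; ring
    · rw [hεsq j hj]; ring
  have hεc2 : ∀ j, (ε j)^2 * (c j)^2 = (c j)^2 := fun j => by
    by_cases hj : j = i
    · subst hj; rw [hci]; ring
    · rw [hεsq j hj]; ring
  -- decomposition of coordinates
  have hdec : ∀ j, a j = M i j * a i + ε j * c j := by
    intro j
    by_cases hj : j = i
    · subst hj; rw [hMii, hci]; ring
    · have h1 : ε j * c j = (ε j)^2 * (inner ℝ (v j - M i j • v i) z' : ℝ) := by
        rw [hc]
        show ε j * (inner ℝ (u j) z' : ℝ) = _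
        rw [hu]
        show ε j * (inner ℝ (ε j • (v j - M i j • v i)) z' : ℝ) = _
        rw [real_inner_smul_left]; ring
      rw [h1, hεsq j hj, inner_sub_left, real_inner_smul_left, hviz', hz',
        inner_sub_right, real_inner_smul_right]
      rw [ha]
      simp only [one_mul, mul_zero, sub_zero]
      rw [show (inner ℝ (v j) (v i) : ℝ) = M i j from by rw [hMsym i j, hM j i]]
      ring
  -- Hadamard-square identity for the cap vectors
  have hHad : ∀ j k, (inner ℝ (u j) (u k) : ℝ)^2 + 2*α^2*(inner ℝ (u j) (u k) : ℝ)
      = α^2*(1-α^2)*((ε j)^2*(ε k)^2) + (if j = k then (1-α^2)*(ε j)^2 else 0) := by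
    intro j k
    by_cases hji : j = i
    · subst hji
      rw [hinneru, hεi]
      split_ifs <;> simp
    by_cases hki : k = i
    · subst hki
      rw [hinneru, hεi, if_neg hji]
      simp
    by_cases hjk : j = k
    · subst hjk
      have hMjj : M j j = 1 := by rw [hM, hvv]
      rw [hinneru j j, if_pos rfl, hMjj]
      linear_combination ((ε j)^2*(ε j)^2*((M i j)^2+α^2-2) - 2*α^2*(ε j)^2)
          * (hMsq2 i j (fun hh => hji hh.symm))
        + ((1-α^2)*(1-2*α^2)*(ε j)^2) * (hεsq j hji)
    · have hw : (M j k)^2 = α^2 := hMsq2 j k hjk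
      rw [hinneru j k, if_neg hjk, hMε j hji, hMε k hki]
      linear_combination ((ε j)^2*(ε k)^2) * hw
        + ((ε k)^2*(α^4*(ε j)^2*(ε k)^2 - 2*α^2*(ε j)*(ε k)*(M j k))) * (hεsq j hji)
        + (α^4*(ε j)^2*(ε k)^2 - 2*α^2*(ε j)*(ε k)*(M j k)) * (hεsq k hki)
  -- scalar quantities
  obtain ⟨A, hA⟩ : ∃ A : ℝ, A = ∑ j, (c j)^2 := ⟨_, rfl⟩
  obtain ⟨s, hs⟩ : ∃ s : ℝ, s = ∑ j, c j := ⟨_, rfl⟩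
  obtain ⟨L, hLd⟩ : ∃ L : ℝ, L = (inner ℝ z' z' : ℝ) := ⟨_, rfl⟩
  obtain ⟨τ, hτ⟩ : ∃ τ : ℝ, τ = α^2*(n:ℝ) + 1 - α^2 := ⟨_, rfl⟩
  have hτ' : τ = α^2*((n:ℝ)-1) + 1 := by rw [hτ]; ring
  have hτpos : 0 < τ := by rw [hτ]; nlinarith
  have hsumεsq : ∑ j, (ε j)^2 = (n:ℝ) - 1 := by
    have per : ∀ j, (ε j)^2 = (1:ℝ) - (if j = i then 1 else 0) := fun j => by
      by_cases hj : j = i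
      · subst hj; rw [hεi, if_pos rfl]; ring
      · rw [hεsq j hj, if_neg hj]; ring
    rw [Finset.sum_congr rfl fun j _ => per j, Finset.sum_sub_distrib, Finset.sum_const]
    simp
  have hsumMis : ∑ j, (M i j)^2 = τ := by
    have per : ∀ j, (M i j)^2 = (if j = i then 1 - α^2 else 0) + α^2 := fun j => by
      by_cases hj : j = i
      · subst hj; rw [hMii, if_pos rfl]; ring
      · rw [hMsq2 i j (fun hh => hj hh.symm), if_neg hj]; ring
    rw [Finset.sum_congr rfl fun j _ => per j, Finset.sum_add_distrib, Finset.sum_const, hτ]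
    simp only [Finset.sum_ite_eq', Finset.mem_univ, if_pos, Finset.card_univ, Fintype.card_fin,
      nsmul_eq_mul]
    ring
  have hsumεc : ∑ j, (ε j)^2 * c j = s := by
    rw [hs]; exact Finset.sum_congr rfl fun j _ => hεc j
  have hsumεc2 : ∑ j, (ε j)^2 * (c j * c j) = A := by
    rw [hA]
    exact Finset.sum_congr rfl fun j _ => by rw [← sq (c j), hεc2 j]
  have hDEC2 : (M*M).mulVec x i = τ * a i + α * s := by
    rw [hM2 i]
    have per : ∀ k, M i k * a k = (M i k)^2 * a i + α * ((ε k)^2 * c k) := fun k => by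
      rw [hdec k]; linear_combination (c k) * hMiε k
    rw [Finset.sum_congr rfl fun k _ => per k, Finset.sum_add_distrib, ← Finset.sum_mul,
      hsumMis, ← Finset.mul_sum, hsumεc]
  have hDEC1 : ∑ k, (a k)^2 = τ*(a i)^2 + 2*α*(a i)*s + A := by
    have per : ∀ k, (a k)^2 = (M i k)^2*(a i)^2 + (2*α*(a i))*((ε k)^2 * c k)
        + (ε k)^2*(c k * c k) := fun k => by
      rw [hdec k]; linear_combination (2*(a i)*(c k)) * hMiε k
    rw [Finset.sum_congr rfl fun k _ => per k, Finset.sum_add_distrib, Finset.sum_add_distrib,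
      ← Finset.sum_mul, hsumMis, ← Finset.mul_sum, hsumεc, hsumεc2]
  have hLnn : 0 ≤ L := by rw [hLd]; exact real_inner_self_nonneg
  have hkey : 2*α^2*τ*A ≤ (1-α^2)*L*τ + 2*α^4*s^2 := by
    rcases eq_or_lt_of_le hLnn with hL0 | hLpos
    · -- degenerate case z' = 0
      have hz0 : z' = 0 := by
        have : (inner ℝ z' z' : ℝ) = 0 := by rw [← hLd, ← hL0]
        exact inner_self_eq_zero.mp this
      have hc0 : ∀ j, c j = 0 := fun j => by rw [hc]; simp [hz0]
      have hA0 : A = 0 := by rw [hA]; simp [hc0]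
      have hs0 : s = 0 := by rw [hs]; simp [hc0]
      rw [hA0, hs0, ← hL0]; norm_num
    · -- main case
      obtain ⟨W1, hW1⟩ : ∃ w, w = ∑ j, c j • u j := ⟨_, rfl⟩
      obtain ⟨U, hU⟩ : ∃ w, w = ∑ j, (1:ℝ) • u j := ⟨_, rfl⟩
      obtain ⟨Tc, hTc⟩ : ∃ t, t = ∑ j, c j • tens u j := ⟨_, rfl⟩
      obtain ⟨T1, hT1⟩ : ∃ t, t = ∑ j, (1:ℝ) • tens u j := ⟨_, rfl⟩
      have hw1 : (inner ℝ W1 W1 : ℝ) = ∑ j, ∑ k, c j * c k * (inner ℝ (u j) (u k) : ℝ) := by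
        rw [hW1]; exact inner_sum_sum' c c u u
      have hh : (inner ℝ W1 U : ℝ) = ∑ j, ∑ k, c j * 1 * (inner ℝ (u j) (u k) : ℝ) := by
        rw [hW1, hU]; exact inner_sum_sum' c (fun _ => 1) u u
      have hN : (inner ℝ U U : ℝ) = ∑ j, ∑ k, (1:ℝ) * 1 * (inner ℝ (u j) (u k) : ℝ) := by
        rw [hU]; exact inner_sum_sum' (fun _ => 1) (fun _ => 1) u u
      have hQcc : (inner ℝ Tc Tc : ℝ) = ∑ j, ∑ k, c j * c k * (inner ℝ (u j) (u k) : ℝ)^2 := by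
        rw [hTc, inner_sum_sum' c c (tens u) (tens u)]
        exact Finset.sum_congr rfl fun j _ => Finset.sum_congr rfl fun k _ => by
          rw [inner_tens]
      have hQc1 : (inner ℝ Tc T1 : ℝ) = ∑ j, ∑ k, c j * 1 * (inner ℝ (u j) (u k) : ℝ)^2 := by
        rw [hTc, hT1, inner_sum_sum' c (fun _ => 1) (tens u) (tens u)]
        exact Finset.sum_congr rfl fun j _ => Finset.sum_congr rfl fun k _ => by
          rw [inner_tens]
      have hQ11 : (inner ℝ T1 T1 : ℝ) = ∑ j, ∑ k, (1:ℝ) * 1 * (inner ℝ (u j) (u k) : ℝ)^2 := by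
        rw [hT1, inner_sum_sum' (fun _ => 1) (fun _ => 1) (tens u) (tens u)]
        exact Finset.sum_congr rfl fun j _ => Finset.sum_congr rfl fun k _ => by
          rw [inner_tens]
      -- generic summed Hadamard identity
      have Egen : ∀ (e e' : Fin n → ℝ),
          (∑ j, ∑ k, e j * e' k * (inner ℝ (u j) (u k) : ℝ)^2)
            + 2*α^2*(∑ j, ∑ k, e j * e' k * (inner ℝ (u j) (u k) : ℝ))
          = α^2*(1-α^2)*((∑ j, (ε j)^2 * e j) * (∑ k, (ε k)^2 * e' k))
            + (1-α^2)*(∑ j, (ε j)^2 * (e j * e' j)) := by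
        intro e e'
        have merge : (∑ j, ∑ k, e j * e' k * (inner ℝ (u j) (u k) : ℝ)^2)
            + 2*α^2*(∑ j, ∑ k, e j * e' k * (inner ℝ (u j) (u k) : ℝ))
            = ∑ j, ∑ k, ((α^2*(1-α^2)) * (((ε j)^2 * e j) * ((ε k)^2 * e' k))
              + (if j = k then (1-α^2) * ((ε j)^2 * (e j * e' j)) else 0)) := by
          rw [Finset.mul_sum, ← Finset.sum_add_distrib]
          refine Finset.sum_congr rfl fun j _ => ?_
          rw [Finset.mul_sum, ← Finset.sum_add_distrib]
          refine Finset.sum_congr rfl fun k _ => ?_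
          by_cases hjk : j = k
          · subst hjk
            have hd := hHad j j
            rw [if_pos rfl] at hd
            rw [if_pos rfl]
            linear_combination (e j * e' j) * hd
          · have hd := hHad j k
            rw [if_neg hjk] at hd
            rw [if_neg hjk]
            linear_combination (e j * e' k) * hd
        rw [merge, double_sum_eval]
      have E1 := Egen c c
      have E2 := Egen (fun _ => 1) (fun _ => 1)
      have E3 := Egen c (fun _ => 1)
      rw [← hQcc, ← hw1, hsumεc] at E1
      rw [← hQ11, ← hN] at E2
      rw [← hQc1, ← hh, hsumεc] at E3
      simp only [mul_one, one_mul] at E1 E2 E3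
      rw [hsumεsq] at E2 E3
      rw [hsumεc2] at E1
      rw [hsumεc] at E3
      -- Cauchy-Schwarz inputs
      have hAW : (inner ℝ W1 z' : ℝ) = A := by
        rw [hW1, sum_inner, hA]
        exact Finset.sum_congr rfl fun j _ => by
          rw [real_inner_smul_left, hc]; ring
      have hsU : (inner ℝ U z' : ℝ) = s := by
        rw [hU, sum_inner, hs]
        exact Finset.sum_congr rfl fun j _ => by
          rw [real_inner_smul_left, hc]; ring
      have C1 : A^2 ≤ (inner ℝ W1 W1 : ℝ) * L := by
        have h0 := real_inner_mul_inner_self_le W1 z'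
        rw [hAW, ← hLd] at h0
        calc A^2 = A*A := sq A
          _ ≤ _ := h0
      have C3 : s^2 ≤ (inner ℝ U U : ℝ) * L := by
        have h0 := real_inner_mul_inner_self_le U z'
        rw [hsU, ← hLd] at h0
        calc s^2 = s*s := sq s
          _ ≤ _ := h0
      have P1 : (0:ℝ) ≤ inner ℝ Tc Tc := real_inner_self_nonneg
      have P2 : (0:ℝ) ≤ inner ℝ T1 T1 := real_inner_self_nonneg
      have C2 : (inner ℝ Tc T1 : ℝ)^2 ≤ (inner ℝ Tc Tc : ℝ) * (inner ℝ T1 T1 : ℝ) := by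
        have h0 := real_inner_mul_inner_self_le Tc T1
        calc (inner ℝ Tc T1 : ℝ)^2 = (inner ℝ Tc T1 : ℝ)*(inner ℝ Tc T1 : ℝ) := sq _
          _ ≤ _ := h0
      have G : ((inner ℝ W1 U : ℝ)*L - A*s)^2
          ≤ ((inner ℝ W1 W1 : ℝ)*L - A^2) * ((inner ℝ U U : ℝ)*L - s^2) := by
        have big := real_inner_mul_inner_self_le (L • W1 - A • z') (L • U - s • z')
        have e1 : (inner ℝ (L • W1 - A • z') (L • U - s • z') : ℝ)
            = L*((inner ℝ W1 U : ℝ)*L - A*s) := by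
          simp only [inner_sub_left, inner_sub_right, real_inner_smul_left,
            real_inner_smul_right]
          rw [real_inner_comm U z', hAW, hsU, ← hLd]
          ring
        have e2 : (inner ℝ (L • W1 - A • z') (L • W1 - A • z') : ℝ)
            = L*((inner ℝ W1 W1 : ℝ)*L - A^2) := by
          simp only [inner_sub_left, inner_sub_right, real_inner_smul_left,
            real_inner_smul_right]
          rw [real_inner_comm W1 z', hAW, ← hLd]
          ring
        have e3 : (inner ℝ (L • U - s • z') (L • U - s • z') : ℝ)
            = L*((inner ℝ U U : ℝ)*L - s^2) := by
          simp only [inner_sub_left, inner_sub_right, real_inner_smul_left,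
            real_inner_smul_right]
          rw [real_inner_comm U z', hsU, ← hLd]
          ring
        rw [e1, e2, e3] at big
        have big2 : L^2 * (((inner ℝ W1 U : ℝ)*L - A*s)^2)
            ≤ L^2 * (((inner ℝ W1 W1 : ℝ)*L - A^2) * ((inner ℝ U U : ℝ)*L - s^2)) := by
          calc L^2 * (((inner ℝ W1 U : ℝ)*L - A*s)^2)
              = (L*((inner ℝ W1 U : ℝ)*L - A*s))*(L*((inner ℝ W1 U : ℝ)*L - A*s)) := by ring
            _ ≤ (L*((inner ℝ W1 W1 : ℝ)*L - A^2))*(L*((inner ℝ U U : ℝ)*L - s^2)) := big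
            _ = L^2 * (((inner ℝ W1 W1 : ℝ)*L - A^2) * ((inner ℝ U U : ℝ)*L - s^2)) := by ring
        exact le_of_mul_le_mul_left big2 (by positivity)
      have E1' : (inner ℝ Tc Tc : ℝ) + 2*α^2*(inner ℝ W1 W1 : ℝ)
          = α^2*(1-α^2)*s^2 + (1-α^2)*A := by linear_combination E1
      have E2' : (inner ℝ T1 T1 : ℝ) + 2*α^2*(inner ℝ U U : ℝ)
          = α^2*(1-α^2)*((n:ℝ)-1)^2 + (1-α^2)*((n:ℝ)-1) := by linear_combination E2
      have E3' : (inner ℝ Tc T1 : ℝ) + 2*α^2*(inner ℝ W1 U : ℝ)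
          = α^2*(1-α^2)*s*((n:ℝ)-1) + (1-α^2)*s := by linear_combination E3
      exact key_ineq α ((n:ℝ)-1) τ L A s (inner ℝ W1 U) (inner ℝ W1 W1) (inner ℝ U U)
        (inner ℝ Tc Tc) (inner ℝ T1 T1) (inner ℝ Tc T1) hα0 hα1 (by linarith) hτ' hLpos
        E1' E2' E3' P1 P2 C1 C2 C3 G
  -- final assembly
  have hvzi : (inner ℝ (v i) z : ℝ) = a i := by rw [ha]
  have hLz : L = (inner ℝ z z : ℝ) - (a i)^2 := by
    rw [hLd, hz']
    simp only [inner_sub_left, inner_sub_right, real_inner_smul_left, real_inner_smul_right]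
    rw [real_inner_comm (v i) z, hvzi, hvv]
    ring
  have hfinal : τ*(a i)^2 + 2*α*(a i)*s + A
      ≤ (1-α^2)/(2*α^2)*((inner ℝ z z : ℝ) - (a i)^2) + 1/τ*(τ*(a i) + α*s)^2 := by
    rw [← hLz, ← sub_nonneg]
    have expand : (1-α^2)/(2*α^2)*L + 1/τ*(τ*(a i) + α*s)^2 - (τ*(a i)^2 + 2*α*(a i)*s + A)
        = ((1-α^2)*L*τ + 2*α^4*s^2 - 2*α^2*τ*A)/(2*α^2*τ) := by
      field_simp
      ring
    rw [expand]
    exact div_nonneg (by linarith [hkey]) (by positivity)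
  rw [ge_iff_le, hdot1, hdot2, hDEC1, hMx i, hDEC2, ← hτ]
  exact hfinal
end

section
/- Let 0 < α < 1 and let M be the Gram matrix of a spherical {α, −α}-code of size n in R^r. Then n < (λ_1(M)/α)·√r. -/
open Matrix

/-- For a spherical `{α, −α}`-code of size `n ≥ 1` in `ℝ^r` with Gram matrix `M`,
`n < (λ₁(M)/α)·√r`. -/
theorem stmt7 (r n : ℕ) (hn : 0 < n) (α : ℝ) (hα0 : 0 < α) (hα1 : α < 1)
    (v : Fin n → EuclideanSpace ℝ (Fin r)) (hv : ∀ i, ‖v i‖ = 1)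
    (hangle : ∀ i j, i ≠ j → |(inner ℝ (v i) (v j) : ℝ)| = α)
    (M : Matrix (Fin n) (Fin n) ℝ) (hMdef : ∀ i j, M i j = inner ℝ (v i) (v j))
    (hM : M.IsHermitian) (lam1 : ℝ) (hlam1 : lam1 = ⨆ i, hM.eigenvalues i) :
    (n : ℝ) < lam1 / α * Real.sqrt r := by
  classical
  -- M as a Gram matrix
  set B : Matrix (Fin r) (Fin n) ℝ := Matrix.of fun k i => v i k with hB
  have hMB : M = Bᴴ * B := by
    ext i j
    rw [hMdef]
    simp [Matrix.mul_apply, hB, PiLp.inner_apply, RCLike.inner_apply, mul_comm]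
  have hMpsd : M.PosSemidef := hMB ▸ Matrix.posSemidef_conjTranspose_mul_self B
  have hrank : M.rank ≤ r := by
    rw [hMB]
    exact (Matrix.rank_mul_le_right _ _).trans
      ((Matrix.rank_le_card_height B).trans (by simp))
  -- eigenvalues
  have heig0 : ∀ i, 0 ≤ hM.eigenvalues i := fun i => hMpsd.eigenvalues_nonneg i
  have hle : ∀ i, hM.eigenvalues i ≤ lam1 := by
    intro i
    rw [hlam1]
    exact le_ciSup (Set.Finite.bddAbove (Set.finite_range _)) i
  have hlam1nn : 0 ≤ lam1 := le_trans (heig0 ⟨0, hn⟩) (hle ⟨0, hn⟩)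
  -- trace of M² via eigenvalues
  have htr : (M * M).trace = ∑ i, hM.eigenvalues i ^ 2 := by
    set U := (hM.eigenvectorUnitary : Matrix (Fin n) (Fin n) ℝ) with hU
    set D := Matrix.diagonal (RCLike.ofReal ∘ hM.eigenvalues : Fin n → ℝ) with hD
    have hs : M = U * D * star U := hM.spectral_theorem
    have h1 : star U * U = 1 := Matrix.mem_unitaryGroup_iff'.mp hM.eigenvectorUnitary.2
    have hMM : M * M = U * (D * D) * star U := by
      calc M * M = U * D * star U * (U * D * star U) := by rw [← hs]
        _ = U * D * (star U * U) * (D * star U) := by noncomm_ring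
        _ = U * (D * D) * star U := by rw [h1]; noncomm_ring
    rw [hMM, Matrix.trace_mul_comm, ← mul_assoc, ← mul_assoc, h1, one_mul,
      Matrix.diagonal_mul_diagonal, Matrix.trace_diagonal]
    simp [sq]
  -- trace of M² directly
  have hrow : ∀ i, ∑ j, M i j * M j i = 1 + ((n : ℝ) - 1) * α ^ 2 := by
    intro i
    rw [← Finset.add_sum_erase _ _ (Finset.mem_univ i)]
    have h1 : M i i = 1 := by
      rw [hMdef, real_inner_self_eq_norm_sq, hv]; norm_num
    have h2 : ∀ j ∈ Finset.univ.erase i, M i j * M j i = α ^ 2 := by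
      intro j hj
      have hji : j ≠ i := Finset.ne_of_mem_erase hj
      have hsym : M j i = M i j := by rw [hMdef, hMdef, real_inner_comm]
      have habs : |M i j| = α := by rw [hMdef]; exact hangle i j hji.symm
      rw [hsym, ← sq, ← sq_abs, habs]
    rw [Finset.sum_congr rfl h2, Finset.sum_const, Finset.card_erase_of_mem (Finset.mem_univ i),
      Finset.card_univ, Fintype.card_fin, h1, mul_one, nsmul_eq_mul,
      Nat.cast_sub hn, Nat.cast_one]
  have htr2 : (M * M).trace = (n : ℝ) * (1 + ((n : ℝ) - 1) * α ^ 2) := by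
    rw [Matrix.trace]
    simp only [Matrix.diag_apply, Matrix.mul_apply]
    rw [Finset.sum_congr rfl fun i _ => hrow i]
    rw [Finset.sum_const, Finset.card_univ, Fintype.card_fin, nsmul_eq_mul]
  -- sum of squares bound
  have hcard : (Finset.univ.filter fun i => hM.eigenvalues i ≠ 0).card ≤ r := by
    have := hM.rank_eq_card_non_zero_eigs
    rw [Fintype.card_subtype] at this
    omega
  have hsum : ∑ i, hM.eigenvalues i ^ 2 ≤ (r : ℝ) * lam1 ^ 2 := by
    have h1 : ∑ i, hM.eigenvalues i ^ 2
        = ∑ i ∈ Finset.univ.filter fun i => hM.eigenvalues i ≠ 0, hM.eigenvalues i ^ 2 := by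
      rw [eq_comm]
      apply Finset.sum_subset (Finset.filter_subset _ _)
      intro x _ hx
      simp only [Finset.mem_filter, Finset.mem_univ, true_and, not_not] at hx
      simp [hx]
    rw [h1]
    calc ∑ i ∈ Finset.univ.filter fun i => hM.eigenvalues i ≠ 0, hM.eigenvalues i ^ 2
        ≤ (Finset.univ.filter fun i => hM.eigenvalues i ≠ 0).card • lam1 ^ 2 :=
          Finset.sum_le_card_nsmul _ _ _ fun i _ =>
            pow_le_pow_left₀ (heig0 i) (hle i) 2
      _ ≤ (r : ℝ) * lam1 ^ 2 := by
          rw [nsmul_eq_mul]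
          exact mul_le_mul_of_nonneg_right (by exact_mod_cast hcard) (sq_nonneg _)
  -- combine
  have hkey : (α * n) ^ 2 < (lam1 * Real.sqrt r) ^ 2 := by
    have h1 : α ^ 2 * (n : ℝ) ^ 2 < (n : ℝ) * (1 + ((n : ℝ) - 1) * α ^ 2) := by
      have hn1 : (0 : ℝ) < n := by exact_mod_cast hn
      nlinarith [mul_pos hn1 (show (0:ℝ) < 1 - α ^ 2 by nlinarith)]
    have h2 : (α * n) ^ 2 < (r : ℝ) * lam1 ^ 2 := by
      calc (α * n) ^ 2 = α ^ 2 * (n : ℝ) ^ 2 := by ring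
        _ < (n : ℝ) * (1 + ((n : ℝ) - 1) * α ^ 2) := h1
        _ = (M * M).trace := htr2.symm
        _ = ∑ i, hM.eigenvalues i ^ 2 := htr
        _ ≤ (r : ℝ) * lam1 ^ 2 := hsum
    calc (α * n) ^ 2 < (r : ℝ) * lam1 ^ 2 := h2
      _ = (lam1 * Real.sqrt r) ^ 2 := by
          rw [mul_pow, Real.sq_sqrt (Nat.cast_nonneg r)]; ring
  have hfin : α * n < lam1 * Real.sqrt r :=
    lt_of_pow_lt_pow_left₀ 2 (mul_nonneg hlam1nn (Real.sqrt_nonneg _)) hkey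
  rw [div_mul_eq_mul_div, lt_div_iff₀ hα0]
  linarith
end

section
/- Let 0 < α < 1 and let C be a spherical {α, −α}-code of size n in R^r. Let G be the graph on vertex set C with edges between pairs of vectors with inner product −α, and let d̄ be its average degree. Then n ≤ (1 + (2α/(1−α))^2 · d̄)(r + 1). -/
open Matrix Finset

lemma trace_sq_le_rank_mul_trace_sq {n : ℕ} (A : Matrix (Fin n) (Fin n) ℝ)
    (hA : A.IsHermitian) : (A.trace) ^ 2 ≤ (A.rank : ℝ) * (A * A).trace := by
  classical
  set μ := hA.eigenvalues with hμ
  set U : Matrix (Fin n) (Fin n) ℝ := (hA.eigenvectorUnitary : Matrix (Fin n) (Fin n) ℝ) with hU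
  have hsU : star U * U = 1 := Unitary.coe_star_mul_self _
  have hspec : A = (hA.eigenvectorUnitary : Matrix (Fin n) (Fin n) ℝ) * diagonal (RCLike.ofReal ∘ μ) * star (hA.eigenvectorUnitary : Matrix (Fin n) (Fin n) ℝ) := by
    have := hA.spectral_theorem; rwa [Unitary.conjStarAlgAut_apply] at this
  have htr : A.trace = ∑ i, μ i := by
    rw [hspec, Matrix.trace_mul_cycle]
    rw [← hU, hsU, one_mul, trace_diagonal]
    simp
  have htr2 : (A * A).trace = ∑ i, μ i ^ 2 := by
    have h2 : A * A = U * (diagonal (RCLike.ofReal ∘ μ) * diagonal (RCLike.ofReal ∘ μ)) * star U := by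
      rw [hspec]; rw [← hU]
      have h3 : (U * diagonal (RCLike.ofReal ∘ μ) * star U) * (U * diagonal (RCLike.ofReal ∘ μ) * star U)
          = U * (diagonal (RCLike.ofReal ∘ μ) * ((star U * U) * diagonal (RCLike.ofReal ∘ μ))) * star U := by
        simp only [Matrix.mul_assoc]
      rw [h3, hsU, one_mul, Matrix.mul_assoc]
    rw [h2, Matrix.trace_mul_cycle, hsU, one_mul, diagonal_mul_diagonal, trace_diagonal]
    simp [sq]
  have hcard : (A.rank : ℝ) = #(Finset.univ.filter fun i => μ i ≠ 0) := by
    rw [hA.rank_eq_card_non_zero_eigs]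
    norm_cast
    rw [Fintype.card_subtype]
  rw [htr, htr2, hcard]
  have h1 : ∑ i, μ i = ∑ i ∈ Finset.univ.filter fun i => μ i ≠ 0, μ i :=
    (Finset.sum_filter_ne_zero _).symm
  have h2 : ∑ i, μ i ^ 2 = ∑ i ∈ Finset.univ.filter fun i => μ i ≠ 0, μ i ^ 2 := by
    rw [Finset.sum_filter_of_ne]
    intro i _ h
    intro h0
    rw [h0] at h
    simp at h
  rw [h1, h2]
  exact sq_sum_le_card_mul_sum_sq

/-- Rank bound for spherical `{α, −α}`-codes: `n ≤ (1 + (2α/(1−α))²·d̄)(r+1)` where `d̄` is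
the average degree of the graph with edges between pairs of vectors with inner product `−α`. -/
theorem stmt12 (r n : ℕ) (α : ℝ) (hα0 : 0 < α) (hα1 : α < 1)
    (v : Fin n → EuclideanSpace ℝ (Fin r)) (hv : ∀ i, ‖v i‖ = 1)
    (hangle : ∀ i j, i ≠ j → |(inner ℝ (v i) (v j) : ℝ)| = α)
    (dbar : ℝ)
    (hd : dbar = (∑ i, (({j | j ≠ i ∧ (inner ℝ (v i) (v j) : ℝ) = -α}.ncard : ℝ))) / n) :
    (n : ℝ) ≤ (1 + (2 * α / (1 - α)) ^ 2 * dbar) * (r + 1) := by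
  classical
  rcases Nat.eq_zero_or_pos n with rfl | hn
  · simp only [Nat.cast_zero] at hd ⊢
    have : dbar = 0 := by simp [hd]
    rw [this]
    positivity
  set B : Matrix (Fin n) (Fin n) ℝ := fun i j => (inner ℝ (v i) (v j) : ℝ) - α with hB
  have hBsymm : B.IsHermitian := by
    ext i j
    rw [conjTranspose_apply]
    simp only [hB, conjTranspose_apply, star_trivial]
    rw [real_inner_comm]
  -- diagonal entries
  have hdiag : ∀ i, B i i = 1 - α := by
    intro i
    simp only [hB]
    rw [real_inner_self_eq_norm_sq, hv i]
    norm_num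
  -- rank bound : B = Pᵀ * Q
  set P : Matrix (Fin r ⊕ Unit) (Fin n) ℝ := fun k i => Sum.elim (fun k => v i k) (fun _ => -α) k with hP
  set Q : Matrix (Fin r ⊕ Unit) (Fin n) ℝ := fun k j => Sum.elim (fun k => v j k) (fun _ => 1) k with hQ
  have hfact : B = Pᵀ * Q := by
    ext i j
    rw [Matrix.mul_apply]; simp only [transpose_apply]
    simp only [hB, Matrix.mul_apply, transpose_apply, hP, hQ]
    rw [Fintype.sum_sum_type]
    simp only [Sum.elim_inl, Sum.elim_inr]
    rw [PiLp.inner_apply]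
    simp [RCLike.inner_apply]
    rw [Finset.sum_congr rfl fun x _ => mul_comm ((v j).ofLp x) ((v i).ofLp x)]
    ring
  have hrank : (B.rank : ℝ) ≤ (r : ℝ) + 1 := by
    have h1 : B.rank ≤ r + 1 := by
      rw [hfact]
      calc (Pᵀ * Q).rank ≤ Pᵀ.rank := Matrix.rank_mul_le_left _ _
        _ ≤ Fintype.card (Fin r ⊕ Unit) := Matrix.rank_le_card_width _
        _ = r + 1 := by simp
    calc (B.rank : ℝ) ≤ ((r + 1 : ℕ) : ℝ) := by exact_mod_cast h1
      _ = r + 1 := by push_cast; ring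
  -- trace
  have htrB : B.trace = n * (1 - α) := by
    rw [Matrix.trace]
    simp only [Matrix.diag]
    rw [Finset.sum_congr rfl (fun i _ => hdiag i)]
    simp [mul_comm]; ring
  -- degree sums
  set d : Fin n → ℕ := fun i => (Finset.univ.filter fun j => j ≠ i ∧ (inner ℝ (v i) (v j) : ℝ) = -α).card with hdg
  have hncard : ∀ i, ({j | j ≠ i ∧ (inner ℝ (v i) (v j) : ℝ) = -α} : Set (Fin n)).ncard = d i := by
    intro i
    rw [Set.ncard_eq_toFinset_card']
    congr 1
    ext j
    simp [hdg]
  have htrB2 : (B * B).trace = n * (1 - α) ^ 2 + 4 * α ^ 2 * ∑ i, (d i : ℝ) := by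
    rw [Matrix.trace]
    simp only [Matrix.diag, Matrix.mul_apply]
    have hrow : ∀ i : Fin n, ∑ j, B i j * B j i = (1 - α) ^ 2 + 4 * α ^ 2 * (d i : ℝ) := by
      intro i
      have : ∀ j, B i j * B j i = if j = i then (1 - α) ^ 2 else
          (if (inner ℝ (v i) (v j) : ℝ) = -α then 4 * α ^ 2 else 0) := by
        intro j
        by_cases hji : j = i
        · subst hji; rw [hdiag]; simp [sq]
        · rw [if_neg hji]
          have hBji : B j i = B i j := by
            simp only [hB]; rw [real_inner_comm]
          rw [hBji]
          have habs := hangle i j (fun h => hji h.symm)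
          by_cases hne : (inner ℝ (v i) (v j) : ℝ) = -α
          · rw [if_pos hne]
            simp only [hB, hne]
            ring
          · rw [if_neg hne]
            have : (inner ℝ (v i) (v j) : ℝ) = α := by
              rcases abs_eq (le_of_lt hα0) |>.mp habs with h | h
              · exact h
              · exact absurd h hne
            simp only [hB, this]
            ring
      rw [Finset.sum_congr rfl (fun j _ => this j)]
      rw [Finset.sum_ite]
      have h1 : (Finset.univ.filter fun j => j = i) = {i} := by
        ext j; simp
      rw [Finset.sum_ite]
      have h2 : ((Finset.univ.filter fun j => ¬ j = i).filter
          fun j => (inner ℝ (v i) (v j) : ℝ) = -α).card = d i := by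
        rw [hdg, Finset.filter_filter]
      simp only [Finset.sum_const, h1, Finset.sum_singleton, Finset.card_singleton,
        nsmul_eq_mul, Finset.sum_const_zero, add_zero]
      rw [h2]
      ring_nf
    rw [Finset.sum_congr rfl (fun i _ => hrow i)]
    rw [Finset.sum_add_distrib]
    rw [Finset.sum_const, ← Finset.mul_sum]
    simp [mul_comm]
  have key := trace_sq_le_rank_mul_trace_sq B hBsymm
  rw [htrB, htrB2] at key
  set S : ℝ := ∑ i, (d i : ℝ) with hS
  have hSnn : 0 ≤ S := by
    rw [hS]; exact Finset.sum_nonneg fun i _ => Nat.cast_nonneg _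
  have hdbar : dbar = S / n := by
    rw [hd, hS]
    congr 1
    exact Finset.sum_congr rfl fun i _ => by rw [hncard i]
  have hkey2 : ((n : ℝ) * (1 - α)) ^ 2 ≤ ((r : ℝ) + 1) * ((n : ℝ) * (1 - α) ^ 2 + 4 * α ^ 2 * S) := by
    refine key.trans ?_
    have hnn : (0:ℝ) ≤ (n : ℝ) * (1 - α) ^ 2 + 4 * α ^ 2 * S :=
      add_nonneg (by positivity) (mul_nonneg (by positivity) hSnn)
    exact mul_le_mul_of_nonneg_right hrank hnn
  have hα1' : (0:ℝ) < 1 - α := by linarith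
  have hnpos : (0:ℝ) < n := by exact_mod_cast hn
  rw [hdbar]
  have expand : (1 + (2 * α / (1 - α)) ^ 2 * (S / n)) * ((r:ℝ) + 1)
      = ((r:ℝ) + 1) * ((n:ℝ) * (1 - α) ^ 2 + 4 * α ^ 2 * S) / ((n:ℝ) * (1 - α) ^ 2) := by
    have hne1 : (1 - α) ≠ 0 := ne_of_gt hα1'
    have hne2 : (n:ℝ) ≠ 0 := ne_of_gt hnpos
    field_simp
    ring
  rw [expand, le_div_iff₀ (mul_pos hnpos (pow_pos hα1' 2))]
  have heq : (n:ℝ) * ((n:ℝ) * (1 - α) ^ 2) = ((n:ℝ) * (1 - α)) ^ 2 := by ring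
  rw [heq]
  exact hkey2
end

section
/- Let 0 < α < 1 and let C be a spherical {α, −α}-code of size n in R^r with associated graph G (edges between pairs with inner product −α, adjacency matrix A). Then for every nonzero x ∈ R^n orthogonal to the all-ones vector 1, x^T A x / x^T x ≤ (1/α − 1)/2. Moreover, if n ≥ r + 2 then this maximum Rayleigh quotient over vectors orthogonal to 1 equals exactly (1/α − 1)/2. -/
open Matrix

/-- For the graph associated to a spherical `{α, −α}`-code (adjacency matrix `A`), every
nonzero `x ⟂ 1` has Rayleigh quotient at most `(1/α − 1)/2`; moreover if `n ≥ r + 2` this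
bound is attained, so the maximum Rayleigh quotient equals `(1/α − 1)/2`. -/
theorem stmt13 (r n : ℕ) (α : ℝ) (hα0 : 0 < α) (hα1 : α < 1)
    (v : Fin n → EuclideanSpace ℝ (Fin r)) (hv : ∀ i, ‖v i‖ = 1)
    (hangle : ∀ i j, i ≠ j → |(inner ℝ (v i) (v j) : ℝ)| = α)
    (A : Matrix (Fin n) (Fin n) ℝ)
    (hA : ∀ i j, A i j = if i ≠ j ∧ (inner ℝ (v i) (v j) : ℝ) = -α then 1 else 0) :
    (∀ x : Fin n → ℝ, x ≠ 0 → x ⬝ᵥ (fun _ => (1 : ℝ)) = 0 →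
        x ⬝ᵥ A.mulVec x / (x ⬝ᵥ x) ≤ (1 / α - 1) / 2) ∧
    (r + 2 ≤ n → ∃ x : Fin n → ℝ, x ≠ 0 ∧ x ⬝ᵥ (fun _ => (1 : ℝ)) = 0 ∧
        x ⬝ᵥ A.mulVec x / (x ⬝ᵥ x) = (1 / α - 1) / 2) := by
  have hM : ∀ i j, (inner ℝ (v i) (v j) : ℝ)
      = α - 2*α * A i j + (1-α) * (if i = j then 1 else 0) := by
    intro i j
    by_cases h : i = j
    · subst h
      have : (inner ℝ (v i) (v i) : ℝ) = 1 := by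
        rw [real_inner_self_eq_norm_sq, hv]; norm_num
      simp [hA, this, hv]
    · have habs := hangle i j h
      rw [hA]
      by_cases h2 : (inner ℝ (v i) (v j) : ℝ) = -α
      · rw [if_pos ⟨h, h2⟩, if_neg h, h2]; ring
      · have hpos : (inner ℝ (v i) (v j) : ℝ) = α := by
          rcases (abs_eq hα0.le).mp habs with h3 | h3
          · exact h3
          · exact absurd h3 h2
        rw [if_neg (fun hc => h2 hc.2), if_neg h, hpos]; ring
  have key : ∀ x : Fin n → ℝ,
      ‖∑ i, x i • v i‖^2
        = α * (∑ i, x i)^2 - 2*α * (x ⬝ᵥ A.mulVec x) + (1-α) * (x ⬝ᵥ x) := by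
    intro x
    have h1 : (‖∑ i, x i • v i‖ : ℝ)^2
        = ∑ i, ∑ j, x i * (x j * (inner ℝ (v i) (v j) : ℝ)) := by
      rw [← real_inner_self_eq_norm_sq, sum_inner]
      refine Finset.sum_congr rfl fun i _ => ?_
      rw [real_inner_smul_left, inner_sum, Finset.mul_sum]
      refine Finset.sum_congr rfl fun j _ => ?_
      rw [real_inner_smul_right]
    have h2 : x ⬝ᵥ A.mulVec x = ∑ i, ∑ j, x i * (A i j * x j) := by
      simp [dotProduct, mulVec, Finset.mul_sum]
    have h3 : (∑ i, x i)^2 = ∑ i, ∑ j, x i * x j := by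
      rw [sq, Finset.sum_mul_sum]
    have h4 : x ⬝ᵥ x = ∑ i, ∑ j, if i = j then x i * x j else 0 := by
      simp [dotProduct, Finset.sum_ite_eq]
    rw [h1, h2, h3, h4]
    rw [Finset.mul_sum, Finset.mul_sum, Finset.mul_sum]
    simp only [Finset.mul_sum]
    rw [← Finset.sum_sub_distrib, ← Finset.sum_add_distrib]
    refine Finset.sum_congr rfl fun i _ => ?_
    rw [← Finset.sum_sub_distrib, ← Finset.sum_add_distrib]
    refine Finset.sum_congr rfl fun j _ => ?_
    rw [hM i j]
    by_cases h : i = j <;> simp [h] <;> ring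
  have hxx_nonneg : ∀ x : Fin n → ℝ, 0 ≤ x ⬝ᵥ x := fun x =>
    Finset.sum_nonneg fun i _ => mul_self_nonneg _
  constructor
  · intro x hx hx1
    have hs : ∑ i, x i = 0 := by simpa [dotProduct] using hx1
    have hP : 0 < x ⬝ᵥ x := by
      rcases lt_or_eq_of_le (hxx_nonneg x) with h | h
      · exact h
      · exact absurd (dotProduct_self_eq_zero.mp h.symm) hx
    have hineq : 0 ≤ - 2*α * (x ⬝ᵥ A.mulVec x) + (1-α) * (x ⬝ᵥ x) := by
      have := key x
      rw [hs] at this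
      nlinarith [sq_nonneg ‖∑ i, x i • v i‖, this]
    rw [div_le_div_iff₀ hP (by norm_num : (0:ℝ) < 2)]
    have hα' : α ≠ 0 := hα0.ne'
    have he : (1/α - 1 : ℝ) = (1-α)/α := by field_simp
    rw [he, div_mul_eq_mul_div, le_div_iff₀ hα0]
    nlinarith [hineq]
  · intro hn
    -- linear map x ↦ (∑ x i • v i, ∑ x i) has nontrivial kernel
    let L : (Fin n → ℝ) →ₗ[ℝ] (EuclideanSpace ℝ (Fin r) × ℝ) :=
      { toFun := fun x => (∑ i, x i • v i, ∑ i, x i)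
        map_add' := by
          intro x y
          simp [add_smul, Finset.sum_add_distrib, Prod.ext_iff]
        map_smul' := by
          intro c x
          simp [smul_smul, Finset.smul_sum, Finset.mul_sum, Prod.ext_iff] }
    have hnotinj : ¬ Function.Injective L := by
      intro hinj
      have hle := LinearMap.finrank_le_finrank_of_injective hinj
      have h1 : Module.finrank ℝ (Fin n → ℝ) = n := Module.finrank_fin_fun ℝ
      have h2 : Module.finrank ℝ (EuclideanSpace ℝ (Fin r) × ℝ) = r + 1 := by
        rw [Module.finrank_prod, finrank_euclideanSpace_fin, Module.finrank_self]
      rw [h1, h2] at hle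
      omega
    have hker : LinearMap.ker L ≠ ⊥ :=
      fun h => hnotinj (LinearMap.ker_eq_bot.mp h)
    obtain ⟨x, hxmem, hx0⟩ := Submodule.exists_mem_ne_zero_of_ne_bot hker
    have hLx : L x = 0 := hxmem
    have hsum0 : ∑ i, x i • v i = 0 := congrArg Prod.fst hLx
    have hs : ∑ i, x i = 0 := congrArg Prod.snd hLx
    refine ⟨x, hx0, ?_, ?_⟩
    · simp [dotProduct, hs]
    · have hP : 0 < x ⬝ᵥ x := by
        rcases lt_or_eq_of_le (hxx_nonneg x) with h | h
        · exact h
        · exact absurd (dotProduct_self_eq_zero.mp h.symm) hx0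
      have hk := key x
      rw [hsum0, hs] at hk
      simp only [norm_zero] at hk
      have hQ : x ⬝ᵥ A.mulVec x = (1 / α - 1) / 2 * (x ⬝ᵥ x) := by
        field_simp
        nlinarith [hk]
      rw [hQ, mul_div_assoc, div_self hP.ne', mul_one]
end

section
/- Let G be a graph on n vertices with maximum degree Δ ≥ 1. For all integers t with 1 ≤ t ≤ Δ, μ(G) ≥ √t − 2Δ(t+1)/n, where μ(G) = max{x^T A x / x^T x : x ≠ 0, x ⟂ 1}. -/
open Matrix Finset SimpleGraph


-- pure arithmetic helpers for the star witness
lemma arith_quad (tr s nr d P Q R : ℝ) (hnr : 0 ≤ nr) (hst : 0 ≤ s + tr)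
    (h1 : 2*tr*s ≤ P) (h2 : Q ≤ d*(s+tr)) (h3 : 0 ≤ R) :
    nr * (2 * tr * s * nr - 2 * d * (s + tr)^2)
      ≤ nr^2 * P - 2 * nr * (s + tr) * Q + (s + tr)^2 * R := by
  nlinarith [mul_le_mul_of_nonneg_left h2 (mul_nonneg (mul_nonneg (by norm_num : (0:ℝ) ≤ 2) hnr) hst),
    mul_le_mul_of_nonneg_left h1 (sq_nonneg nr)]

lemma arith_Dpos (s nr d : ℝ) (hs1 : 1 ≤ s) (hd : s^2 ≤ d)
    (hL : 2 * d * (s^2 + 1) ≤ s * nr) :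
    0 < 2 * s^2 * nr - (s + s^2)^2 := by
  nlinarith [mul_le_mul_of_nonneg_left hL (by positivity : (0:ℝ) ≤ 2*s),
    sq_nonneg (s - 1), sq_nonneg s, mul_le_mul_of_nonneg_left hd (by positivity : (0:ℝ) ≤ 2*s^3)]

lemma arith_key (s nr d : ℝ) (hs1 : 1 ≤ s) (hd : s^2 ≤ d)
    (hL : 2 * d * (s^2 + 1) ≤ s * nr) (hnr : 0 ≤ nr) :
    (s * nr - 2 * d * (s^2 + 1)) * (2 * s^2 * nr - (s + s^2)^2)
      ≤ nr * (2 * s^2 * s * nr - 2 * d * (s + s^2)^2) := by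
  nlinarith [mul_nonneg (mul_nonneg (mul_nonneg ((sq_nonneg s).trans hd) hnr)
      (by positivity : (0:ℝ) ≤ s^2)) (sq_nonneg (s - 1)),
    mul_nonneg (by linarith : 0 ≤ s * nr - 2 * d * (s^2 + 1)) (sq_nonneg (s + s^2))]


lemma quadform_expand (n : ℕ) (G : SimpleGraph (Fin n)) [DecidableRel G.Adj] (x y : Fin n → ℝ) :
    x ⬝ᵥ (G.adjMatrix ℝ *ᵥ y) = ∑ i, ∑ j, (G.adjMatrix ℝ) i j * (x i * y j) := by
  simp only [dotProduct, mulVec]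
  congr 1; ext i
  rw [Finset.mul_sum]; congr 1; ext j; ring

lemma row_sum (n : ℕ) (G : SimpleGraph (Fin n)) [DecidableRel G.Adj] (i : Fin n) :
    ∑ j, (G.adjMatrix ℝ) i j = G.degree i := by
  simp [SimpleGraph.adjMatrix_apply, SimpleGraph.degree, SimpleGraph.neighborFinset_eq_filter]

lemma quad_le_maxDegree (n : ℕ) (G : SimpleGraph (Fin n)) [DecidableRel G.Adj] (x : Fin n → ℝ) :
    x ⬝ᵥ (G.adjMatrix ℝ *ᵥ x) ≤ (G.maxDegree : ℝ) * (x ⬝ᵥ x) := by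
  rw [quadform_expand]
  have h1 : ∑ i, ∑ j, (G.adjMatrix ℝ) i j * (x i * x j)
      ≤ ∑ i, ∑ j, (G.adjMatrix ℝ) i j * ((x i ^ 2 + x j ^ 2) / 2) := by
    refine Finset.sum_le_sum fun i _ => Finset.sum_le_sum fun j _ => ?_
    refine mul_le_mul_of_nonneg_left ?_ (by simp [SimpleGraph.adjMatrix_apply]; positivity)
    nlinarith [sq_nonneg (x i - x j)]
  refine h1.trans ?_
  have h2 : ∑ i, ∑ j, (G.adjMatrix ℝ) i j * ((x i ^ 2 + x j ^ 2) / 2)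
      = ∑ i, (G.degree i : ℝ) * x i ^ 2 := by
    have hsym : ∀ i j : Fin n, (G.adjMatrix ℝ) i j = (G.adjMatrix ℝ) j i := by
      intro i j; simp [SimpleGraph.adjMatrix_apply, SimpleGraph.adj_comm]
    have : ∑ i, ∑ j, (G.adjMatrix ℝ) i j * ((x i ^ 2 + x j ^ 2) / 2)
        = (∑ i, ∑ j, (G.adjMatrix ℝ) i j * x i ^ 2) / 2
          + (∑ i, ∑ j, (G.adjMatrix ℝ) i j * x j ^ 2) / 2 := by
      rw [← add_div, ← Finset.sum_add_distrib, Finset.sum_div]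
      congr 1; ext i
      rw [← Finset.sum_add_distrib, Finset.sum_div]
      congr 1; ext j; ring
    rw [this]
    have hA : (∑ i, ∑ j, (G.adjMatrix ℝ) i j * x i ^ 2) = ∑ i, (G.degree i : ℝ) * x i ^ 2 := by
      congr 1; ext i
      rw [← Finset.sum_mul, row_sum]
    have hB : (∑ i, ∑ j, (G.adjMatrix ℝ) i j * x j ^ 2) = ∑ i, (G.degree i : ℝ) * x i ^ 2 := by
      rw [Finset.sum_comm]
      congr 1; ext j
      simp_rw [hsym]
      rw [← Finset.sum_mul, row_sum]
    rw [hA, hB]; ring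
  rw [h2]
  simp only [dotProduct]
  rw [Finset.mul_sum]
  refine Finset.sum_le_sum fun i _ => ?_
  have h3 : (G.degree i : ℝ) ≤ G.maxDegree := by exact_mod_cast G.degree_le_maxDegree i
  nlinarith [sq_nonneg (x i)]

/-- For a graph `G` on `n` vertices with maximum degree `Δ ≥ 1` and any `1 ≤ t ≤ Δ`,
`μ(G) ≥ √t − 2Δ(t+1)/n`, where `μ(G)` is the maximum Rayleigh quotient of the adjacency
matrix over nonzero vectors orthogonal to the all-ones vector. -/
theorem stmt16 (n t : ℕ) (G : SimpleGraph (Fin n)) [DecidableRel G.Adj]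
    (hΔ : 1 ≤ G.maxDegree) (ht : 1 ≤ t) (htΔ : t ≤ G.maxDegree) :
    (⨆ x : {x : Fin n → ℝ // x ≠ 0 ∧ x ⬝ᵥ (fun _ => (1 : ℝ)) = 0},
        (x.1 ⬝ᵥ (G.adjMatrix ℝ).mulVec x.1) / (x.1 ⬝ᵥ x.1))
      ≥ Real.sqrt t - 2 * (G.maxDegree : ℝ) * (t + 1) / n := by
  have hn0 : 0 < n := by
    by_contra h
    push_neg at h
    interval_cases n
    have : G.maxDegree ≤ 0 := G.maxDegree_le_of_forall_degree_le 0 (fun v => v.elim0)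
    omega
  haveI : Nonempty (Fin n) := Fin.pos_iff_nonempty.mp hn0
  have hself : ∀ x : Fin n → ℝ, x ≠ 0 → 0 < x ⬝ᵥ x := by
    intro x hx
    have h1 : 0 ≤ x ⬝ᵥ x := Finset.sum_nonneg fun i _ => mul_self_nonneg _
    rcases h1.lt_or_eq with h | h
    · exact h
    · exact absurd (dotProduct_self_eq_zero.mp h.symm) hx
  have hbdd : BddAbove (Set.range fun x : {x : Fin n → ℝ // x ≠ 0 ∧ x ⬝ᵥ (fun _ => (1 : ℝ)) = 0} =>
      (x.1 ⬝ᵥ (G.adjMatrix ℝ).mulVec x.1) / (x.1 ⬝ᵥ x.1)) := by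
    refine ⟨(G.maxDegree : ℝ), ?_⟩
    rintro r ⟨⟨x, hx0, hx1⟩, rfl⟩
    rw [div_le_iff₀ (hself x hx0)]
    exact quad_le_maxDegree n G x
  have conclude : ∀ x : Fin n → ℝ, x ≠ 0 → x ⬝ᵥ (fun _ => (1 : ℝ)) = 0 →
      Real.sqrt t - 2 * (G.maxDegree : ℝ) * (t + 1) / n ≤
        (x ⬝ᵥ (G.adjMatrix ℝ).mulVec x) / (x ⬝ᵥ x) →
      (⨆ x : {x : Fin n → ℝ // x ≠ 0 ∧ x ⬝ᵥ (fun _ => (1 : ℝ)) = 0},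
        (x.1 ⬝ᵥ (G.adjMatrix ℝ).mulVec x.1) / (x.1 ⬝ᵥ x.1))
      ≥ Real.sqrt t - 2 * (G.maxDegree : ℝ) * (t + 1) / n := by
    intro x hx0 hx1 hrat
    exact le_trans hrat (le_ciSup hbdd ⟨x, hx0, hx1⟩)
  obtain ⟨v, hv⟩ := G.exists_maximal_degree_vertex
  by_cases hL : 0 ≤ Real.sqrt t - 2 * (G.maxDegree : ℝ) * (t + 1) / n
  · -- star witness
    have hnR : (0:ℝ) < n := by exact_mod_cast hn0
    have htv : t ≤ (G.neighborFinset v).card := by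
      rw [G.card_neighborFinset_eq_degree, ← hv]; exact htΔ
    obtain ⟨T, hTsub, hTcard⟩ := Finset.exists_subset_card_eq htv
    have hvT : v ∉ T := fun h => G.notMem_neighborFinset_self v (hTsub h)
    set s : ℝ := Real.sqrt t with hsdef
    have hs0 : (0:ℝ) ≤ s := Real.sqrt_nonneg _
    have hs2 : s ^ 2 = (t:ℝ) := Real.sq_sqrt (by positivity)
    have hs1 : 1 ≤ s := by
      nlinarith [hs2, (by exact_mod_cast ht : (1:ℝ) ≤ (t:ℝ))]
    set y : Fin n → ℝ := fun i => if i = v then s else if i ∈ T then 1 else 0 with hydef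
    have hy0 : ∀ i, 0 ≤ y i := by
      intro i; rw [hydef]; dsimp only; split
      · exact hs0
      · split <;> norm_num
    have hyv : y v = s := by rw [hydef]; simp
    have hyT : ∀ u ∈ T, y u = 1 := by
      intro u hu; rw [hydef]; dsimp only
      rw [if_neg (by rintro rfl; exact hvT hu), if_pos hu]
    have hsupp : ∀ i, i ∉ insert v T → y i = 0 := by
      intro i hi
      rw [hydef]; dsimp only
      rw [if_neg (by rintro rfl; exact hi (mem_insert_self _ _)),
        if_neg (fun h => hi (mem_insert_of_mem h))]
    have hysum : ∑ i, y i = s + t := by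
      rw [← Finset.sum_subset (Finset.subset_univ (insert v T)) (fun i _ hi => hsupp i hi)]
      rw [Finset.sum_insert hvT, hyv, Finset.sum_congr rfl hyT]
      simp [hTcard]
    have hysq : ∑ i, y i * y i = s^2 + t := by
      have hsupp2 : ∀ i ∈ Finset.univ, i ∉ insert v T → y i * y i = 0 := by
        intro i _ hi; rw [hsupp i hi]; ring
      rw [← Finset.sum_subset (Finset.subset_univ (insert v T)) hsupp2]
      rw [Finset.sum_insert hvT, hyv]
      have : ∀ u ∈ T, y u * y u = 1 := by intro u hu; rw [hyT u hu]; norm_num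
      rw [Finset.sum_congr rfl this]
      simp [hTcard]; ring
    -- the shifted witness
    set o : Fin n → ℝ := fun _ => 1 with hodef
    set x : Fin n → ℝ := (n:ℝ) • y - (s + t) • o with hxdef
    have hdot1 : o ⬝ᵥ o = (n:ℝ) := by
      simp [hodef, dotProduct]
    have hdoty1 : y ⬝ᵥ o = s + t := by
      simp [hodef, dotProduct, hysum]
    have hdot1y : o ⬝ᵥ y = s + t := by
      simp [hodef, dotProduct]; rw [hysum]
    have hdotyy : y ⬝ᵥ y = 2 * t := by
      simp only [dotProduct]; rw [hysq, hs2]; ring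
    have hx1 : x ⬝ᵥ o = 0 := by
      rw [hxdef, sub_dotProduct, smul_dotProduct, smul_dotProduct,
        hdoty1, hdot1]
      simp [mul_comm]
    have hxx : x ⬝ᵥ x = (n:ℝ) * (2 * t * n - (s + t)^2) := by
      rw [hxdef]
      simp only [sub_dotProduct, dotProduct_sub, smul_dotProduct,
        dotProduct_smul, hdotyy, hdoty1, hdot1y, hdot1, smul_eq_mul]
      ring
    -- quadratic form bounds
    have hsymm : ∀ z w : Fin n → ℝ, z ⬝ᵥ (G.adjMatrix ℝ *ᵥ w) = w ⬝ᵥ (G.adjMatrix ℝ *ᵥ z) := by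
      intro z w
      rw [Matrix.dotProduct_mulVec, ← Matrix.mulVec_transpose, transpose_adjMatrix,
        dotProduct_comm]
    have hP : 2 * t * s ≤ y ⬝ᵥ (G.adjMatrix ℝ *ᵥ y) := by
      have hexp : y ⬝ᵥ (G.adjMatrix ℝ *ᵥ y) = ∑ i, y i * ∑ u ∈ G.neighborFinset i, y u := by
        simp [dotProduct]
      rw [hexp]
      have hterm : ∀ i : Fin n, 0 ≤ y i * ∑ u ∈ G.neighborFinset i, y u :=
        fun i => mul_nonneg (hy0 i) (Finset.sum_nonneg fun u _ => hy0 u)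
      have hsub : ∑ i ∈ insert v T, (y i * ∑ u ∈ G.neighborFinset i, y u)
          ≤ ∑ i, y i * ∑ u ∈ G.neighborFinset i, y u :=
        Finset.sum_le_sum_of_subset_of_nonneg (Finset.subset_univ _) (fun i _ _ => hterm i)
      refine le_trans ?_ hsub
      rw [Finset.sum_insert hvT, hyv]
      have hv1 : (t:ℝ) ≤ ∑ u ∈ G.neighborFinset v, y u := by
        have : ∑ u ∈ T, y u ≤ ∑ u ∈ G.neighborFinset v, y u :=
          Finset.sum_le_sum_of_subset_of_nonneg hTsub (fun u _ _ => hy0 u)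
        refine le_trans ?_ this
        rw [Finset.sum_congr rfl hyT]
        simp [hTcard]
      have hv2 : ∀ u ∈ T, s ≤ y u * ∑ w ∈ G.neighborFinset u, y w := by
        intro u hu
        rw [hyT u hu, one_mul]
        have hmem : v ∈ G.neighborFinset u := by
          rw [SimpleGraph.mem_neighborFinset]
          exact ((G.mem_neighborFinset v u).mp (hTsub hu)).symm
        calc s = y v := hyv.symm
          _ ≤ ∑ w ∈ G.neighborFinset u, y w :=
            Finset.single_le_sum (fun w _ => hy0 w) hmem
      have hv2' : (t:ℝ) * s ≤ ∑ u ∈ T, (y u * ∑ w ∈ G.neighborFinset u, y w) := by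
        calc (t:ℝ) * s = ∑ _u ∈ T, s := by rw [Finset.sum_const, hTcard]; ring
          _ ≤ _ := Finset.sum_le_sum hv2
      nlinarith [mul_le_mul_of_nonneg_left hv1 hs0]
    have hQ : y ⬝ᵥ (G.adjMatrix ℝ *ᵥ o) ≤ (G.maxDegree : ℝ) * (s + t) := by
      have hexp : y ⬝ᵥ (G.adjMatrix ℝ *ᵥ o) = ∑ i, y i * (G.degree i : ℝ) := by
        simp [hodef, dotProduct]
      rw [hexp]
      calc ∑ i, y i * (G.degree i : ℝ) ≤ ∑ i, y i * (G.maxDegree : ℝ) := by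
            refine Finset.sum_le_sum fun i _ => mul_le_mul_of_nonneg_left ?_ (hy0 i)
            exact_mod_cast G.degree_le_maxDegree i
        _ = (G.maxDegree : ℝ) * (s + t) := by
            rw [← Finset.sum_mul, hysum]; ring
    have hR : 0 ≤ o ⬝ᵥ (G.adjMatrix ℝ *ᵥ o) := by
      simp only [hodef, dotProduct, SimpleGraph.adjMatrix_mulVec_apply, one_mul]
      exact Finset.sum_nonneg fun i _ => Finset.sum_nonneg fun u _ => zero_le_one
    have hxAx : (n:ℝ) * (2 * t * s * n - 2 * G.maxDegree * (s + t)^2)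
        ≤ x ⬝ᵥ (G.adjMatrix ℝ *ᵥ x) := by
      have hexp : x ⬝ᵥ (G.adjMatrix ℝ *ᵥ x)
          = (n:ℝ)^2 * (y ⬝ᵥ (G.adjMatrix ℝ *ᵥ y))
            - 2 * n * (s + t) * (y ⬝ᵥ (G.adjMatrix ℝ *ᵥ o))
            + (s + t)^2 * (o ⬝ᵥ (G.adjMatrix ℝ *ᵥ o)) := by
        rw [hxdef]
        simp only [Matrix.mulVec_sub, Matrix.mulVec_smul, sub_dotProduct,
          dotProduct_sub, smul_dotProduct, dotProduct_smul, smul_eq_mul]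
        rw [hsymm o y]
        ring
      rw [hexp]
      exact arith_quad (t:ℝ) s (n:ℝ) (G.maxDegree:ℝ) _ _ _ hnR.le (by positivity) hP hQ hR
    -- final assembly
    have hL' : 2 * (G.maxDegree:ℝ) * (t + 1) ≤ s * n := by
      rw [sub_nonneg] at hL
      exact (div_le_iff₀ hnR).mp hL
    have hdR : s^2 ≤ (G.maxDegree:ℝ) := by rw [hs2]; exact_mod_cast htΔ
    have hL2 : 2 * (G.maxDegree:ℝ) * (s^2 + 1) ≤ s * n := by rw [hs2]; exact hL'
    have hts : (t:ℝ) = s^2 := hs2.symm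
    have hDpos : 0 < x ⬝ᵥ x := by
      rw [hxx, hts]
      exact mul_pos hnR (arith_Dpos s (n:ℝ) (G.maxDegree:ℝ) hs1 hdR hL2)
    have hx0 : x ≠ 0 := by
      intro h
      rw [h] at hDpos
      simp at hDpos
    have hrat : s - 2 * (G.maxDegree:ℝ) * (t+1) / n ≤ (x ⬝ᵥ (G.adjMatrix ℝ *ᵥ x))/(x ⬝ᵥ x) := by
      rw [le_div_iff₀ hDpos]
      have hfact : (s - 2 * (G.maxDegree:ℝ) * (t+1) / n) * (x ⬝ᵥ x)
          = (s * n - 2 * G.maxDegree * (t+1)) * (2 * t * n - (s+t)^2) := by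
        rw [hxx]; field_simp
      rw [hfact]
      refine le_trans ?_ hxAx
      rw [hts]
      exact arith_key s (n:ℝ) (G.maxDegree:ℝ) hs1 hdR hL2 hnR.le
    exact conclude x hx0 hx1 hrat
  · push_neg at hL
    -- a pair witness suffices
    have pair : ∀ a b : Fin n, a ≠ b →
        Real.sqrt t - 2 * (G.maxDegree : ℝ) * (t + 1) / n ≤ -((G.adjMatrix ℝ) a b) →
        (⨆ x : {x : Fin n → ℝ // x ≠ 0 ∧ x ⬝ᵥ (fun _ => (1 : ℝ)) = 0},
          (x.1 ⬝ᵥ (G.adjMatrix ℝ).mulVec x.1) / (x.1 ⬝ᵥ x.1))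
        ≥ Real.sqrt t - 2 * (G.maxDegree : ℝ) * (t + 1) / n := by
      intro a b hab hle
      set x : Fin n → ℝ := Pi.single a 1 - Pi.single b 1 with hxdef
      have h1 : x ⬝ᵥ (G.adjMatrix ℝ *ᵥ x) = -2 * (G.adjMatrix ℝ) a b := by
        rw [hxdef, Matrix.mulVec_sub, dotProduct_sub, sub_dotProduct,
          sub_dotProduct, Matrix.mulVec_single, Matrix.mulVec_single]
        simp only [single_dotProduct]
        simp [SimpleGraph.adjMatrix_apply, G.adj_comm a b, hab]
        split <;> ring
      have h2 : x ⬝ᵥ x = 2 := by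
        rw [hxdef, dotProduct_sub, sub_dotProduct, sub_dotProduct]
        simp [single_dotProduct, Pi.single_apply, hab, hab.symm]
        norm_num
      have h3 : x ⬝ᵥ (fun _ => (1:ℝ)) = 0 := by
        rw [hxdef, sub_dotProduct]
        simp [single_dotProduct]
      have h4 : x ≠ 0 := by
        intro h
        have := congrFun h a
        simp [hxdef, Pi.single_apply, hab.symm] at this
      refine conclude x h4 h3 ?_
      rw [h1, h2]
      calc Real.sqrt t - 2 * (G.maxDegree : ℝ) * (t + 1) / n
          ≤ -((G.adjMatrix ℝ) a b) := hle
        _ = -2 * (G.adjMatrix ℝ) a b / 2 := by ring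
    by_cases hcomp : ∃ a b : Fin n, a ≠ b ∧ ¬ G.Adj a b
    · obtain ⟨a, b, hab, hnadj⟩ := hcomp
      refine pair a b hab ?_
      rw [SimpleGraph.adjMatrix_apply, if_neg hnadj]
      simpa using hL.le
    · -- complete graph
      push_neg at hcomp
      have hn2 : 2 ≤ n := by
        have h := G.maxDegree_lt_card_verts
        simp only [Fintype.card_fin] at h
        omega
      have hab : (⟨0, by omega⟩ : Fin n) ≠ (⟨1, by omega⟩ : Fin n) := by
        intro h
        simpa using congrArg Fin.val h
      have hadj : G.Adj ⟨0, by omega⟩ ⟨1, by omega⟩ := hcomp _ _ hab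
      refine pair _ _ hab ?_
      rw [SimpleGraph.adjMatrix_apply, if_pos hadj]
      -- need √t − 2Δ(t+1)/n ≤ −1
      have hnR : (0:ℝ) < n := by exact_mod_cast hn0
      have hs0 : (0:ℝ) ≤ Real.sqrt t := Real.sqrt_nonneg _
      have hs2 : Real.sqrt t ^ 2 = (t:ℝ) := Real.sq_sqrt (by positivity)
      have hs1 : 1 ≤ Real.sqrt t := by
        nlinarith [hs2, (by exact_mod_cast ht : (1:ℝ) ≤ (t:ℝ))]
      have hst : Real.sqrt t ≤ (t:ℝ) := by nlinarith [hs2]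
      have hdn : (n:ℝ) - 1 ≤ (G.maxDegree:ℝ) := by
        have hsub : Finset.univ.erase (⟨0, by omega⟩ : Fin n) ⊆
            G.neighborFinset ⟨0, by omega⟩ := by
          intro w hw
          rw [SimpleGraph.mem_neighborFinset]
          exact hcomp _ _ (Finset.ne_of_mem_erase hw).symm
        have hcard : n - 1 ≤ G.degree (⟨0, by omega⟩ : Fin n) := by
          have := Finset.card_le_card hsub
          rwa [Finset.card_erase_of_mem (Finset.mem_univ _), Finset.card_univ,
            Fintype.card_fin, G.card_neighborFinset_eq_degree] at this
        have h2 := G.degree_le_maxDegree (⟨0, by omega⟩ : Fin n)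
        have h3 : n ≤ G.maxDegree + 1 := by omega
        have h4 : (n:ℝ) ≤ (G.maxDegree:ℝ) + 1 := by exact_mod_cast h3
        linarith
      have hn2R : (2:ℝ) ≤ n := by exact_mod_cast hn2
      have hdg : (0:ℝ) ≤ (G.maxDegree:ℝ) - ((n:ℝ) - 1) := by linarith
      have hgoal : Real.sqrt t + 1 ≤ 2 * (G.maxDegree:ℝ) * (t+1) / n := by
        rw [le_div_iff₀ hnR]
        have ha : (0:ℝ) ≤ ((n:ℝ) - 2) * ((t:ℝ) + 1) :=
          mul_nonneg (by linarith) (by positivity)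
        have hb : (0:ℝ) ≤ 2 * ((G.maxDegree:ℝ) - ((n:ℝ) - 1)) * ((t:ℝ) + 1) :=
          mul_nonneg (by linarith) (by positivity)
        have hc : (0:ℝ) ≤ (n:ℝ) * ((t:ℝ) - Real.sqrt t) :=
          mul_nonneg hnR.le (by linarith)
        nlinarith [ha, hb, hc]
      linarith
end

section
/- Let G be a k-regular graph on n vertices with adjacency matrix A having second largest eigenvalue λ_2 and smallest eigenvalue λ_n. If the spectral gap satisfies k − λ_2 < n/2, then −λ_n ≤ λ_2(λ_2 + 1)/(1 − 2(k−λ_2)/n) − λ_2. -/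
open Matrix Finset

section AuxSpectral

variable {n : ℕ}

private lemma inner_eq_dot' (x y : EuclideanSpace ℝ (Fin n)) :
    (inner ℝ x y : ℝ) = (x : Fin n → ℝ) ⬝ᵥ (y : Fin n → ℝ) := by
  simp [PiLp.inner_apply, dotProduct, RCLike.inner_apply, mul_comm]

private lemma sym_dot' (A : Matrix (Fin n) (Fin n) ℝ) (hs : Aᵀ = A) (x y : Fin n → ℝ) :
    (A *ᵥ x) ⬝ᵥ y = x ⬝ᵥ (A *ᵥ y) := by
  conv_rhs => rw [dotProduct_mulVec, ← hs, vecMul_transpose]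

private lemma adj_mulVec_one' (G : SimpleGraph (Fin n)) [DecidableRel G.Adj] {k : ℕ}
    (hreg : G.IsRegularOfDegree k) :
    G.adjMatrix ℝ *ᵥ (fun _ => (1:ℝ)) = fun _ => (k:ℝ) := by
  funext v
  simpa using G.adjMatrix_mulVec_const_apply_of_regular (a := (1:ℝ)) hreg (v := v)

private lemma schur_sq' (M : Matrix (Fin n) (Fin n) ℝ) (hM : M.PosSemidef) (w : Fin n → ℝ) :
    0 ≤ ∑ i, ∑ j, w i * w j * (M i j)^2 := by
  open scoped MatrixOrder in obtain ⟨B, rfl⟩ := CStarAlgebra.nonneg_iff_eq_star_mul_self.mp hM.nonneg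
  have entry : ∀ i j, (Bᴴ * B) i j = ∑ l, B l i * B l j := by
    intro i j
    simp [Matrix.mul_apply, conjTranspose_apply, mul_comm]
  calc (0:ℝ) ≤ ∑ l, (fun i => w i * B l i) ⬝ᵥ ((Bᴴ * B) *ᵥ (fun i => w i * B l i)) := by
        refine Finset.sum_nonneg fun l _ => ?_
        have := hM.dotProduct_mulVec_nonneg (fun i => w i * B l i)
        simpa [Matrix.star_eq_conjTranspose] using this
    _ = ∑ i, ∑ j, w i * w j * ((Bᴴ * B) i j)^2 := by
        simp only [dotProduct, mulVec, dotProduct, Finset.mul_sum]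
        rw [Finset.sum_comm]
        refine Finset.sum_congr rfl fun i _ => ?_
        rw [Finset.sum_comm]
        refine Finset.sum_congr rfl fun j _ => ?_
        rw [pow_two]
        simp only [entry, Finset.sum_mul, Finset.mul_sum]
        rw [Finset.sum_comm]
        refine Finset.sum_congr rfl fun l _ => ?_
        exact Finset.sum_congr rfl fun m _ => by ring

private lemma eig_abs_le' (G : SimpleGraph (Fin n)) [DecidableRel G.Adj] {k : ℕ}
    (hreg : G.IsRegularOfDegree k) (hA : (G.adjMatrix ℝ).IsHermitian) (j : Fin n) :
    |hA.eigenvalues j| ≤ (k:ℝ) := by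
  set v : Fin n → ℝ := ⇑(hA.eigenvectorBasis j) with hv
  have hev : G.adjMatrix ℝ *ᵥ v = hA.eigenvalues j • v := hA.mulVec_eigenvectorBasis j
  have hvne : ∃ i, v i ≠ 0 := by
    by_contra h
    push_neg at h
    refine hA.eigenvectorBasis.orthonormal.ne_zero j ?_
    ext i
    exact h i
  obtain ⟨i1, hi1⟩ := hvne
  obtain ⟨i0, -, hi0⟩ := Finset.exists_max_image Finset.univ (fun i => |v i|) ⟨i1, mem_univ _⟩
  have hpos : 0 < |v i0| := lt_of_lt_of_le (abs_pos.mpr hi1) (hi0 i1 (mem_univ _))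
  have hbound : |hA.eigenvalues j| * |v i0| ≤ (k:ℝ) * |v i0| := by
    rw [← abs_mul]
    calc |hA.eigenvalues j * v i0| = |(G.adjMatrix ℝ *ᵥ v) i0| := by
          rw [hev]; simp
      _ = |∑ u ∈ G.neighborFinset i0, v u| := by
          rw [SimpleGraph.adjMatrix_mulVec_apply]
      _ ≤ ∑ u ∈ G.neighborFinset i0, |v u| := Finset.abs_sum_le_sum_abs _ _
      _ ≤ ∑ _u ∈ G.neighborFinset i0, |v i0| := Finset.sum_le_sum fun u _ => hi0 u (mem_univ _)
      _ = (k:ℝ) * |v i0| := by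
          rw [Finset.sum_const, ← SimpleGraph.degree, hreg i0, nsmul_eq_mul]
  exact le_of_mul_le_mul_right hbound hpos

private lemma eig_sum' (G : SimpleGraph (Fin n)) [DecidableRel G.Adj]
    (hA : (G.adjMatrix ℝ).IsHermitian) :
    ∑ j, hA.eigenvalues j = 0 := by
  have ht : (G.adjMatrix ℝ).trace = 0 := by simp [Matrix.trace, Matrix.diag]
  have h2 : (G.adjMatrix ℝ).trace
      = (Matrix.diagonal (RCLike.ofReal ∘ hA.eigenvalues) : Matrix (Fin n) (Fin n) ℝ).trace := by
    conv_lhs => rw [hA.spectral_theorem]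
    rw [Unitary.conjStarAlgAut_apply, trace_mul_comm, ← mul_assoc, Unitary.coe_star_mul_self, one_mul]
  rw [ht, trace_diagonal] at h2
  simpa [Function.comp] using h2.symm

private lemma basis_inner_one' (G : SimpleGraph (Fin n)) [DecidableRel G.Adj] {k : ℕ}
    (hreg : G.IsRegularOfDegree k) (hA : (G.adjMatrix ℝ).IsHermitian) (j : Fin n) :
    (hA.eigenvalues j - (k:ℝ)) *
      (inner ℝ (hA.eigenvectorBasis j) (WithLp.toLp 2 (fun _ => (1:ℝ)) : EuclideanSpace ℝ (Fin n)) : ℝ) = 0 := by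
  have hsymA : (G.adjMatrix ℝ)ᵀ = G.adjMatrix ℝ := G.transpose_adjMatrix
  set A := G.adjMatrix ℝ
  set oE : EuclideanSpace ℝ (Fin n) := WithLp.toLp 2 (fun _ => (1:ℝ)) with hoE
  set b := hA.eigenvectorBasis with hb
  have h1 : (k:ℝ) * (inner ℝ (b j) oE : ℝ) = hA.eigenvalues j * (inner ℝ (b j) oE : ℝ) := by
    have e1 : (⇑(b j) : Fin n → ℝ) ⬝ᵥ (A *ᵥ (oE : Fin n → ℝ))
        = hA.eigenvalues j * ((⇑(b j) : Fin n → ℝ) ⬝ᵥ (oE : Fin n → ℝ)) := by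
      rw [← sym_dot' A hsymA, hA.mulVec_eigenvectorBasis j, smul_dotProduct]
      rfl
    have e2 : (⇑(b j) : Fin n → ℝ) ⬝ᵥ (A *ᵥ (oE : Fin n → ℝ))
        = (k:ℝ) * ((⇑(b j) : Fin n → ℝ) ⬝ᵥ (oE : Fin n → ℝ)) := by
      rw [show A *ᵥ (oE : Fin n → ℝ) = (k:ℝ) • (oE : Fin n → ℝ) by
          rw [adj_mulVec_one' G hreg]; funext v; simp [hoE],
        dotProduct_smul, smul_eq_mul]
    rw [inner_eq_dot']
    rw [e2] at e1
    exact e1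
  linear_combination -h1

private lemma exists_eig_k' (G : SimpleGraph (Fin n)) [DecidableRel G.Adj] {k : ℕ}
    (hreg : G.IsRegularOfDegree k) (hA : (G.adjMatrix ℝ).IsHermitian) (hn : 0 < n) :
    ∃ j, hA.eigenvalues j = (k:ℝ) := by
  by_contra h
  push_neg at h
  set oE : EuclideanSpace ℝ (Fin n) := WithLp.toLp 2 (fun _ => (1:ℝ)) with hoE
  set b := hA.eigenvectorBasis with hb
  have hcz : ∀ j, (inner ℝ (b j) oE : ℝ) = 0 := by
    intro j
    have := basis_inner_one' G hreg hA j
    rcases mul_eq_zero.mp this with h' | h'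
    · exact (h j (sub_eq_zero.mp h')).elim
    · exact h'
  have hsum := b.sum_repr oE
  simp only [b.repr_apply_apply] at hsum
  have : oE = 0 := by
    rw [← hsum]
    refine Finset.sum_eq_zero fun j _ => ?_
    rw [hcz j, zero_smul]
  have h0 := congrFun (congrArg (fun (z : EuclideanSpace ℝ (Fin n)) => (z : Fin n → ℝ)) this)
    ⟨0, hn⟩
  simpa [hoE] using h0

private lemma rayleigh' (G : SimpleGraph (Fin n)) [DecidableRel G.Adj] {k : ℕ}
    (hreg : G.IsRegularOfDegree k) (hA : (G.adjMatrix ℝ).IsHermitian)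
    (s : ℝ) (j0 : Fin n) (hup : ∀ j, j ≠ j0 → hA.eigenvalues j ≤ s) (hsk : s < (k:ℝ))
    (hn : 0 < n) (y : Fin n → ℝ) (hy : (fun _ => (1:ℝ)) ⬝ᵥ y = 0) :
    y ⬝ᵥ (G.adjMatrix ℝ *ᵥ y) ≤ s * (y ⬝ᵥ y) := by
  have hsymA : (G.adjMatrix ℝ)ᵀ = G.adjMatrix ℝ := G.transpose_adjMatrix
  set A := G.adjMatrix ℝ with hAdef
  set b := hA.eigenvectorBasis with hbdef
  set μ := hA.eigenvalues with hμdef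
  set yE : EuclideanSpace ℝ (Fin n) := WithLp.toLp 2 y with hyE
  set oE : EuclideanSpace ℝ (Fin n) := WithLp.toLp 2 (fun _ => (1:ℝ)) with hoE
  have hAb : ∀ j, A *ᵥ ⇑(b j) = μ j • ⇑(b j) := hA.mulVec_eigenvectorBasis
  have hbA : ∀ (j : Fin n) (x : EuclideanSpace ℝ (Fin n)),
      (inner ℝ (b j) (WithLp.toLp 2 (A *ᵥ (x : Fin n → ℝ)) : EuclideanSpace ℝ (Fin n)) : ℝ)
        = μ j * inner ℝ (b j) x := by
    intro j x
    rw [inner_eq_dot', inner_eq_dot']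
    show (⇑(b j) : Fin n → ℝ) ⬝ᵥ (A *ᵥ (x : Fin n → ℝ)) = μ j * ((⇑(b j) : Fin n → ℝ) ⬝ᵥ x)
    rw [← sym_dot' A hsymA, hAb j, smul_dotProduct]
    rfl
  have h1A : A *ᵥ (oE : Fin n → ℝ) = (k : ℝ) • (oE : Fin n → ℝ) := by
    rw [adj_mulVec_one' G hreg]
    funext v; simp [hoE]
  have hczero : ∀ j, j ≠ j0 → (inner ℝ (b j) oE : ℝ) = 0 := by
    intro j hj
    have h1 : (inner ℝ (b j) (WithLp.toLp 2 (A *ᵥ (oE : Fin n → ℝ)) : EuclideanSpace ℝ (Fin n)) : ℝ)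
        = μ j * inner ℝ (b j) oE := hbA j oE
    rw [h1A] at h1
    have h2 : (inner ℝ (b j) (WithLp.toLp 2 ((k : ℝ) • (oE : Fin n → ℝ)) :
          EuclideanSpace ℝ (Fin n)) : ℝ)
        = (k:ℝ) * inner ℝ (b j) oE := by
      rw [inner_eq_dot', inner_eq_dot', dotProduct_smul, smul_eq_mul]
    rw [h2] at h1
    have : (μ j - (k:ℝ)) * (inner ℝ (b j) oE : ℝ) = 0 := by linarith
    rcases mul_eq_zero.mp this with h | h
    · exact absurd (by linarith [hup j hj] : μ j < (k:ℝ)) (by rw [sub_eq_zero] at h; simp [h])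
    · exact h
  have hrep : oE = (inner ℝ (b j0) oE : ℝ) • b j0 := by
    have hsum := b.sum_repr oE
    simp only [b.repr_apply_apply] at hsum
    have hone : ∑ x, (inner ℝ (b x) oE : ℝ) • b x = (inner ℝ (b j0) oE : ℝ) • b j0 :=
      Finset.sum_eq_single j0 (fun j _ hj => by rw [hczero j hj, zero_smul])
        (fun h => absurd (mem_univ j0) h)
    exact hsum.symm.trans hone
  have hc0 : (inner ℝ (b j0) oE : ℝ) ≠ 0 := by
    intro h
    rw [h, zero_smul] at hrep
    have := congrFun (congrArg (fun (z : EuclideanSpace ℝ (Fin n)) => (z : Fin n → ℝ)) hrep)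
      ⟨0, hn⟩
    simpa [hoE] using this
  have hcy : (inner ℝ (b j0) yE : ℝ) = 0 := by
    have h1 : (inner ℝ oE yE : ℝ) = 0 := by rw [inner_eq_dot']; exact hy
    rw [hrep, real_inner_smul_left] at h1
    exact (mul_eq_zero.mp h1).resolve_left hc0
  have hyy : y ⬝ᵥ y = ∑ j, (inner ℝ (b j) yE : ℝ)^2 := by
    rw [← inner_eq_dot' yE yE, ← b.sum_inner_mul_inner yE yE]
    exact Finset.sum_congr rfl fun j _ => by rw [real_inner_comm yE (b j), pow_two]
  have hyAy : y ⬝ᵥ (A *ᵥ y) = ∑ j, μ j * (inner ℝ (b j) yE : ℝ)^2 := by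
    have h0 : y ⬝ᵥ (A *ᵥ y)
        = (inner ℝ yE (WithLp.toLp 2 (A *ᵥ y) : EuclideanSpace ℝ (Fin n)) : ℝ) := by
      rw [inner_eq_dot']
    rw [h0, ← b.sum_inner_mul_inner yE (WithLp.toLp 2 (A *ᵥ y) : EuclideanSpace ℝ (Fin n))]
    refine Finset.sum_congr rfl fun j _ => ?_
    rw [hbA j yE, real_inner_comm yE (b j), pow_two]
    ring
  rw [hyy, hyAy, Finset.mul_sum, ← sub_nonneg, ← Finset.sum_sub_distrib]
  refine Finset.sum_nonneg fun j _ => ?_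
  rcases eq_or_ne j j0 with rfl | hj
  · rw [hcy]; ring_nf; exact le_refl 0
  · have := hup j hj
    have hsq : (0:ℝ) ≤ (inner ℝ (b j) yE : ℝ)^2 := sq_nonneg _
    nlinarith

private lemma N_psd' (G : SimpleGraph (Fin n)) [DecidableRel G.Adj] {k : ℕ}
    (hreg : G.IsRegularOfDegree k) (hA : (G.adjMatrix ℝ).IsHermitian)
    (s : ℝ) (j0 : Fin n) (hup : ∀ j, j ≠ j0 → hA.eigenvalues j ≤ s) (hsk : s < (k:ℝ))
    (hn : 0 < n) :
    (((k:ℝ) - s) • (Matrix.of fun _ _ => (1:ℝ)) + ((n:ℝ)*s) • (1 : Matrix (Fin n) (Fin n) ℝ)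
      - (n:ℝ) • G.adjMatrix ℝ).PosSemidef := by
  have hsymA : (G.adjMatrix ℝ)ᵀ = G.adjMatrix ℝ := G.transpose_adjMatrix
  rw [posSemidef_iff_dotProduct_mulVec]
  constructor
  · show _ = _
    ext i j
    simp [conjTranspose_apply, Matrix.one_apply, SimpleGraph.adjMatrix_apply, eq_comm,
      G.adj_comm]
  · intro x
    have hx : star x = x := by funext i; simp
    rw [hx]
    set A := G.adjMatrix ℝ with hAdef
    set o : Fin n → ℝ := fun _ => 1 with ho
    set S := ∑ i, x i with hS
    have hxo : x ⬝ᵥ o = S := by simp [dotProduct, ho, hS]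
    have hox : o ⬝ᵥ x = S := by simp [dotProduct, ho, hS]
    have hoo : o ⬝ᵥ o = (n:ℝ) := by simp [dotProduct, ho]
    have hAo : A *ᵥ o = (k:ℝ) • o := by
      rw [adj_mulVec_one' G hreg]; funext v; simp [ho]
    have hoAx : o ⬝ᵥ (A *ᵥ x) = (k:ℝ) * S := by
      rw [← sym_dot' A hsymA, hAo, smul_dotProduct, hox, smul_eq_mul]
    have hJ : x ⬝ᵥ ((Matrix.of fun _ _ => (1:ℝ)) *ᵥ x) = S * S := by
      simp only [mulVec, dotProduct, of_apply, one_mul]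
      rw [← Finset.sum_mul]
    have e0 : x ⬝ᵥ ((((k:ℝ) - s) • (Matrix.of fun _ _ => (1:ℝ)) + ((n:ℝ)*s) • 1
        - (n:ℝ) • A) *ᵥ x)
        = ((k:ℝ)-s)*(S*S) + (n:ℝ)*s*(x ⬝ᵥ x) - (n:ℝ)*(x ⬝ᵥ (A *ᵥ x)) := by
      rw [sub_mulVec, add_mulVec, smul_mulVec, smul_mulVec, smul_mulVec,
        one_mulVec, dotProduct_sub, dotProduct_add, dotProduct_smul, dotProduct_smul,
        dotProduct_smul, hJ, smul_eq_mul, smul_eq_mul, smul_eq_mul]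
    rw [e0]
    set y : Fin n → ℝ := (n:ℝ) • x - S • o with hy
    have hysum : (fun _ => (1:ℝ)) ⬝ᵥ y = 0 := by
      have : (fun _ => (1:ℝ)) ⬝ᵥ y = o ⬝ᵥ y := rfl
      rw [this, hy, dotProduct_sub, dotProduct_smul, dotProduct_smul, hox, hoo, smul_eq_mul,
        smul_eq_mul]
      ring
    have hray := rayleigh' G hreg hA s j0 hup hsk hn y hysum
    have e1 : y ⬝ᵥ (A *ᵥ y) = (n:ℝ)^2 * (x ⬝ᵥ (A *ᵥ x)) - (n:ℝ)*(k:ℝ)*S^2 := by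
      rw [hy, mulVec_sub, mulVec_smul, mulVec_smul, hAo]
      simp only [dotProduct_sub, sub_dotProduct, dotProduct_smul, smul_dotProduct,
        smul_eq_mul, hoo, hox, hxo, hoAx]
      ring
    have e2 : y ⬝ᵥ y = (n:ℝ)^2 * (x ⬝ᵥ x) - (n:ℝ)*S^2 := by
      rw [hy]
      simp only [dotProduct_sub, sub_dotProduct, dotProduct_smul, smul_dotProduct,
        smul_eq_mul, hoo, hox, hxo]
      ring
    have hn' : (0:ℝ) < n := by exact_mod_cast hn
    nlinarith [hray, e1, e2, hn']

private lemma had_sum' (G : SimpleGraph (Fin n)) [DecidableRel G.Adj] (a b c : ℝ)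
    (M : Matrix (Fin n) (Fin n) ℝ)
    (hEntry : ∀ i j, M i j = a + (if i = j then b else 0) - (if G.Adj i j then c else 0))
    (w : Fin n → ℝ) :
    ∑ i, ∑ j, w i * w j * (M i j)^2
    = a^2 * (∑ i, w i)^2 + (2*a*b + b^2) * (∑ i, (w i)^2)
      + (c^2 - 2*a*c) * (w ⬝ᵥ (G.adjMatrix ℝ *ᵥ w)) := by
  have expand : ∀ i j, w i * w j * (M i j)^2
      = a^2 * (w i * w j) + (2*a*b + b^2) * (if i = j then w i * w j else 0)
        + (c^2 - 2*a*c) * (if G.Adj i j then w i * w j else 0) := by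
    intro i j
    rw [hEntry i j]
    split_ifs with h1 h2 h3
    · exact absurd h2 (by subst h1; exact G.irrefl)
    · ring
    · ring
    · ring
  simp only [expand, Finset.sum_add_distrib]
  congr 1
  · congr 1
    · simp only [← Finset.mul_sum]
      rw [← Finset.sum_mul]
      ring
    · simp only [← Finset.mul_sum]
      congr 1
      refine Finset.sum_congr rfl fun i _ => ?_
      rw [Finset.sum_ite_eq]
      simp [pow_two]
  · simp only [← Finset.mul_sum]
    congr 1
    simp [mulVec, dotProduct, SimpleGraph.adjMatrix_apply, mul_ite, ite_mul, mul_zero, zero_mul,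
      Finset.mul_sum]

end AuxSpectral

/-- Alon–Boppana type bound for dense regular graphs: if `G` is `k`-regular on `n ≥ 2`
vertices with adjacency eigenvalues `e 0 ≥ e 1 ≥ ... ≥ e (n-1)` (so `λ₂ = e 1` and
`λₙ = e (n-1)`), and the spectral gap satisfies `k − λ₂ < n/2`, then
`−λₙ ≤ λ₂(λ₂+1)/(1 − 2(k−λ₂)/n) − λ₂`. -/
theorem stmt17 (n k : ℕ) (hn : 2 ≤ n) (G : SimpleGraph (Fin n)) [DecidableRel G.Adj]
    (hreg : G.IsRegularOfDegree k)
    (hA : (G.adjMatrix ℝ).IsHermitian)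
    (e : Fin n → ℝ) (σ : Equiv.Perm (Fin n))
    (he : ∀ i, e i = hA.eigenvalues (σ i)) (hmono : Antitone e)
    (hgap : (k : ℝ) - e ⟨1, by omega⟩ < n / 2) :
    -(e ⟨n - 1, by omega⟩) ≤
      (e ⟨1, by omega⟩) * (e ⟨1, by omega⟩ + 1) / (1 - 2 * ((k : ℝ) - e ⟨1, by omega⟩) / n)
        - e ⟨1, by omega⟩ := by
  have hn0 : 0 < n := by omega
  have h1n : 1 < n := by omega
  have hn1 : n - 1 < n := by omega
  show -(e ⟨n - 1, hn1⟩) ≤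
      (e ⟨1, h1n⟩) * (e ⟨1, h1n⟩ + 1) / (1 - 2 * ((k : ℝ) - e ⟨1, h1n⟩) / n) - e ⟨1, h1n⟩
  have hgap' : (k : ℝ) - e ⟨1, h1n⟩ < n / 2 := hgap
  set s := e ⟨1, h1n⟩ with hsdef
  have habs : ∀ i : Fin n, |e i| ≤ (k:ℝ) := fun i => by
    rw [he i]; exact eig_abs_le' G hreg hA (σ i)
  have he0 : e ⟨0, hn0⟩ = (k:ℝ) := by
    obtain ⟨j, hj⟩ := exists_eig_k' G hreg hA hn0
    have h1 : e (σ.symm j) = (k:ℝ) := by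
      rw [he (σ.symm j), Equiv.apply_symm_apply]; exact hj
    have h2 : (k:ℝ) ≤ e ⟨0, hn0⟩ := by
      have hle : (⟨0, hn0⟩ : Fin n) ≤ σ.symm j := by rw [Fin.le_def]; simp
      have := hmono hle
      rw [h1] at this
      exact this
    have h3 : e ⟨0, hn0⟩ ≤ (k:ℝ) := le_trans (le_abs_self _) (habs _)
    linarith
  have hs_le : s ≤ (k:ℝ) := by
    have h01 : (⟨0, hn0⟩ : Fin n) ≤ ⟨1, h1n⟩ := by simp [Fin.le_def]
    have := hmono h01
    rw [he0] at this
    exact this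
  have hn' : (0:ℝ) < n := by exact_mod_cast hn0
  by_cases hsk : s < (k:ℝ)
  · -- main case
    set j0 : Fin n := σ ⟨0, hn0⟩ with hj0def
    have hup : ∀ jj, jj ≠ j0 → hA.eigenvalues jj ≤ s := by
      intro jj hjj
      have h1 : hA.eigenvalues jj = e (σ.symm jj) := by
        rw [he (σ.symm jj), Equiv.apply_symm_apply]
      rw [h1]
      apply hmono
      have hne : σ.symm jj ≠ ⟨0, hn0⟩ := by
        intro hcon
        apply hjj
        rw [hj0def, ← hcon, Equiv.apply_symm_apply]
      have hv : ((σ.symm jj : Fin n) : ℕ) ≠ 0 := fun h => hne (Fin.ext h)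
      rw [Fin.le_def]
      simpa using Nat.one_le_iff_ne_zero.mpr hv
    have hpsd := N_psd' G hreg hA s j0 hup hsk hn0
    set jl : Fin n := σ ⟨n - 1, hn1⟩ with hjldef
    set w : Fin n → ℝ := ⇑(hA.eigenvectorBasis jl) with hwdef
    set μl := hA.eigenvalues jl with hμldef
    have hμle : μl = e ⟨n - 1, hn1⟩ := (he _).symm
    have hμl_le_s : μl ≤ s := by
      rw [hμle]
      apply hmono
      rw [Fin.le_def]
      simp
      omega
    have hev : G.adjMatrix ℝ *ᵥ w = μl • w := hA.mulVec_eigenvectorBasis jl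
    have hw2 : w ⬝ᵥ w = 1 := by
      have h1 : (inner ℝ (hA.eigenvectorBasis jl) (hA.eigenvectorBasis jl) : ℝ) = 1 := by
        rw [real_inner_self_eq_norm_mul_norm, hA.eigenvectorBasis.orthonormal.1, mul_one]
      rw [inner_eq_dot'] at h1
      exact h1
    have hws : ∑ i, w i = 0 := by
      have h1 := basis_inner_one' G hreg hA jl
      have h2 : (inner ℝ (hA.eigenvectorBasis jl)
          (WithLp.toLp 2 (fun _ => (1:ℝ)) : EuclideanSpace ℝ (Fin n)) : ℝ) = ∑ i, w i := by
        rw [inner_eq_dot']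
        simp only [dotProduct, mul_one]
        exact Finset.sum_congr rfl fun i _ => rfl
      rw [h2] at h1
      rcases mul_eq_zero.mp h1 with h | h
      · have : μl = (k:ℝ) := sub_eq_zero.mp h
        linarith
      · exact h
    have hwA : w ⬝ᵥ (G.adjMatrix ℝ *ᵥ w) = μl := by
      rw [hev, dotProduct_smul, smul_eq_mul, hw2, mul_one]
    set N : Matrix (Fin n) (Fin n) ℝ := ((k:ℝ) - s) • (Matrix.of fun _ _ => (1:ℝ))
        + ((n:ℝ)*s) • (1 : Matrix (Fin n) (Fin n) ℝ) - (n:ℝ) • G.adjMatrix ℝ with hN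
    have hEntry : ∀ i j, N i j
        = ((k:ℝ)-s) + (if i = j then (n:ℝ)*s else 0) - (if G.Adj i j then (n:ℝ) else 0) := by
      intro i j
      rw [hN]
      simp [Matrix.one_apply, SimpleGraph.adjMatrix_apply, mul_ite, mul_one, mul_zero]
    have hkey0 := schur_sq' N hpsd w
    rw [had_sum' G ((k:ℝ)-s) ((n:ℝ)*s) (n:ℝ) N hEntry w, hws] at hkey0
    have hw2' : ∑ i, (w i)^2 = 1 := by
      have : ∑ i, (w i)^2 = w ⬝ᵥ w := by
        simp [dotProduct, pow_two]
      rw [this, hw2]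
    rw [hw2', hwA] at hkey0
    have key2 : 0 ≤ 2*((k:ℝ)-s)*s + (n:ℝ)*s^2 + ((n:ℝ) - 2*((k:ℝ)-s))*μl := by
      nlinarith [hkey0, hn']
    have hd : (0:ℝ) < 1 - 2*((k:ℝ)-s)/n := by
      rw [sub_pos, div_lt_one hn']
      linarith
    rw [le_sub_iff_add_le, le_div_iff₀ hd]
    have hdd : 1 - 2*((k:ℝ)-s)/n = ((n:ℝ) - 2*((k:ℝ)-s))/n := by
      field_simp
    rw [hdd, ← mul_div_assoc, div_le_iff₀ hn']
    rw [← hμle]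
    nlinarith [key2]
  · -- degenerate case s = k
    have hskk : s = (k:ℝ) := le_antisymm hs_le (not_lt.mp hsk)
    rw [hskk]
    have hden : 1 - 2*((k:ℝ) - (k:ℝ))/n = 1 := by
      rw [sub_self]
      simp
    rw [hden, div_one]
    have ht : -(e ⟨n - 1, hn1⟩) ≤ (k:ℝ) := by
      have := (abs_le.mp (habs ⟨n - 1, hn1⟩)).1
      linarith
    have hk2 : (k:ℝ) ≤ (k:ℝ)*((k:ℝ)+1) - k := by
      rcases Nat.eq_zero_or_pos k with h | h
      · subst h; norm_num
      · have h1 : (1:ℝ) ≤ (k:ℝ) := by exact_mod_cast h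
        nlinarith
    linarith
end
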